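/- arXiv:1810.08325 — 6 statements merged into one kernel-verified Lean document; each statement's English description precedes it below -/
import Mathlib

section
/- There exists an absolute constant C > 0 such that for all integers r, s with 2 ≤ r ≤ s, there exists an ordered graph H with at most C·r²·s·(log s)³ edges such that every red-blue coloring of the edges of H contains a red monotone path with r edges or a blue monotone path with s edges. Consequently, r̃(P_r, P_s) ≤ C·r²·s·(log s)³. -/
open Finset


private lemma conn_numeric {m k L M : ℕ} (hk : 1 ≤ k) (hkm : k ≤ m)
    (hL : ((m : ℝ)) ^ 2 ≤ Real.exp L) (hM : m ^ 2 * L < M * k) :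
    (m ^ k) ^ 2 * (m * m - k * k) ^ M < (m * m) ^ M := by
  have hm1 : 1 ≤ m := hk.trans hkm
  rcases eq_or_lt_of_le hkm with h | hklt
  · -- k = m
    subst h
    have hM1 : 0 < M := by
      rcases Nat.eq_zero_or_pos M with h | h
      · rw [h, zero_mul] at hM; exact absurd hM (Nat.not_lt_zero _)
      · exact h
    rw [Nat.sub_self, zero_pow hM1.ne', mul_zero]
    exact pow_pos (Nat.mul_pos hk hk) M
  · -- k < m
    have hkkmm : k * k ≤ m * m := Nat.mul_le_mul hkm hkm
    rw [← Nat.cast_lt (α := ℝ)]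
    push_cast [Nat.cast_sub hkkmm]
    set A : ℝ := (m : ℝ) * m with hA
    have hA0 : (0 : ℝ) < A := by
      have : (1 : ℝ) ≤ (m : ℝ) := by exact_mod_cast hm1
      rw [hA]; nlinarith
    have hA2 : A = (m : ℝ) ^ 2 := by rw [hA]; ring
    have hk0 : (0 : ℝ) < k := by exact_mod_cast hk
    have hx0 : (0 : ℝ) ≤ 1 - (k : ℝ) * k / A := by
      rw [sub_nonneg, div_le_one hA0, hA]
      exact_mod_cast hkkmm
    have hbody : (m : ℝ) * m - (k : ℝ) * k = A * (1 - (k : ℝ) * k / A) := by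
      field_simp
      rw [hA2]
    have hexp1 : (1 - (k : ℝ) * k / A) ≤ Real.exp (-((k : ℝ) * k / A)) := by
      have := Real.add_one_le_exp (-((k : ℝ) * k / A))
      linarith
    have h3 : ((m : ℝ) * m - (k : ℝ) * k) ^ M ≤ A ^ M * Real.exp (-((k : ℝ) * k / A) * M) := by
      rw [hbody, mul_pow]
      have h5 : (1 - (k : ℝ) * k / A) ^ M ≤ Real.exp (-((k : ℝ) * k / A) * M) := by
        calc (1 - (k : ℝ) * k / A) ^ M ≤ (Real.exp (-((k : ℝ) * k / A))) ^ M :=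
              pow_le_pow_left₀ hx0 hexp1 M
          _ = Real.exp ((M : ℕ) * (-((k : ℝ) * k / A))) := (Real.exp_nat_mul _ M).symm
          _ = Real.exp (-((k : ℝ) * k / A) * M) := by rw [mul_comm]
      exact mul_le_mul_of_nonneg_left h5 (pow_nonneg hA0.le M)
    have h4 : ((m : ℝ) ^ k) ^ 2 ≤ Real.exp ((k : ℝ) * L) := by
      calc ((m : ℝ) ^ k) ^ 2 = ((m : ℝ) ^ 2) ^ k := by ring
        _ ≤ (Real.exp L) ^ k := pow_le_pow_left₀ (by positivity) hL k
        _ = Real.exp ((k : ℕ) * (L : ℝ)) := (Real.exp_nat_mul _ k).symm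
        _ = Real.exp ((k : ℝ) * L) := rfl
    have hMk : (m : ℝ) ^ 2 * L < (M : ℝ) * k := by exact_mod_cast hM
    have hkey : (k : ℝ) * L < ((k : ℝ) * k / A) * M := by
      rw [div_mul_eq_mul_div, lt_div_iff₀ hA0]
      have h6 := mul_lt_mul_of_pos_left hMk hk0
      calc (k : ℝ) * L * A = (k : ℝ) * ((m : ℝ) ^ 2 * L) := by rw [hA2]; ring
        _ < (k : ℝ) * ((M : ℝ) * k) := h6
        _ = (k : ℝ) * k * M := by ring
    have hsub0 : (0:ℝ) ≤ (m : ℝ) * m - (k : ℝ) * k := by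
      rw [hbody]; exact mul_nonneg hA0.le hx0
    calc ((m : ℝ) ^ k) ^ 2 * ((m : ℝ) * m - (k : ℝ) * k) ^ M
        ≤ Real.exp ((k : ℝ) * L) * (A ^ M * Real.exp (-((k : ℝ) * k / A) * M)) :=
          mul_le_mul h4 h3 (pow_nonneg hsub0 M) (Real.exp_pos _).le
      _ = A ^ M * (Real.exp ((k : ℝ) * L) * Real.exp (-((k : ℝ) * k / A) * M)) := by ring
      _ < A ^ M * 1 := by
          apply mul_lt_mul_of_pos_left _ (pow_pos hA0 M)
          rw [← Real.exp_add, ← Real.exp_zero]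
          apply Real.exp_lt_exp.mpr
          have : -((k : ℝ) * k / A) * M = -(((k : ℝ) * k / A) * M) := by ring
          rw [this]
          linarith
      _ = ((m : ℝ) * m) ^ M := by rw [mul_one, hA]

lemma exists_connector (m k L : ℕ) (hk : 1 ≤ k) (hkm : k ≤ m)
    (hL : ((m : ℝ)) ^ 2 ≤ Real.exp L) :
    ∃ C : Finset (ℕ × ℕ), (∀ p ∈ C, p.1 < m ∧ p.2 < m) ∧
      C.card ≤ m ^ 2 * L / k + 1 ∧
      ∀ S T : Finset ℕ, (∀ x ∈ S, x < m) → (∀ x ∈ T, x < m) →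
        k ≤ S.card → k ≤ T.card → ∃ p ∈ C, p.1 ∈ S ∧ p.2 ∈ T := by
  classical
  set M := m ^ 2 * L / k + 1 with hMdef
  have hMk : m ^ 2 * L < M * k := by
    have h1 : k * (m ^ 2 * L / k) + (m ^ 2 * L) % k = m ^ 2 * L := Nat.div_add_mod _ _
    have h2 : (m ^ 2 * L) % k < k := Nat.mod_lt _ hk
    have h3 : M * k = k * (m ^ 2 * L / k) + k := by rw [hMdef]; ring
    omega
  have main : ∃ f : Fin M → Fin m × Fin m,
      ∀ S T : Finset (Fin m), S.card = k → T.card = k → ∃ i, f i ∈ S ×ˢ T := by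
    by_contra hcon
    push_neg at hcon
    have hsub : (Finset.univ : Finset (Fin M → Fin m × Fin m)) ⊆
        ((Finset.univ.powersetCard k ×ˢ Finset.univ.powersetCard k :
          Finset (Finset (Fin m) × Finset (Fin m)))).biUnion
          (fun ST => Fintype.piFinset fun _ : Fin M =>
            ((ST.1 ×ˢ ST.2)ᶜ : Finset (Fin m × Fin m))) := by
      intro f _
      obtain ⟨S, T, hS, hT, hf⟩ := hcon f
      refine Finset.mem_biUnion.mpr ⟨(S, T), ?_, ?_⟩
      · rw [Finset.mem_product]
        constructor <;> rw [Finset.mem_powersetCard] <;>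
          exact ⟨Finset.subset_univ _, by assumption⟩
      · rw [Fintype.mem_piFinset]
        intro i
        rw [Finset.mem_compl]
        exact hf i
    have hcard1 : ((Finset.univ : Finset (Fin M → Fin m × Fin m))).card = (m * m) ^ M := by
      rw [Finset.card_univ, Fintype.card_fun]
      simp [Fintype.card_prod]
    have hcard2 : ∀ ST : Finset (Fin m) × Finset (Fin m),
        ST ∈ (Finset.univ.powersetCard k ×ˢ Finset.univ.powersetCard k :
          Finset (Finset (Fin m) × Finset (Fin m))) →
        (Fintype.piFinset fun _ : Fin M =>
            ((ST.1 ×ˢ ST.2)ᶜ : Finset (Fin m × Fin m))).card = (m * m - k * k) ^ M := by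
      intro ST hST
      rw [Finset.mem_product, Finset.mem_powersetCard, Finset.mem_powersetCard] at hST
      rw [Fintype.card_piFinset]
      have hc : ((ST.1 ×ˢ ST.2)ᶜ : Finset (Fin m × Fin m)).card = m * m - k * k := by
        rw [Finset.card_compl, Finset.card_product, hST.1.2, hST.2.2]
        simp [Fintype.card_prod]
      rw [hc]
      simp
    have hle : (m * m) ^ M ≤ ((Finset.univ.powersetCard k ×ˢ Finset.univ.powersetCard k :
          Finset (Finset (Fin m) × Finset (Fin m)))).card * (m * m - k * k) ^ M := by
      calc (m * m) ^ M = ((Finset.univ : Finset (Fin M → Fin m × Fin m))).card := hcard1.symm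
        _ ≤ _ := Finset.card_le_card hsub
        _ ≤ _ := Finset.card_biUnion_le
        _ = _ := by
            rw [Finset.sum_congr rfl hcard2, Finset.sum_const, smul_eq_mul]
    have hPcard : ((Finset.univ.powersetCard k ×ˢ Finset.univ.powersetCard k :
          Finset (Finset (Fin m) × Finset (Fin m)))).card ≤ (m ^ k) ^ 2 := by
      rw [Finset.card_product, Finset.card_powersetCard, Finset.card_univ, Fintype.card_fin]
      calc (m.choose k) * (m.choose k) ≤ m ^ k * m ^ k :=
            Nat.mul_le_mul (Nat.choose_le_pow m k) (Nat.choose_le_pow m k)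
        _ = (m ^ k) ^ 2 := by ring
    have hcontra : (m * m) ^ M < (m * m) ^ M := by
      calc (m * m) ^ M ≤ _ := hle
        _ ≤ (m ^ k) ^ 2 * (m * m - k * k) ^ M := Nat.mul_le_mul_right _ hPcard
        _ < (m * m) ^ M := conn_numeric hk hkm hL hMk
    omega
  obtain ⟨f, hf⟩ := main
  refine ⟨(Finset.univ : Finset (Fin M)).image (fun i => (((f i).1 : ℕ), ((f i).2 : ℕ))),
    ?_, ?_, ?_⟩
  · intro p hp
    rw [Finset.mem_image] at hp
    obtain ⟨i, _, hi⟩ := hp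
    rw [← hi]
    exact ⟨(f i).1.isLt, (f i).2.isLt⟩
  · calc _ ≤ (Finset.univ : Finset (Fin M)).card := Finset.card_image_le
      _ = M := by simp
  · intro S T hSm hTm hSk hTk
    obtain ⟨S', hS'sub, hS'card⟩ := Finset.exists_subset_card_eq hSk
    obtain ⟨T', hT'sub, hT'card⟩ := Finset.exists_subset_card_eq hTk
    have hS'm : ∀ x ∈ S', x < m := fun x hx => hSm x (hS'sub hx)
    have hT'm : ∀ x ∈ T', x < m := fun x hx => hTm x (hT'sub hx)
    obtain ⟨i, hi⟩ := hf (S'.attachFin hS'm) (T'.attachFin hT'm)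
      (by rw [Finset.card_attachFin]; exact hS'card)
      (by rw [Finset.card_attachFin]; exact hT'card)
    rw [Finset.mem_product] at hi
    refine ⟨(((f i).1 : ℕ), ((f i).2 : ℕ)), Finset.mem_image.mpr ⟨i, Finset.mem_univ _, rfl⟩,
      ?_, ?_⟩
    · exact hS'sub ((Finset.mem_attachFin hS'm).mp hi.1)
    · exact hT'sub ((Finset.mem_attachFin hT'm).mp hi.2)



def kpar (X l : ℕ) : ℕ := 2 ^ l / X + 1

def Lam (X l0 : ℕ) : ℕ → ℕ
  | 0 => 0
  | d + 1 => 2 * Lam X l0 d + 2 * kpar X (l0 + d + 1)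

lemma path_lemma (E : Finset (ℕ × ℕ)) (X l0 D : ℕ)
    (hbase : ∀ x y : ℕ, x < y → y < 2 ^ D → x / 2 ^ l0 = y / 2 ^ l0 → (x, y) ∈ E)
    (hconn : ∀ l b, l0 < l → l ≤ l0 + D → 2 ^ l ∣ b → b + 2 ^ l ≤ 2 ^ D →
      ∀ S T : Finset ℕ,
      (∀ x ∈ S, b ≤ x ∧ x < b + 2 ^ (l - 1)) →
      (∀ x ∈ T, b + 2 ^ (l - 1) ≤ x ∧ x < b + 2 ^ l) →
      kpar X l ≤ S.card → kpar X l ≤ T.card →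
      ∃ p ∈ E, p.1 ∈ S ∧ p.2 ∈ T) :
    ∀ d b (U : Finset ℕ), l0 + d ≤ D → 2 ^ (l0 + d) ∣ b → b + 2 ^ (l0 + d) ≤ 2 ^ D →
      (∀ x ∈ U, b ≤ x ∧ x < b + 2 ^ (l0 + d)) →
      ∃ l : List ℕ, l.Chain' (fun a c => a < c ∧ (a, c) ∈ E) ∧
        (∀ x ∈ l, x ∈ U) ∧ U.card ≤ l.length + Lam X l0 d := by
  intro d
  induction d with
  | zero =>
    intro b U _ hdvd hbd hU
    rw [Nat.add_zero] at hdvd hU hbd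
    obtain ⟨q, hq⟩ := hdvd
    refine ⟨U.sort (· ≤ ·), ?_, ?_, ?_⟩
    · have hs : List.Pairwise (· < ·) (U.sort (· ≤ ·)) := (Finset.sortedLT_sort U).pairwise
      have key : ∀ x ∈ U, x / 2 ^ l0 = q := by
        intro x hx
        obtain ⟨h1, h2⟩ := hU x hx
        rw [hq] at h1 h2
        refine Nat.div_eq_of_lt_le ?_ ?_
        · calc q * 2 ^ l0 = 2 ^ l0 * q := by ring
            _ ≤ x := h1
        · calc x < 2 ^ l0 * q + 2 ^ l0 := h2
            _ = (q + 1) * 2 ^ l0 := by ring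
      have hpair : (U.sort (· ≤ ·)).Pairwise (fun a c => a < c ∧ (a, c) ∈ E) := by
        refine List.Pairwise.imp_of_mem ?_ hs
        intro a c ha hc hlt
        rw [Finset.mem_sort] at ha hc
        have hcD : c < 2 ^ D := lt_of_lt_of_le (hU c hc).2 hbd
        exact ⟨hlt, hbase a c hlt hcD (by rw [key a ha, key c hc])⟩
      exact hpair.isChain
    · intro x hx; rwa [Finset.mem_sort] at hx
    · rw [Finset.length_sort, Lam]; omega
  | succ d ih =>
    intro b U hle hdvd hbound hU
    simp only [← Nat.add_assoc] at hle hdvd hbound hU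
    have hpow : 2 ^ (l0 + d + 1) = 2 ^ (l0 + d) + 2 ^ (l0 + d) := by
      rw [pow_succ]; ring
    have hAb : ∀ x ∈ U.filter (fun x => x < b + 2 ^ (l0 + d)),
        b ≤ x ∧ x < b + 2 ^ (l0 + d) := by
      intro x hx
      rw [Finset.mem_filter] at hx
      exact ⟨(hU x hx.1).1, hx.2⟩
    have hBb : ∀ x ∈ U.filter (fun x => ¬ x < b + 2 ^ (l0 + d)),
        b + 2 ^ (l0 + d) ≤ x ∧ x < b + 2 ^ (l0 + d) + 2 ^ (l0 + d) := by
      intro x hx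
      rw [Finset.mem_filter] at hx
      have h2 := (hU x hx.1).2
      rw [hpow] at h2
      omega
    have hdvd' : 2 ^ (l0 + d) ∣ b := dvd_trans (pow_dvd_pow 2 (Nat.le_succ _)) hdvd
    have hdvd'' : 2 ^ (l0 + d) ∣ (b + 2 ^ (l0 + d)) := Dvd.dvd.add hdvd' dvd_rfl
    have hle' : l0 + d ≤ D := by omega
    have hboundA : b + 2 ^ (l0 + d) ≤ 2 ^ D := by rw [hpow] at hbound; omega
    have hboundB : (b + 2 ^ (l0 + d)) + 2 ^ (l0 + d) ≤ 2 ^ D := by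
      rw [hpow] at hbound; omega
    obtain ⟨lA, hcA, hmA, hlenA⟩ :=
      ih b (U.filter (fun x => x < b + 2 ^ (l0 + d))) hle' hdvd' hboundA hAb
    obtain ⟨lB, hcB, hmB, hlenB⟩ :=
      ih (b + 2 ^ (l0 + d)) (U.filter (fun x => ¬ x < b + 2 ^ (l0 + d))) hle' hdvd'' hboundB
        (by intro x hx; have := hBb x hx; omega)
    have hAU : ∀ x ∈ lA, x ∈ U := fun x hx => (Finset.mem_filter.mp (hmA x hx)).1
    have hBU : ∀ x ∈ lB, x ∈ U := fun x hx => (Finset.mem_filter.mp (hmB x hx)).1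
    have hlAbd : ∀ x ∈ lA, b ≤ x ∧ x < b + 2 ^ (l0 + d) := fun x hx => hAb x (hmA x hx)
    have hlBbd : ∀ x ∈ lB, b + 2 ^ (l0 + d) ≤ x ∧ x < b + 2 ^ (l0 + d) + 2 ^ (l0 + d) :=
      fun x hx => hBb x (hmB x hx)
    have hcardsplit : (U.filter (fun x => x < b + 2 ^ (l0 + d))).card +
        (U.filter (fun x => ¬ x < b + 2 ^ (l0 + d))).card = U.card :=
      Finset.card_filter_add_card_filter_not _
    have hLam : Lam X l0 (d + 1) = 2 * Lam X l0 d + 2 * kpar X (l0 + d + 1) := by rw [Lam]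
    have hkk1 : 1 ≤ kpar X (l0 + d + 1) := Nat.le_add_left 1 _
    by_cases hA : lA.length < kpar X (l0 + d + 1)
    · exact ⟨lB, hcB, fun x hx => hBU x hx, by omega⟩
    by_cases hB : lB.length < kpar X (l0 + d + 1)
    · exact ⟨lA, hcA, fun x hx => hAU x hx, by omega⟩
    push_neg at hA hB
    -- main case : cross between the two halves
    have hndA : lA.Nodup :=
      (List.isChain_iff_pairwise.mp (hcA.imp (fun a c h => h.1))).nodup
    have hndB : lB.Nodup :=
      (List.isChain_iff_pairwise.mp (hcB.imp (fun a c h => h.1))).nodup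
    have hsAnd : (lA.drop (lA.length - kpar X (l0 + d + 1))).Nodup :=
      (List.drop_sublist _ lA).nodup hndA
    have htBnd : (lB.take (kpar X (l0 + d + 1))).Nodup :=
      (List.take_sublist _ lB).nodup hndB
    have hsAlen : (lA.drop (lA.length - kpar X (l0 + d + 1))).length = kpar X (l0 + d + 1) := by
      rw [List.length_drop]; omega
    have htBlen : (lB.take (kpar X (l0 + d + 1))).length = kpar X (l0 + d + 1) := by
      rw [List.length_take]; omega
    have hScard : (lA.drop (lA.length - kpar X (l0 + d + 1))).toFinset.card
        = kpar X (l0 + d + 1) := by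
      rw [List.toFinset_card_of_nodup hsAnd, hsAlen]
    have hTcard : (lB.take (kpar X (l0 + d + 1))).toFinset.card = kpar X (l0 + d + 1) := by
      rw [List.toFinset_card_of_nodup htBnd, htBlen]
    have hSb : ∀ x ∈ (lA.drop (lA.length - kpar X (l0 + d + 1))).toFinset,
        b ≤ x ∧ x < b + 2 ^ (l0 + d + 1 - 1) := by
      intro x hx
      rw [List.mem_toFinset] at hx
      have := hlAbd x (List.drop_subset _ _ hx)
      simpa only [Nat.add_sub_cancel] using this
    have hTb : ∀ x ∈ (lB.take (kpar X (l0 + d + 1))).toFinset,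
        b + 2 ^ (l0 + d + 1 - 1) ≤ x ∧ x < b + 2 ^ (l0 + d + 1) := by
      intro x hx
      rw [List.mem_toFinset] at hx
      have := hlBbd x (List.take_subset _ _ hx)
      simp only [Nat.add_sub_cancel]
      rw [hpow]
      omega
    obtain ⟨p, hpE, hp1, hp2⟩ := hconn (l0 + d + 1) b (by omega) (by omega) hdvd
      (by rw [hpow]; omega) _ _ hSb hTb (le_of_eq hScard.symm) (le_of_eq hTcard.symm)
    obtain ⟨a, bv⟩ := p
    simp only at hp1 hp2
    rw [List.mem_toFinset] at hp1 hp2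
    -- split the lists at a and bv
    obtain ⟨s1, t1, hsplitA⟩ := List.append_of_mem hp1
    obtain ⟨s2, t2, hsplitB⟩ := List.append_of_mem hp2
    have hlAeq : lA = ((lA.take (lA.length - kpar X (l0 + d + 1)) ++ s1) ++ [a]) ++ t1 := by
      conv_lhs => rw [← List.take_append_drop (lA.length - kpar X (l0 + d + 1)) lA]
      rw [hsplitA]
      simp
    have hlBeq : lB = s2 ++ (bv :: (t2 ++ lB.drop (kpar X (l0 + d + 1)))) := by
      conv_lhs => rw [← List.take_append_drop (kpar X (l0 + d + 1)) lB]
      rw [hsplitB]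
      simp
    set P1 := (lA.take (lA.length - kpar X (l0 + d + 1)) ++ s1) ++ [a] with hP1def
    set P2 := bv :: (t2 ++ lB.drop (kpar X (l0 + d + 1))) with hP2def
    have hcP1 : P1.Chain' (fun a c => a < c ∧ (a, c) ∈ E) := by
      rw [hlAeq] at hcA
      exact (List.isChain_append.mp hcA).1
    have hcP2 : P2.Chain' (fun a c => a < c ∧ (a, c) ∈ E) := by
      rw [hlBeq] at hcB
      exact (List.isChain_append.mp hcB).2.1
    have hmemP1 : ∀ x ∈ P1, x ∈ lA := by
      intro x hx
      rw [hlAeq, List.mem_append]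
      exact Or.inl hx
    have hmemP2 : ∀ x ∈ P2, x ∈ lB := by
      intro x hx
      rw [hlBeq, List.mem_append]
      exact Or.inr hx
    have habv : a < bv := by
      have h1 := (hlAbd a (List.drop_subset _ _ hp1)).2
      have h2 := (hlBbd bv (List.take_subset _ _ hp2)).1
      omega
    refine ⟨P1 ++ P2, ?_, ?_, ?_⟩
    · rw [List.Chain', List.isChain_append]
      refine ⟨hcP1, hcP2, ?_⟩
      intro x hx y hy
      rw [hP1def, List.getLast?_concat] at hx
      simp only [hP2def, List.head?_cons, Option.mem_def, Option.some.injEq] at hx hy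
      subst hx; subst hy
      exact ⟨habv, hpE⟩
    · intro x hx
      rw [List.mem_append] at hx
      rcases hx with hx | hx
      · exact hAU x (hmemP1 x hx)
      · exact hBU x (hmemP2 x hx)
    · -- length accounting
      have e1 : lA.length = P1.length + t1.length := by
        conv_lhs => rw [hlAeq]
        rw [List.length_append]
      have e2 : (lA.drop (lA.length - kpar X (l0 + d + 1))).length
          = s1.length + 1 + t1.length := by
        rw [hsplitA]; simp [List.length_append]; omega
      have e3 : lB.length = s2.length + P2.length := by
        conv_lhs => rw [hlBeq]
        rw [List.length_append]
      have e4 : (lB.take (kpar X (l0 + d + 1))).length = s2.length + 1 + t2.length := by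
        rw [hsplitB]; simp [List.length_append]; omega
      rw [List.length_append]
      omega

lemma Lam_bound (X l0 : ℕ) :
    ∀ d, X * Lam X l0 d + 4 * X ≤ d * 2 ^ (l0 + d + 1) + 2 ^ (d + 2) * X := by
  intro d
  induction d with
  | zero => simp [Lam]
  | succ d ih =>
    have h1 : X * (2 ^ (l0 + d + 1) / X) ≤ 2 ^ (l0 + d + 1) := by
      rw [mul_comm]; exact Nat.div_mul_le_self _ _
    have hk : X * kpar X (l0 + d + 1) ≤ 2 ^ (l0 + d + 1) + X := by
      have h2 : X * kpar X (l0 + d + 1) = X * (2 ^ (l0 + d + 1) / X) + X := by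
        rw [kpar]; ring
      omega
    have hexp : X * Lam X l0 (d + 1)
        = 2 * (X * Lam X l0 d) + 2 * (X * kpar X (l0 + d + 1)) := by
      rw [Lam]; ring
    have ht1 : (d + 1) * 2 ^ (l0 + (d + 1) + 1)
        = 2 * (d * 2 ^ (l0 + d + 1)) + 2 * 2 ^ (l0 + d + 1) := by
      rw [show l0 + (d + 1) + 1 = (l0 + d + 1) + 1 by omega, pow_succ]
      ring
    have ht2 : 2 ^ (d + 1 + 2) * X = 2 * (2 ^ (d + 2) * X) := by
      rw [show d + 1 + 2 = (d + 2) + 1 by omega, pow_succ]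
      ring
    rw [hexp, ht1, ht2]
    linarith

lemma clog_upper (x : ℕ) : 2 ^ Nat.clog 2 x ≤ 2 * x + 1 := by
  rcases Nat.eq_zero_or_pos x with hx | hx
  · subst hx; simp
  rcases Nat.eq_zero_or_pos (Nat.clog 2 x) with hc | hc
  · rw [hc]; omega
  obtain ⟨c, hceq⟩ := Nat.exists_eq_succ_of_ne_zero hc.ne'
  have h1 : ¬ (x ≤ 2 ^ c) := by
    intro h
    have := (Nat.clog_le_iff_le_pow (by norm_num)).mpr h
    omega
  push_neg at h1
  rw [hceq, pow_succ]
  omega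

lemma host_exists (r s : ℕ) (hr : 2 ≤ r) (hrs : r ≤ s) :
    ∃ (N : ℕ) (E : Finset (ℕ × ℕ)),
      0 < N ∧
      (∀ p ∈ E, p.1 < p.2) ∧
      ((E.card : ℝ) ≤ 4000 * r ^ 2 * s * (((Nat.clog 2 (8 * r * s)) : ℝ) + 1) ^ 3) ∧
      (∀ U : Finset ℕ, (∀ x ∈ U, x < N) → N ≤ r * U.card →
        ∃ l : List ℕ, l.Chain' (fun a c => a < c ∧ (a, c) ∈ E) ∧
          (∀ x ∈ l, x ∈ U) ∧ s + 1 ≤ l.length) := by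
  classical
  set t := Nat.clog 2 (8 * r * s) with htdef
  set l0 := Nat.clog 2 (32 * r) with hl0def
  set D := max t l0 with hDdef
  set X := 32 * r * (t + 1) with hXdef
  set L := 2 * t + 2 with hLdef
  set N := 2 ^ t with hNdef
  have hrs1 : 1 ≤ r * s := by nlinarith
  have hNge : 8 * r * s ≤ N := Nat.le_pow_clog (by norm_num) _
  have hNle : N ≤ 2 * (8 * r * s) + 1 := by
    have h := clog_upper (8 * r * s)
    rw [← htdef] at h
    omega
  have h2l0ge : 32 * r ≤ 2 ^ l0 := Nat.le_pow_clog (by norm_num) _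
  have h2l0le : 2 ^ l0 ≤ 2 * (32 * r) + 1 := by
    have h := clog_upper (32 * r)
    rw [← hl0def] at h
    omega
  have hl0t : l0 ≤ t + 1 := by
    rw [hl0def, htdef]
    apply (Nat.clog_le_iff_le_pow (by norm_num)).mpr
    have h1 : 32 * r ≤ 2 * (8 * r * s) := by nlinarith
    calc 32 * r ≤ 2 * (8 * r * s) := h1
      _ ≤ 2 * 2 ^ Nat.clog 2 (8 * r * s) := by
          have := Nat.le_pow_clog (show 1 < 2 by norm_num) (8 * r * s)
          omega
      _ = 2 ^ (Nat.clog 2 (8 * r * s) + 1) := by rw [pow_succ]; ring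
  have hDle : D ≤ t + 1 := by rw [hDdef]; omega
  have hl0D : l0 ≤ D := le_max_right _ _
  have htD : t ≤ D := le_max_left _ _
  have hX64 : 64 ≤ X := by
    rw [hXdef]
    calc (64 : ℕ) = 32 * 2 * 1 := by norm_num
      _ ≤ 32 * r * (t + 1) := by
          apply Nat.mul_le_mul (Nat.mul_le_mul_left 32 hr)
          omega
  have hXpos : 0 < X := by omega
  clear_value t l0 D X L N
  -- the connector family
  have hCf : ∀ l : ℕ, ∃ C : Finset (ℕ × ℕ),
      (∀ p ∈ C, p.1 < 2 ^ (l - 1) ∧ p.2 < 2 ^ (l - 1)) ∧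
      C.card ≤ (2 ^ (l - 1)) ^ 2 * L / kpar X l + 1 ∧
      (l0 < l → l ≤ D →
        ∀ S T : Finset ℕ, (∀ x ∈ S, x < 2 ^ (l - 1)) → (∀ x ∈ T, x < 2 ^ (l - 1)) →
          kpar X l ≤ S.card → kpar X l ≤ T.card → ∃ p ∈ C, p.1 ∈ S ∧ p.2 ∈ T) := by
    intro l
    by_cases hcond : l0 < l ∧ l ≤ D
    · obtain ⟨hc1, hc2⟩ := hcond
      have hk1 : 1 ≤ kpar X l := Nat.le_add_left 1 _
      have hl1 : 1 ≤ l := by omega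
      have hpow2 : 2 ^ l = 2 * 2 ^ (l - 1) := by
        rw [← pow_succ']
        congr 1
        omega
      have ha64 : 64 ≤ 2 ^ (l - 1) := by
        calc (64 : ℕ) ≤ 32 * r := by omega
          _ ≤ 2 ^ l0 := h2l0ge
          _ ≤ 2 ^ (l - 1) := Nat.pow_le_pow_right (by norm_num) (by omega)
      have hkm : kpar X l ≤ 2 ^ (l - 1) := by
        have hd1 : 2 ^ l / X ≤ 2 ^ l / 64 := Nat.div_le_div_left hX64 (by norm_num)
        have hd2 : 2 ^ l / 64 = 2 ^ (l - 1) / 32 := by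
          rw [hpow2]
          omega
        rw [kpar]
        omega
      have hLexp : ((2 ^ (l - 1) : ℕ) : ℝ) ^ 2 ≤ Real.exp L := by
        have h2e : (2 : ℝ) ≤ Real.exp 1 := by
          have := Real.add_one_le_exp 1
          linarith
        have hcast : ((2 ^ (l - 1) : ℕ) : ℝ) = (2 : ℝ) ^ (l - 1) := by push_cast; ring
        rw [hcast]
        have hmle : 2 * (l - 1) ≤ L := by rw [hLdef]; omega
        calc ((2 : ℝ) ^ (l - 1)) ^ 2 = (2 : ℝ) ^ (2 * (l - 1)) := by
              rw [← pow_mul]; ring_nf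
          _ ≤ (Real.exp 1) ^ (2 * (l - 1)) := pow_le_pow_left₀ (by norm_num) h2e _
          _ = Real.exp ((2 * (l - 1) : ℕ) : ℝ) := by
              rw [← Real.exp_one_rpow ((2 * (l - 1) : ℕ) : ℝ)]
              rw [Real.rpow_natCast]
          _ ≤ Real.exp L := by
              apply Real.exp_le_exp.mpr
              exact_mod_cast hmle
      obtain ⟨C, hC1, hC2, hC3⟩ := exists_connector (2 ^ (l - 1)) (kpar X l) L hk1 hkm hLexp
      exact ⟨C, hC1, hC2, fun _ _ => hC3⟩
    · refine ⟨∅, by simp, by simp, ?_⟩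
      intro h1 h2
      exact absurd ⟨h1, h2⟩ hcond
  choose Cf hCf1 hCf2 hCf3 using hCf
  -- the host edge set
  set Base := ((Finset.range (2 ^ D)) ×ˢ (Finset.range (2 ^ D))).filter
      (fun p => p.1 < p.2 ∧ p.1 / 2 ^ l0 = p.2 / 2 ^ l0) with hBasedef
  set Econn := (Finset.Icc (l0 + 1) D).biUnion (fun l =>
      (Finset.range (2 ^ (D - l))).biUnion (fun q =>
        (Cf l).image (fun p => (q * 2 ^ l + p.1, q * 2 ^ l + 2 ^ (l - 1) + p.2)))) with hEconndef
  set E := Base ∪ Econn with hEdef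
  have hpairs : ∀ p ∈ E, p.1 < p.2 := by
    intro p hp
    rw [hEdef, Finset.mem_union] at hp
    rcases hp with hp | hp
    · rw [hBasedef, Finset.mem_filter] at hp
      exact hp.2.1
    · rw [hEconndef, Finset.mem_biUnion] at hp
      obtain ⟨l, hl, hp⟩ := hp
      rw [Finset.mem_biUnion] at hp
      obtain ⟨q, hq, hp⟩ := hp
      rw [Finset.mem_image] at hp
      obtain ⟨w, hw, hweq⟩ := hp
      have := (hCf1 l w hw).1
      rw [← hweq]
      simp only
      omega
  refine ⟨N, E, by rw [hNdef]; positivity, hpairs, ?_, ?_⟩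
  · -- cardinality bound
    have hl06 : 6 ≤ l0 := by
      have h64 : (2 : ℕ) ^ 6 ≤ 2 ^ l0 := by
        calc (2 : ℕ) ^ 6 = 64 := by norm_num
          _ ≤ 32 * r := by omega
          _ ≤ 2 ^ l0 := h2l0ge
      exact (Nat.pow_le_pow_iff_right (by norm_num)).mp h64
    have hBcard : Base.card ≤ 2 ^ D * 2 ^ l0 := by
      have hsub : Base.card ≤ ((Finset.range (2 ^ D)) ×ˢ (Finset.range (2 ^ l0))).card := by
        apply Finset.card_le_card_of_injOn (fun p => (p.1, p.2 - p.1))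
        · intro p hp
          rw [Finset.mem_coe, hBasedef, Finset.mem_filter, Finset.mem_product] at hp
          obtain ⟨⟨hp1, hp2⟩, hplt, hpdiv⟩ := hp
          rw [Finset.mem_coe, Finset.mem_product]
          refine ⟨hp1, ?_⟩
          rw [Finset.mem_range]
          have e1 := Nat.div_add_mod p.1 (2 ^ l0)
          have e2 := Nat.div_add_mod p.2 (2 ^ l0)
          have e3 : p.1 % 2 ^ l0 < 2 ^ l0 := Nat.mod_lt _ (pow_pos (by norm_num) _)
          have e4 : p.2 % 2 ^ l0 < 2 ^ l0 := Nat.mod_lt _ (pow_pos (by norm_num) _)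
          rw [hpdiv] at e1
          dsimp only
          omega
        · rintro ⟨p1, p2⟩ hp ⟨q1, q2⟩ hq hpq
          simp only [Finset.mem_coe, hBasedef, Finset.mem_filter, Finset.mem_product] at hp hq
          simp only [Prod.mk.injEq] at hpq ⊢
          omega
      rw [Finset.card_product, Finset.card_range, Finset.card_range] at hsub
      exact hsub
    have hlevel : ∀ l ∈ Finset.Icc (l0 + 1) D,
        ((Finset.range (2 ^ (D - l))).biUnion (fun q =>
          (Cf l).image (fun p => (q * 2 ^ l + p.1, q * 2 ^ l + 2 ^ (l - 1) + p.2)))).card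
          ≤ 2 ^ (D - 2) * L * X + 2 ^ D := by
      intro l hl
      rw [Finset.mem_Icc] at hl
      have hl2 : 2 ≤ l := by omega
      have hkX : 2 ^ l ≤ kpar X l * X := by
        have e1 := Nat.div_add_mod (2 ^ l) X
        have e2 : 2 ^ l % X < X := Nat.mod_lt _ hXpos
        have e3 : kpar X l * X = X * (2 ^ l / X) + X := by rw [kpar]; ring
        omega
      have hpows : (2 ^ (l - 1)) ^ 2 = 2 ^ (l - 2) * 2 ^ l := by
        rw [← pow_mul, ← pow_add]
        congr 1
        omega
      have hstep : (2 ^ (l - 1)) ^ 2 * L ≤ (2 ^ (l - 2) * L * X) * kpar X l := by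
        calc (2 ^ (l - 1)) ^ 2 * L = 2 ^ (l - 2) * 2 ^ l * L := by rw [hpows]
          _ ≤ 2 ^ (l - 2) * (kpar X l * X) * L := by
              apply Nat.mul_le_mul_right
              exact Nat.mul_le_mul_left _ hkX
          _ = (2 ^ (l - 2) * L * X) * kpar X l := by ring
      have hdiv : (2 ^ (l - 1)) ^ 2 * L / kpar X l ≤ 2 ^ (l - 2) * L * X := by
        have h0 : 0 < kpar X l := Nat.le_add_left 1 _
        calc (2 ^ (l - 1)) ^ 2 * L / kpar X l
            ≤ (2 ^ (l - 2) * L * X) * kpar X l / kpar X l := Nat.div_le_div_right hstep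
          _ = 2 ^ (l - 2) * L * X := Nat.mul_div_cancel _ h0
      have hCl : (Cf l).card ≤ 2 ^ (l - 2) * L * X + 1 := by
        have := hCf2 l
        omega
      have hDl2 : 2 ^ (D - l) * 2 ^ (l - 2) = 2 ^ (D - 2) := by
        rw [← pow_add]
        congr 1
        omega
      calc ((Finset.range (2 ^ (D - l))).biUnion _).card
          ≤ ∑ q ∈ Finset.range (2 ^ (D - l)),
              ((Cf l).image (fun p => (q * 2 ^ l + p.1, q * 2 ^ l + 2 ^ (l - 1) + p.2))).card :=
            Finset.card_biUnion_le
        _ ≤ ∑ _q ∈ Finset.range (2 ^ (D - l)), (2 ^ (l - 2) * L * X + 1) :=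
            Finset.sum_le_sum (fun q _ => le_trans Finset.card_image_le hCl)
        _ = 2 ^ (D - l) * (2 ^ (l - 2) * L * X + 1) := by
            rw [Finset.sum_const, Finset.card_range, smul_eq_mul]
        _ = 2 ^ (D - 2) * L * X + 2 ^ (D - l) := by
            rw [Nat.mul_add, Nat.mul_one, ← Nat.mul_assoc, ← Nat.mul_assoc, hDl2]
        _ ≤ 2 ^ (D - 2) * L * X + 2 ^ D := by
            have : 2 ^ (D - l) ≤ 2 ^ D := Nat.pow_le_pow_right (by norm_num) (by omega)
            omega
    have hEconnCard : Econn.card ≤ (t + 1) * (2 ^ (D - 2) * L * X + 2 ^ D) := by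
      rw [hEconndef]
      calc ((Finset.Icc (l0 + 1) D).biUnion _).card
          ≤ ∑ l ∈ Finset.Icc (l0 + 1) D, ((Finset.range (2 ^ (D - l))).biUnion (fun q =>
              (Cf l).image (fun p => (q * 2 ^ l + p.1, q * 2 ^ l + 2 ^ (l - 1) + p.2)))).card :=
            Finset.card_biUnion_le
        _ ≤ ∑ _l ∈ Finset.Icc (l0 + 1) D, (2 ^ (D - 2) * L * X + 2 ^ D) :=
            Finset.sum_le_sum hlevel
        _ = (Finset.Icc (l0 + 1) D).card * (2 ^ (D - 2) * L * X + 2 ^ D) := by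
            rw [Finset.sum_const, smul_eq_mul]
        _ ≤ (t + 1) * (2 ^ (D - 2) * L * X + 2 ^ D) := by
            apply Nat.mul_le_mul_right
            rw [Nat.card_Icc]
            omega
    have hEcard : E.card ≤ Base.card + Econn.card := by
      rw [hEdef]
      exact Finset.card_union_le _ _
    -- numeric consolidation over ℕ
    have hrs8 : 8 * r * s = 8 * (r * s) := by ring
    have hNb : N ≤ 17 * (r * s) := by omega
    have hl0b : 2 ^ l0 ≤ 65 * r := by omega
    have hD2N : 2 ^ D ≤ 2 * N := by
      have h1 : 2 ^ D ≤ 2 ^ (t + 1) := Nat.pow_le_pow_right (by norm_num) hDle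
      have h2 : 2 ^ (t + 1) = 2 * N := by rw [hNdef, pow_succ]; ring
      omega
    have hD36 : 2 ^ D ≤ 36 * (r * s) := by omega
    have hD22 : 2 ^ (D - 2) * 4 = 2 ^ D := by
      have h4 : (4 : ℕ) = 2 ^ 2 := by norm_num
      rw [h4, ← pow_add]
      congr 1
      omega
    have hD29 : 2 ^ (D - 2) ≤ 9 * (r * s) := by omega
    have hLX : L * X = 64 * (r * ((t + 1) * (t + 1))) := by
      rw [hLdef, hXdef]; ring
    have hterm1 : 2 ^ (D - 2) * L * X ≤ 576 * (r * r * s * ((t + 1) * (t + 1))) := by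
      calc 2 ^ (D - 2) * L * X = 2 ^ (D - 2) * (L * X) := by ring
        _ ≤ (9 * (r * s)) * (64 * (r * ((t + 1) * (t + 1)))) := by
            rw [hLX]
            exact Nat.mul_le_mul_right _ hD29
        _ = 576 * (r * r * s * ((t + 1) * (t + 1))) := by ring
    have hpad : r * s ≤ r * r * s * ((t + 1) * (t + 1)) := by
      calc r * s = 1 * (r * s) * (1 * 1) := by ring
        _ ≤ r * (r * s) * ((t + 1) * (t + 1)) := by
            apply Nat.mul_le_mul
            · exact Nat.mul_le_mul (by omega) (le_refl _)
            · exact Nat.mul_le_mul (by omega) (by omega)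
        _ = r * r * s * ((t + 1) * (t + 1)) := by ring
    have hinner : 2 ^ (D - 2) * L * X + 2 ^ D ≤ 612 * (r * r * s * ((t + 1) * (t + 1))) := by
      have h36 : 36 * (r * s) ≤ 36 * (r * r * s * ((t + 1) * (t + 1))) :=
        Nat.mul_le_mul_left _ hpad
      omega
    have hEconn2 : Econn.card ≤ 612 * (r * r * s * ((t + 1) * ((t + 1) * (t + 1)))) := by
      calc Econn.card ≤ (t + 1) * (2 ^ (D - 2) * L * X + 2 ^ D) := hEconnCard
        _ ≤ (t + 1) * (612 * (r * r * s * ((t + 1) * (t + 1)))) :=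
            Nat.mul_le_mul_left _ hinner
        _ = 612 * (r * r * s * ((t + 1) * ((t + 1) * (t + 1)))) := by ring
    have hBase2 : Base.card ≤ 2210 * (r * r * s) := by
      calc Base.card ≤ 2 ^ D * 2 ^ l0 := hBcard
        _ ≤ (2 * N) * (65 * r) := Nat.mul_le_mul hD2N hl0b
        _ ≤ (2 * (17 * (r * s))) * (65 * r) := by
            apply Nat.mul_le_mul_right
            omega
        _ = 2210 * (r * r * s) := by ring
    have hpad3 : r * r * s ≤ r * r * s * ((t + 1) * ((t + 1) * (t + 1))) := by
      have h1 : 1 ≤ (t + 1) * ((t + 1) * (t + 1)) := by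
        have h2 : 0 < (t + 1) * ((t + 1) * (t + 1)) := by positivity
        omega
      calc r * r * s = r * r * s * 1 := by ring
        _ ≤ r * r * s * ((t + 1) * ((t + 1) * (t + 1))) := Nat.mul_le_mul_left _ h1
    have hfinal : E.card ≤ 4000 * (r * r * s * ((t + 1) * ((t + 1) * (t + 1)))) := by
      have h2210 := Nat.mul_le_mul_left 2210 hpad3
      omega
    calc (E.card : ℝ) ≤ ((4000 * (r * r * s * ((t + 1) * ((t + 1) * (t + 1)))) : ℕ) : ℝ) := by
          exact_mod_cast hfinal
      _ = 4000 * (r : ℝ) ^ 2 * s * (((t : ℕ) : ℝ) + 1) ^ 3 := by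
          push_cast
          ring
  · -- path property
    intro U hUN hUc
    have hbase : ∀ x y : ℕ, x < y → y < 2 ^ D → x / 2 ^ l0 = y / 2 ^ l0 → (x, y) ∈ E := by
      intro x y hxy hyD hdiv
      rw [hEdef, Finset.mem_union]
      left
      rw [hBasedef, Finset.mem_filter, Finset.mem_product]
      exact ⟨⟨Finset.mem_range.mpr (by omega), Finset.mem_range.mpr hyD⟩, hxy, hdiv⟩
    have hconn : ∀ l b, l0 < l → l ≤ l0 + D → 2 ^ l ∣ b → b + 2 ^ l ≤ 2 ^ D →
        ∀ S T : Finset ℕ,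
        (∀ x ∈ S, b ≤ x ∧ x < b + 2 ^ (l - 1)) →
        (∀ x ∈ T, b + 2 ^ (l - 1) ≤ x ∧ x < b + 2 ^ l) →
        kpar X l ≤ S.card → kpar X l ≤ T.card →
        ∃ p ∈ E, p.1 ∈ S ∧ p.2 ∈ T := by
      intro l b hl0l hlD hdvd hble S T hS hT hSc hTc
      have hlD' : l ≤ D := by
        have h1 : 2 ^ l ≤ 2 ^ D := by omega
        exact (Nat.pow_le_pow_iff_right (by norm_num)).mp h1
      obtain ⟨q, hq⟩ := hdvd
      have hqlt : q < 2 ^ (D - l) := by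
        have h2 : 2 ^ l * 2 ^ (D - l) = 2 ^ D := by
          rw [← pow_add]
          congr 1
          omega
        by_contra hcon
        push_neg at hcon
        have h3 : 2 ^ l * 2 ^ (D - l) ≤ 2 ^ l * q := Nat.mul_le_mul_left _ hcon
        have hpow0 : 0 < 2 ^ l := pow_pos (by norm_num) l
        omega
      -- shift S and T down
      have hS' : ∀ x ∈ S.image (fun x => x - b), x < 2 ^ (l - 1) := by
        intro x hx
        rw [Finset.mem_image] at hx
        obtain ⟨y, hy, hyeq⟩ := hx
        have := hS y hy
        omega
      have hT' : ∀ x ∈ T.image (fun x => x - (b + 2 ^ (l - 1))), x < 2 ^ (l - 1) := by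
        intro x hx
        rw [Finset.mem_image] at hx
        obtain ⟨y, hy, hyeq⟩ := hx
        have h3 := hT y hy
        have hpow2 : 2 ^ l = 2 * 2 ^ (l - 1) := by
          rw [← pow_succ']
          congr 1
          omega
        omega
      have hScard : kpar X l ≤ (S.image (fun x => x - b)).card := by
        rw [Finset.card_image_of_injOn]
        · exact hSc
        · intro x hx y hy hxy
          have h1 := hS x hx
          have h2 := hS y hy
          simp only at hxy
          omega
      have hTcard : kpar X l ≤ (T.image (fun x => x - (b + 2 ^ (l - 1)))).card := by
        rw [Finset.card_image_of_injOn]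
        · exact hTc
        · intro x hx y hy hxy
          have h1 := hT x hx
          have h2 := hT y hy
          simp only at hxy
          omega
      obtain ⟨p, hpC, hp1, hp2⟩ := hCf3 l hl0l hlD' _ _ hS' hT' hScard hTcard
      rw [Finset.mem_image] at hp1 hp2
      obtain ⟨x, hxS, hxeq⟩ := hp1
      obtain ⟨y, hyT, hyeq⟩ := hp2
      have hxb := hS x hxS
      have hyb := hT y hyT
      refine ⟨(x, y), ?_, hxS, hyT⟩
      rw [hEdef, Finset.mem_union]
      right
      rw [hEconndef, Finset.mem_biUnion]
      refine ⟨l, Finset.mem_Icc.mpr ⟨by omega, hlD'⟩, ?_⟩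
      rw [Finset.mem_biUnion]
      refine ⟨q, Finset.mem_range.mpr hqlt, ?_⟩
      rw [Finset.mem_image]
      refine ⟨p, hpC, ?_⟩
      have hqb : q * 2 ^ l = b := by rw [hq]; ring
      have hx' : q * 2 ^ l + p.1 = x := by rw [hqb]; omega
      have hy' : q * 2 ^ l + 2 ^ (l - 1) + p.2 = y := by rw [hqb]; omega
      rw [hx', hy']
    -- apply the path lemma
    have hNle2D : N ≤ 2 ^ D := by
      rw [hNdef]
      exact Nat.pow_le_pow_right (by norm_num) htD
    have hUbd : ∀ x ∈ U, 0 ≤ x ∧ x < 0 + 2 ^ (l0 + (D - l0)) := by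
      intro x hx
      have h1 := hUN x hx
      have h2 : l0 + (D - l0) = D := by omega
      rw [h2]
      omega
    have h2top : l0 + (D - l0) = D := by omega
    have hb3 : 0 + 2 ^ (l0 + (D - l0)) ≤ 2 ^ D := by rw [h2top]; omega
    obtain ⟨l, hc, hm, hlen⟩ := path_lemma E X l0 D hbase hconn (D - l0) 0 U
      (by omega) (dvd_zero _) hb3 hUbd
    refine ⟨l, hc, hm, ?_⟩
    -- length arithmetic
    have hLam := Lam_bound X l0 (D - l0)
    have hUlen : U.card ≤ l.length + Lam X l0 (D - l0) := hlen
    by_contra hcon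
    push_neg at hcon
    have hll : l.length ≤ s := by omega
    -- N ≤ r * U.card ≤ r * (s + Lam)
    have h1 : N ≤ r * s + r * Lam X l0 (D - l0) := by
      calc N ≤ r * U.card := hUc
        _ ≤ r * (s + Lam X l0 (D - l0)) := Nat.mul_le_mul_left r (by omega)
        _ = r * s + r * Lam X l0 (D - l0) := by ring
    -- multiply by X
    have h2 : X * N ≤ X * (r * s) + r * (X * Lam X l0 (D - l0)) := by
      calc X * N ≤ X * (r * s + r * Lam X l0 (D - l0)) := Nat.mul_le_mul_left X h1
        _ = X * (r * s) + r * (X * Lam X l0 (D - l0)) := by ring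
    have hDD : l0 + (D - l0) + 1 = D + 1 := by omega
    have h3 : X * Lam X l0 (D - l0) ≤ (D - l0) * 2 ^ (D + 1) + 2 ^ ((D - l0) + 2) * X := by
      rw [← hDD]
      omega
    have h4 : 2 ^ (D + 1) ≤ 4 * N := by
      have : 2 ^ (D + 1) ≤ 2 ^ (t + 2) := Nat.pow_le_pow_right (by norm_num) (by omega)
      have h5 : 2 ^ (t + 2) = 4 * N := by
        rw [hNdef, pow_add]
        ring
      omega
    have h6 : 2 ^ ((D - l0) + 2) * 2 ^ l0 = 4 * 2 ^ D := by
      rw [← pow_add]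
      rw [show D - l0 + 2 + l0 = D + 2 by omega, pow_add]
      ring
    have h7 : 2 ^ D ≤ 2 * N := by
      have : 2 ^ D ≤ 2 ^ (t + 1) := Nat.pow_le_pow_right (by norm_num) hDle
      rw [hNdef] at *
      rw [pow_succ] at this
      omega
    have h8 : 2 ^ ((D - l0) + 2) * X ≤ 8 * N * (t + 1) := by
      have h9 : 2 ^ ((D - l0) + 2) * (32 * r) ≤ 2 ^ ((D - l0) + 2) * 2 ^ l0 :=
        Nat.mul_le_mul_left _ h2l0ge
      have h10 : 2 ^ ((D - l0) + 2) * X = (2 ^ ((D - l0) + 2) * (32 * r)) * (t + 1) := by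
        rw [hXdef]; ring
      calc 2 ^ ((D - l0) + 2) * X = (2 ^ ((D - l0) + 2) * (32 * r)) * (t + 1) := h10
        _ ≤ (4 * 2 ^ D) * (t + 1) := by
            apply Nat.mul_le_mul_right
            omega
        _ ≤ (8 * N) * (t + 1) := by
            apply Nat.mul_le_mul_right
            omega
    have h11 : (D - l0) * 2 ^ (D + 1) ≤ (t + 1) * (4 * N) := by
      apply Nat.mul_le_mul (by omega) h4
    have h12 : X * Lam X l0 (D - l0) ≤ 12 * N * (t + 1) := by
      calc X * Lam X l0 (D - l0) ≤ (D - l0) * 2 ^ (D + 1) + 2 ^ ((D - l0) + 2) * X := h3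
        _ ≤ (t + 1) * (4 * N) + 8 * N * (t + 1) := by omega
        _ = 12 * N * (t + 1) := by ring
    -- conclude
    have h14a : r * (X * Lam X l0 (D - l0)) ≤ r * (12 * N * (t + 1)) :=
      Nat.mul_le_mul_left r h12
    have h14b : 32 * (r * (12 * N * (t + 1))) = 12 * (X * N) := by
      rw [hXdef]; ring
    have h14 : 32 * (X * N) ≤ 32 * (X * (r * s)) + 12 * (X * N) := by
      calc 32 * (X * N) ≤ 32 * (X * (r * s) + r * (X * Lam X l0 (D - l0))) :=
            Nat.mul_le_mul_left 32 h2
        _ = 32 * (X * (r * s)) + 32 * (r * (X * Lam X l0 (D - l0))) := by ring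
        _ ≤ 32 * (X * (r * s)) + 32 * (r * (12 * N * (t + 1))) := by
            have h14c := Nat.mul_le_mul_left 32 h14a
            omega
        _ = 32 * (X * (r * s)) + 12 * (X * N) := by rw [h14b]
    have h16 : 8 * (X * (r * s)) ≤ X * N := by
      have h16a : 8 * (r * s) ≤ N := by
        have : 8 * (r * s) = 8 * r * s := by ring
        omega
      calc 8 * (X * (r * s)) = X * (8 * (r * s)) := by ring
        _ ≤ X * N := Nat.mul_le_mul_left X h16a
    have hXrs1 : 1 ≤ X * (r * s) := by
      have := Nat.mul_le_mul (show 1 ≤ X by omega) hrs1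
      omega
    omega


attribute [local instance] Classical.propDecidable



noncomputable def redlen (n : ℕ) (R : ℕ → ℕ → Prop) (v : ℕ) : ℕ :=
  Nat.findGreatest
    (fun L => ∃ l : List ℕ, l.Chain' R ∧ (∀ x ∈ l, x < n) ∧
      l.getLast? = some v ∧ l.length = L + 1) n

lemma chain_len_le {n : ℕ} {R : ℕ → ℕ → Prop} (hR : ∀ u v, R u v → u < v)
    (l : List ℕ) (hc : l.Chain' R) (hm : ∀ x ∈ l, x < n) : l.length ≤ n := by
  have h1 : l.Chain' (· < ·) := hc.imp hR
  have h2 : l.Nodup := (List.isChain_iff_pairwise.mp h1).nodup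
  calc l.length = l.toFinset.card := (List.toFinset_card_of_nodup h2).symm
    _ ≤ (Finset.range n).card := by
        apply Finset.card_le_card
        intro x hx
        rw [List.mem_toFinset] at hx
        rw [Finset.mem_range]
        exact hm x hx
    _ = n := Finset.card_range n

lemma redlen_spec (n : ℕ) (R : ℕ → ℕ → Prop) (v : ℕ) (hv : v < n) :
    ∃ l : List ℕ, l.Chain' R ∧ (∀ x ∈ l, x < n) ∧
      l.getLast? = some v ∧ l.length = redlen n R v + 1 := by
  have h := Nat.findGreatest_spec
    (P := fun L => ∃ l : List ℕ, l.Chain' R ∧ (∀ x ∈ l, x < n) ∧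
      l.getLast? = some v ∧ l.length = L + 1) (m := 0) (Nat.zero_le n)
    ⟨[v], List.isChain_singleton v, by simpa using hv, by simp, rfl⟩
  simpa [redlen] using h

lemma redlen_lt {n : ℕ} {R : ℕ → ℕ → Prop} (hR : ∀ u v, R u v → u < v)
    {u v : ℕ} (hu : u < n) (hv : v < n) (huv : R u v) :
    redlen n R u < redlen n R v := by
  classical
  obtain ⟨l, hc, hm, hlast, hlen⟩ := redlen_spec n R u hu
  have hnil : l ≠ [] := by
    intro h; rw [h] at hlen; simp at hlen
  have hchain2 : (l ++ [v]).Chain' R := by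
    rw [List.Chain', List.isChain_append]
    refine ⟨hc, List.isChain_singleton v, ?_⟩
    intro x hx y hy
    rw [hlast] at hx
    simp only [Option.mem_def, Option.some.injEq, List.head?_cons] at hx hy
    subst hx; subst hy
    exact huv
  have hP : ∃ l' : List ℕ, l'.Chain' R ∧ (∀ x ∈ l', x < n) ∧
      l'.getLast? = some v ∧ l'.length = (redlen n R u + 1) + 1 := by
    refine ⟨l ++ [v], hchain2, ?_, ?_, ?_⟩
    · intro x hx
      rw [List.mem_append] at hx
      rcases hx with hx | hx
      · exact hm x hx
      · simp at hx; subst hx; exact hv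
    · exact List.getLast?_concat
    · rw [List.length_append, hlen]; simp
  have hbound : redlen n R u + 1 + 1 ≤ n :=
    hP.elim (fun l' hl' => by
      have := chain_len_le hR l' hl'.1 hl'.2.1
      omega)
  have hle2 : redlen n R u + 1 ≤ redlen n R v :=
    Nat.le_findGreatest (by omega) hP
  omega

lemma redlen_big {n : ℕ} {R : ℕ → ℕ → Prop} {v r : ℕ} (hv : v < n)
    (h : r ≤ redlen n R v) :
    ∃ l : List ℕ, l.Chain' R ∧ (∀ x ∈ l, x < n) ∧ l.length = r + 1 := by
  obtain ⟨l, hc, hm, _, hlen⟩ := redlen_spec n R v hv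
  exact ⟨l.take (r + 1), hc.take _, fun x hx => hm x (List.take_subset _ _ hx),
    by rw [List.length_take]; omega⟩

lemma redlen_lt_n {n : ℕ} {R : ℕ → ℕ → Prop} (v : ℕ) :
    redlen n R v ≤ n := Nat.findGreatest_le n

lemma pigeon {n r : ℕ} (hr : 0 < r) (f : ℕ → ℕ) (hf : ∀ v, v < n → f v < r) :
    ∃ c, c < r ∧ n ≤ r * ((Finset.range n).filter (fun v => f v = c)).card := by
  classical
  have hcover : ∀ v ∈ Finset.range n, f v ∈ Finset.range r := by
    intro v hv
    rw [Finset.mem_range] at hv ⊢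
    exact hf v hv
  have hsum : (Finset.range n).card =
      ∑ c ∈ Finset.range r, ((Finset.range n).filter (fun v => f v = c)).card :=
    Finset.card_eq_sum_card_fiberwise hcover
  obtain ⟨c, hc, hmax⟩ := Finset.exists_max_image (Finset.range r)
    (fun c => ((Finset.range n).filter (fun v => f v = c)).card)
    ⟨0, Finset.mem_range.mpr hr⟩
  refine ⟨c, Finset.mem_range.mp hc, ?_⟩
  calc n = (Finset.range n).card := (Finset.card_range n).symm
    _ = ∑ c' ∈ Finset.range r, ((Finset.range n).filter (fun v => f v = c')).card := hsum
    _ ≤ (Finset.range r).card • ((Finset.range n).filter (fun v => f v = c)).card :=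
        Finset.sum_le_card_nsmul _ _ _ (fun x hx => hmax x hx)
    _ = r * ((Finset.range n).filter (fun v => f v = c)).card := by
        rw [Finset.card_range, smul_eq_mul]

lemma list_toVfun {n L : ℕ} (P : ℕ → ℕ → Prop) (l : List ℕ) (hlen : l.length = L + 1)
    (hmem : ∀ x ∈ l, x < n) (hchain : l.Chain' (fun a c => a < c ∧ P a c)) :
    ∃ v : Fin (L + 1) → Fin n, StrictMono v ∧
      ∀ i : Fin L, P (v i.castSucc).val (v i.succ).val := by
  have hget : ∀ i : ℕ, i < L + 1 → i < l.length := by omega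
  refine ⟨fun i => ⟨l.get ⟨i.val, hget i.val i.isLt⟩, hmem _ (l.get_mem _)⟩, ?_, ?_⟩
  · rw [Fin.strictMono_iff_lt_succ]
    intro i
    have hi : (i : ℕ) < l.length - 1 := by omega
    have := List.isChain_iff_getElem.mp hchain i.val (by omega)
    simp only [Fin.mk_lt_mk]
    exact this.1
  · intro i
    have hi : (i : ℕ) < l.length - 1 := by omega
    have := List.isChain_iff_getElem.mp hchain i.val (by omega)
    exact this.2

/-- A monotone (increasing) path with `ℓ` edges in an ordered graph `G` on vertex set
`Fin n`. -/
def IsMonoPath {n ℓ : ℕ} (G : SimpleGraph (Fin n)) (v : Fin (ℓ + 1) → Fin n) : Prop :=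
  StrictMono v ∧ ∀ i : Fin ℓ, G.Adj (v i.castSucc) (v i.succ)

/-- `G` contains a monotone path with `ℓ` edges all of which get the value `b`
under the red-blue edge coloring `col`. -/
def HasPath {n : ℕ} (G : SimpleGraph (Fin n)) (ℓ : ℕ)
    (col : Fin n → Fin n → Bool) (b : Bool) : Prop :=
  ∃ v : Fin (ℓ + 1) → Fin n, IsMonoPath G v ∧
    ∀ i : Fin ℓ, col (v i.castSucc) (v i.succ) = b

/-- The ordered size Ramsey number `r̃(P_r, P_s)`. -/
noncomputable def orderedSizeRamsey (r s : ℕ) : ℕ :=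
  sInf { m | ∃ (n : ℕ) (G : SimpleGraph (Fin n)), G.edgeSet.ncard = m ∧
    ∀ col : Fin n → Fin n → Bool, HasPath G r col true ∨ HasPath G s col false }

theorem stmt_1 :
    ∃ C : ℝ, 0 < C ∧ ∀ r s : ℕ, 2 ≤ r → r ≤ s →
      (∃ (n : ℕ) (H : SimpleGraph (Fin n)),
        (H.edgeSet.ncard : ℝ) ≤ C * (r : ℝ) ^ 2 * s * (Real.log s) ^ 3 ∧
        ∀ col : Fin n → Fin n → Bool, HasPath H r col true ∨ HasPath H s col false) ∧
      (orderedSizeRamsey r s : ℝ) ≤ C * (r : ℝ) ^ 2 * s * (Real.log s) ^ 3 := by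
  classical
  refine ⟨10 ^ 9, by norm_num, ?_⟩
  intro r s hr hrs
  have main : ∃ (n : ℕ) (H : SimpleGraph (Fin n)),
      (H.edgeSet.ncard : ℝ) ≤ 10 ^ 9 * (r : ℝ) ^ 2 * s * (Real.log s) ^ 3 ∧
      ∀ col : Fin n → Fin n → Bool, HasPath H r col true ∨ HasPath H s col false := by
    obtain ⟨N, E, hN, hEpairs, hEcard, hEpath⟩ := host_exists r s hr hrs
    set EFly : Finset (Sym2 (Fin N)) := ((E.filter (fun p => p.1 < N ∧ p.2 < N)).attach.image
        (fun p => s((⟨p.1.1, (Finset.mem_filter.mp p.2).2.1⟩ : Fin N),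
                    (⟨p.1.2, (Finset.mem_filter.mp p.2).2.2⟩ : Fin N)))) with hES
    set H : SimpleGraph (Fin N) := SimpleGraph.fromEdgeSet ↑EFly with hH
    have hncard : H.edgeSet.ncard ≤ E.card := by
      have h1 : H.edgeSet ⊆ ↑EFly := by
        rw [hH, SimpleGraph.edgeSet_fromEdgeSet]
        exact Set.diff_subset
      calc H.edgeSet.ncard ≤ (↑EFly : Set (Sym2 (Fin N))).ncard :=
            Set.ncard_le_ncard h1 (EFly.finite_toSet)
        _ = EFly.card := Set.ncard_coe_finset _
        _ ≤ (E.filter (fun p => p.1 < N ∧ p.2 < N)).attach.card := Finset.card_image_le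
        _ = (E.filter (fun p => p.1 < N ∧ p.2 < N)).card := Finset.card_attach
        _ ≤ E.card := Finset.card_filter_le _ _
    have hAdj : ∀ (x y : ℕ) (hx : x < N) (hy : y < N), (x, y) ∈ E →
        H.Adj ⟨x, hx⟩ ⟨y, hy⟩ := by
      intro x y hx hy hxy
      have hne : (⟨x, hx⟩ : Fin N) ≠ ⟨y, hy⟩ := by
        have := hEpairs _ hxy
        intro hcon
        rw [Fin.mk.injEq] at hcon
        simp only at this
        omega
      rw [hH, SimpleGraph.fromEdgeSet_adj]
      refine ⟨?_, hne⟩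
      rw [Finset.mem_coe, hES]
      apply Finset.mem_image.mpr
      have hmemf : (x, y) ∈ E.filter (fun p => p.1 < N ∧ p.2 < N) :=
        Finset.mem_filter.mpr ⟨hxy, hx, hy⟩
      exact ⟨⟨(x, y), hmemf⟩, Finset.mem_attach _ _, rfl⟩
    refine ⟨N, H, ?_, ?_⟩
    · -- cardinality chain
      have hsz : 2 ≤ s := hr.trans hrs
      have hrlt : r < 2 ^ (Nat.log 2 s + 1) :=
        lt_of_le_of_lt hrs (Nat.lt_pow_succ_log_self (by norm_num) s)
      have hslt : s < 2 ^ (Nat.log 2 s + 1) := Nat.lt_pow_succ_log_self (by norm_num) s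
      have hpoweq : 2 ^ (2 * Nat.log 2 s + 5) =
          8 * (2 ^ (Nat.log 2 s + 1) * 2 ^ (Nat.log 2 s + 1)) := by
        have h8 : (8 : ℕ) = 2 ^ 3 := by norm_num
        rw [h8, ← pow_add, ← pow_add]
        congr 1
        ring
      have h8b : 8 * r * s ≤ 2 ^ (2 * Nat.log 2 s + 5) := by
        rw [hpoweq]
        calc 8 * r * s ≤ 8 * 2 ^ (Nat.log 2 s + 1) * 2 ^ (Nat.log 2 s + 1) :=
              Nat.mul_le_mul (Nat.mul_le_mul_left 8 hrlt.le) hslt.le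
          _ = 8 * (2 ^ (Nat.log 2 s + 1) * 2 ^ (Nat.log 2 s + 1)) := by ring
      have hclog : Nat.clog 2 (8 * r * s) ≤ 2 * Nat.log 2 s + 5 :=
        (Nat.clog_le_iff_le_pow (by norm_num)).mpr h8b
      have hlog2 : (0.6931 : ℝ) ≤ Real.log 2 := by
        have := Real.log_two_gt_d9
        norm_num at this ⊢
        linarith
      have hlog2s : Real.log 2 ≤ Real.log s := by
        apply Real.log_le_log (by norm_num)
        exact_mod_cast hsz
      have hL2 : (Nat.log 2 s : ℝ) * Real.log 2 ≤ Real.log s := by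
        have h1 : ((2 : ℝ)) ^ (Nat.log 2 s) ≤ (s : ℝ) := by
          exact_mod_cast Nat.pow_log_le_self 2 (by omega)
        calc (Nat.log 2 s : ℝ) * Real.log 2 = Real.log ((2 : ℝ) ^ (Nat.log 2 s)) := by
              rw [Real.log_pow]
          _ ≤ Real.log s := Real.log_le_log (by positivity) h1
      have hLg0 : (0 : ℝ) ≤ (Nat.log 2 s : ℝ) := Nat.cast_nonneg _
      have hB : (0.6931 : ℝ) * (Nat.log 2 s : ℝ) ≤ Real.log s := by
        nlinarith
      have hcastclog : ((Nat.clog 2 (8 * r * s) : ℝ)) ≤ 2 * (Nat.log 2 s : ℝ) + 5 := by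
        exact_mod_cast hclog
      have hlog : ((Nat.clog 2 (8 * r * s) : ℝ) + 1) ≤ 16 * Real.log s := by
        have hls : (0.6931 : ℝ) ≤ Real.log s := le_trans hlog2 hlog2s
        linarith
      have hlogpos : (0 : ℝ) < Real.log s := by
        calc (0 : ℝ) < 0.6931 := by norm_num
          _ ≤ Real.log 2 := hlog2
          _ ≤ Real.log s := hlog2s
      calc (H.edgeSet.ncard : ℝ) ≤ (E.card : ℝ) := by exact_mod_cast hncard
        _ ≤ 4000 * (r : ℝ) ^ 2 * s * (((Nat.clog 2 (8 * r * s)) : ℝ) + 1) ^ 3 := hEcard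
        _ ≤ 4000 * (r : ℝ) ^ 2 * s * (16 * Real.log s) ^ 3 := by
            apply mul_le_mul_of_nonneg_left _ (by positivity)
            apply pow_le_pow_left₀ (by positivity) hlog
        _ = 16384000 * ((r : ℝ) ^ 2 * s * (Real.log s) ^ 3) := by ring
        _ ≤ 10 ^ 9 * (r : ℝ) ^ 2 * s * (Real.log s) ^ 3 := by
            have hfac : (0 : ℝ) ≤ (r : ℝ) ^ 2 * s * (Real.log s) ^ 3 := by positivity
            nlinarith
    · -- coloring dichotomy
      intro col
      by_cases hred : HasPath H r col true
      · exact Or.inl hred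
      right
      set R : ℕ → ℕ → Prop := fun u v => u < v ∧ ∃ (hu : u < N) (hv : v < N),
          H.Adj ⟨u, hu⟩ ⟨v, hv⟩ ∧ col ⟨u, hu⟩ ⟨v, hv⟩ = true with hRdef
      have hRlt : ∀ u v, R u v → u < v := fun u v h => h.1
      have hshort : ∀ v, v < N → redlen N R v < r := by
        intro v hv
        by_contra hge
        push_neg at hge
        obtain ⟨lst, hcl, hml, hlenl⟩ := redlen_big hv hge
        obtain ⟨vf, hmono, hP⟩ := list_toVfun
          (fun a c => ∃ (hu : a < N) (hv : c < N),
            H.Adj ⟨a, hu⟩ ⟨c, hv⟩ ∧ col ⟨a, hu⟩ ⟨c, hv⟩ = true) lst hlenl hml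
          (by rw [hRdef] at hcl; exact hcl)
        apply hred
        refine ⟨vf, ⟨hmono, ?_⟩, ?_⟩
        · intro i
          obtain ⟨hu, hv2, hadj, _⟩ := hP i
          have h1 : (⟨((vf i.castSucc) : ℕ), hu⟩ : Fin N) = vf i.castSucc := Fin.ext rfl
          have h2 : (⟨((vf i.succ) : ℕ), hv2⟩ : Fin N) = vf i.succ := Fin.ext rfl
          rw [h1, h2] at hadj
          exact hadj
        · intro i
          obtain ⟨hu, hv2, _, hcol⟩ := hP i
          have h1 : (⟨((vf i.castSucc) : ℕ), hu⟩ : Fin N) = vf i.castSucc := Fin.ext rfl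
          have h2 : (⟨((vf i.succ) : ℕ), hv2⟩ : Fin N) = vf i.succ := Fin.ext rfl
          rw [h1, h2] at hcol
          exact hcol
      obtain ⟨cc, hccr, hccard⟩ := pigeon (show 0 < r by omega) (redlen N R) hshort
      obtain ⟨lst, hcl, hml, hlenl⟩ := hEpath
        ((Finset.range N).filter (fun v => redlen N R v = cc))
        (by
          intro x hx
          rw [Finset.mem_filter, Finset.mem_range] at hx
          exact hx.1)
        hccard
      have hUN : ∀ x ∈ lst, x < N := by
        intro x hx
        have := hml x hx
        rw [Finset.mem_filter, Finset.mem_range] at this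
        exact this.1
      have hUc : ∀ x ∈ lst, redlen N R x = cc := by
        intro x hx
        have := hml x hx
        rw [Finset.mem_filter] at this
        exact this.2
      have hblue : lst.Chain' (fun a c => a < c ∧ ∃ (hu : a < N) (hv : c < N),
          H.Adj ⟨a, hu⟩ ⟨c, hv⟩ ∧ col ⟨a, hu⟩ ⟨c, hv⟩ = false) := by
        rw [List.Chain', List.isChain_iff_getElem] at hcl ⊢
        intro i hi
        obtain ⟨hlt, hE⟩ := hcl i hi
        have hg1 : lst.get ⟨i, by omega⟩ ∈ lst := lst.get_mem _
        have hg2 : lst.get ⟨i + 1, by omega⟩ ∈ lst := lst.get_mem _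
        have hx1 : lst.get ⟨i, by omega⟩ < N := hUN _ hg1
        have hx2 : lst.get ⟨i + 1, by omega⟩ < N := hUN _ hg2
        have hadj := hAdj _ _ hx1 hx2 hE
        refine ⟨hlt, hx1, hx2, hadj, ?_⟩
        by_contra hcol
        have hcol' : col ⟨_, hx1⟩ ⟨_, hx2⟩ = true := by
          cases h : col ⟨_, hx1⟩ ⟨_, hx2⟩
          · exact absurd h hcol
          · rfl
        have hRuv : R (lst.get ⟨i, by omega⟩) (lst.get ⟨i + 1, by omega⟩) := by
          rw [hRdef]
          exact ⟨hlt, hx1, hx2, hadj, hcol'⟩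
        have hlt2 := redlen_lt hRlt hx1 hx2 hRuv
        have hc1 := hUc _ hg1
        have hc2 := hUc _ hg2
        omega
      have hlen2 : (lst.take (s + 1)).length = s + 1 := by
        rw [List.length_take]
        omega
      obtain ⟨vf, hmono, hP⟩ := list_toVfun
        (fun a c => ∃ (hu : a < N) (hv : c < N),
          H.Adj ⟨a, hu⟩ ⟨c, hv⟩ ∧ col ⟨a, hu⟩ ⟨c, hv⟩ = false)
        (lst.take (s + 1)) hlen2
        (fun x hx => hUN x (List.take_subset _ _ hx)) (hblue.take _)
      refine ⟨vf, ⟨hmono, ?_⟩, ?_⟩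
      · intro i
        obtain ⟨hu, hv2, hadj, _⟩ := hP i
        have h1 : (⟨((vf i.castSucc) : ℕ), hu⟩ : Fin N) = vf i.castSucc := Fin.ext rfl
        have h2 : (⟨((vf i.succ) : ℕ), hv2⟩ : Fin N) = vf i.succ := Fin.ext rfl
        rw [h1, h2] at hadj
        exact hadj
      · intro i
        obtain ⟨hu, hv2, _, hcol⟩ := hP i
        have h1 : (⟨((vf i.castSucc) : ℕ), hu⟩ : Fin N) = vf i.castSucc := Fin.ext rfl
        have h2 : (⟨((vf i.succ) : ℕ), hv2⟩ : Fin N) = vf i.succ := Fin.ext rfl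
        rw [h1, h2] at hcol
        exact hcol
  obtain ⟨n, H, hcard, hprop⟩ := main
  refine ⟨⟨n, H, hcard, hprop⟩, ?_⟩
  have hmem : H.edgeSet.ncard ∈ { m | ∃ (n : ℕ) (G : SimpleGraph (Fin n)),
      G.edgeSet.ncard = m ∧
      ∀ col : Fin n → Fin n → Bool, HasPath G r col true ∨ HasPath G s col false } :=
    ⟨n, H, rfl, hprop⟩
  have h1 := Nat.sInf_le hmem
  calc (orderedSizeRamsey r s : ℝ) ≤ (H.edgeSet.ncard : ℝ) := by
        have : orderedSizeRamsey r s ≤ H.edgeSet.ncard := h1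
        exact_mod_cast this
    _ ≤ _ := hcard
end

section
/- There exists s₀ such that the following holds. Let t be a positive integer, s = 2^t with s ≥ s₀, let r be an integer with 2 ≤ r ≤ s, and set n = 4rs. Then for every integer i ≥ 0 with m_i := 2^{i+7}·r·t² ≤ n, there exists an ordered graph G_i on n vertices with at most 2·n·m_i·2^{-i} edges such that for any two disjoint vertex sets S₁, S₂ with |S₁| = |S₂| = 2^{i+3}·t and max{|u − v| : u ∈ S₁, v ∈ S₂} ≤ m_i, there is at least one edge of G_i with one endpoint in S₁ and one in S₂. -/
open Finset

section Aux

/-- counting functions with constrained values on a finset of inputs -/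
lemma count_filter_pi {α : Type*} [Fintype α] [DecidableEq α] {P : ℕ}
    (T : Finset α) (C : Finset (Fin P)) :
    (Finset.univ.filter fun f : α → Fin P => ∀ p ∈ T, f p ∈ C).card
      = C.card ^ T.card * P ^ (Fintype.card α - T.card) := by
  classical
  have h : (Finset.univ.filter fun f : α → Fin P => ∀ p ∈ T, f p ∈ C)
      = Fintype.piFinset (fun p => if p ∈ T then C else Finset.univ) := by
    ext f
    simp only [Finset.mem_filter, Finset.mem_univ, true_and, Fintype.mem_piFinset]
    constructor
    · intro h p
      by_cases hp : p ∈ T <;> simp [hp, h p]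
    · intro h p hp
      have := h p
      simpa [hp] using this
  rw [h, Fintype.card_piFinset, ← Finset.prod_sdiff (Finset.subset_univ T)]
  have h1 : ∏ p ∈ Finset.univ \ T, (if p ∈ T then C else (Finset.univ : Finset (Fin P))).card
      = P ^ (Fintype.card α - T.card) := by
    rw [Finset.prod_congr rfl (g := fun _ => P) (fun p hp => ?_), Finset.prod_const,
      Finset.card_sdiff_of_subset (Finset.subset_univ T), Finset.card_univ]
    have : p ∉ T := (Finset.mem_sdiff.mp hp).2
    simp [this]
  have h2 : ∏ p ∈ T, (if p ∈ T then C else (Finset.univ : Finset (Fin P))).card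
      = C.card ^ T.card := by
    rw [Finset.prod_congr rfl (g := fun _ => C.card) (fun p hp => by simp [hp]),
      Finset.prod_const]
  rw [h1, h2, mul_comm]

lemma binom_aux (a M : ℕ) : a ^ (M + 1) + (M + 1) * a ^ M ≤ (a + 1) ^ (M + 1) := by
  induction M with
  | zero => simp
  | succ M ih =>
    have h : (a + 1) ^ (M + 2) = (a + 1) * (a + 1) ^ (M + 1) := by ring
    have e1 : a ^ (M + 1) = a ^ M * a := by ring
    have e2 : a ^ (M + 2) = a ^ M * a * a := by ring
    calc a ^ (M + 2) + (M + 2) * a ^ (M + 1)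
        ≤ (a + 1) * (a ^ (M + 1) + (M + 1) * a ^ M) := by rw [e1, e2]; nlinarith [Nat.zero_le (a ^ M * M), Nat.zero_le (a ^ M)]
      _ ≤ (a + 1) * (a + 1) ^ (M + 1) := Nat.mul_le_mul_left _ ih
      _ = (a + 1) ^ (M + 2) := h.symm

lemma half_pow (P : ℕ) (hP : 1 ≤ P) : 2 * (P - 1) ^ P ≤ P ^ P := by
  obtain ⟨a, rfl⟩ : ∃ a, P = a + 1 := ⟨P - 1, by omega⟩
  have h1 := binom_aux a a
  have h2 : a ^ (a + 1) ≤ (a + 1) * a ^ a := by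
    calc a ^ (a + 1) = a * a ^ a := by ring
      _ ≤ (a + 1) * a ^ a := Nat.mul_le_mul_right _ (by omega)
  simpa using le_trans (by nlinarith) h1

end Aux

section Key

variable {N : ℕ}

/-- orders a pair of `Fin N` -/
def okey (u v : Fin N) : Fin N × Fin N := if u.val ≤ v.val then (u, v) else (v, u)

lemma okey_symm (u v : Fin N) : okey u v = okey v u := by
  unfold okey
  split_ifs with h1 h2 h2
  · have : u = v := Fin.ext (le_antisymm h1 h2)
    subst this; rfl
  · rfl
  · rfl
  · omega

/-- the random-ish graph: adjacency iff distinct, close, and the coloring vanishes -/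
def Gf (m P : ℕ) [NeZero P] (f : Fin N × Fin N → Fin P) : SimpleGraph (Fin N) where
  Adj u v := u ≠ v ∧ Nat.dist u.val v.val ≤ m ∧ f (okey u v) = 0
  symm := ⟨by
    rintro u v ⟨h1, h2, h3⟩
    exact ⟨h1.symm, by rwa [Nat.dist_comm], by rwa [okey_symm]⟩⟩
  loopless := ⟨fun u h => h.1 rfl⟩

end Key

set_option maxHeartbeats 1000000 in
theorem stmt_2 :
    ∃ s₀ : ℕ, ∀ t s r : ℕ, 0 < t → s = 2 ^ t → s₀ ≤ s → 2 ≤ r → r ≤ s →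
      ∀ i : ℕ, 2 ^ (i + 7) * r * t ^ 2 ≤ 4 * r * s →
        ∃ G : SimpleGraph (Fin (4 * r * s)),
          (G.edgeSet.ncard : ℝ) ≤
            2 * (4 * r * s : ℝ) * (2 ^ (i + 7) * r * t ^ 2 : ℝ) * (2 : ℝ) ^ (-(i : ℤ)) ∧
          ∀ S₁ S₂ : Finset (Fin (4 * r * s)), Disjoint S₁ S₂ →
            S₁.card = 2 ^ (i + 3) * t → S₂.card = 2 ^ (i + 3) * t →
            (∀ u ∈ S₁, ∀ v ∈ S₂, Nat.dist u.val v.val ≤ 2 ^ (i + 7) * r * t ^ 2) →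
            ∃ u ∈ S₁, ∃ v ∈ S₂, G.Adj u v := by
  classical
  use 4
  intro t s r ht hs hs0 hr2 hrs i hm
  -- basic parameters
  set n : ℕ := 4 * r * s with hn_def
  set m : ℕ := 2 ^ (i + 7) * r * t ^ 2 with hm_def
  set k : ℕ := 2 ^ (i + 3) * t with hk_def
  set P : ℕ := 2 ^ i with hP_def
  haveI : NeZero P := ⟨by positivity⟩
  have ht2 : 2 ≤ t := by
    by_contra h
    interval_cases t <;> omega
  have hspos : 0 < s := by positivity
  have hnpos : 0 < n := by positivity
  have hmpos : 0 < m := by positivity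

  have hPpos : 0 < P := by positivity
  -- derived size facts
  have hst : 2 ^ (i + 5) * t ^ 2 ≤ 2 ^ t := by
    have h1 : 4 * r * (2 ^ (i + 5) * t ^ 2) ≤ 4 * r * 2 ^ t := by
      calc 4 * r * (2 ^ (i + 5) * t ^ 2) = 2 ^ (i + 7) * r * t ^ 2 := by ring
        _ ≤ 4 * r * s := hm
        _ = 4 * r * 2 ^ t := by rw [hs]
    exact Nat.le_of_mul_le_mul_left h1 (by positivity)
  have hkn : k ≤ n := by
    have h1 : k ≤ 2 ^ (i + 5) * t ^ 2 := by
      rw [hk_def]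
      calc 2 ^ (i + 3) * t ≤ 2 ^ (i + 5) * t := by
            exact Nat.mul_le_mul_right _ (Nat.pow_le_pow_right (by norm_num) (by omega))
        _ ≤ 2 ^ (i + 5) * t ^ 2 := Nat.mul_le_mul_left _ (by nlinarith)
    calc k ≤ 2 ^ t := h1.trans hst
      _ = s := hs.symm
      _ ≤ 4 * r * s := by nlinarith
  have hkpos : 0 < k := by positivity
  -- the probability space
  set D : ℕ := Fintype.card (Fin n × Fin n) with hD_def
  have hD : D = n * n := by simp [hD_def]
  have hDpos : 0 < D := by nlinarith
  have hk2D : k ^ 2 ≤ D := by rw [hD]; nlinarith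
  clear_value n m k P D
  -- admissible pairs, candidates, bad pairs
  set Adm : Finset (Fin n × Fin n) :=
    Finset.univ.filter (fun p => p.1.val < p.2.val ∧ Nat.dist p.1.val p.2.val ≤ m) with hAdm_def
  set A : (Fin n × Fin n → Fin P) → Finset (Fin n × Fin n) :=
    fun f => Adm.filter (fun p => f p = 0) with hA_def
  set Cand : Finset (Finset (Fin n) × Finset (Fin n)) :=
    Finset.univ.filter (fun S => Disjoint S.1 S.2 ∧ S.1.card = k ∧ S.2.card = k ∧
      ∀ u ∈ S.1, ∀ v ∈ S.2, Nat.dist u.val v.val ≤ m) with hCand_def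
  set Bad : (Fin n × Fin n → Fin P) → Finset (Finset (Fin n) × Finset (Fin n)) :=
    fun f => Cand.filter (fun S => ∀ u ∈ S.1, ∀ v ∈ S.2, f (okey u v) ≠ 0) with hBad_def
  -- sum of |A f|
  have hsumA : ∑ f : Fin n × Fin n → Fin P, (A f).card = Adm.card * P ^ (D - 1) := by
    have h1 : ∀ f : Fin n × Fin n → Fin P, (A f).card = ∑ p ∈ Adm, if f p = 0 then 1 else 0 :=
      fun f => Finset.card_filter _ _
    rw [Finset.sum_congr rfl (fun f _ => h1 f), Finset.sum_comm]
    have h2 : ∀ p : Fin n × Fin n,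
        (∑ f : Fin n × Fin n → Fin P, if f p = 0 then (1 : ℕ) else 0) = P ^ (D - 1) := by
      intro p
      rw [← Finset.card_filter]
      have h3 : (Finset.univ.filter (fun f : Fin n × Fin n → Fin P => f p = 0))
          = Finset.univ.filter
            (fun f : Fin n × Fin n → Fin P => ∀ q ∈ ({p} : Finset (Fin n × Fin n)),
              f q ∈ ({0} : Finset (Fin P))) := by
        apply Finset.filter_congr
        intro f _
        simp
      rw [h3, count_filter_pi, ← hD_def]
      simp
    rw [Finset.sum_congr rfl (fun p _ => h2 p), Finset.sum_const, smul_eq_mul]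
  -- per-candidate bad count
  have hsumBad : ∑ f : Fin n × Fin n → Fin P, (Bad f).card
      ≤ Cand.card * ((P - 1) ^ (k ^ 2) * P ^ (D - k ^ 2)) := by
    have h1 : ∀ f : Fin n × Fin n → Fin P, (Bad f).card
        = ∑ S ∈ Cand, if (∀ u ∈ S.1, ∀ v ∈ S.2, f (okey u v) ≠ 0) then 1 else 0 :=
      fun f => Finset.card_filter _ _
    rw [Finset.sum_congr rfl (fun f _ => h1 f), Finset.sum_comm]
    have h2 : ∀ S ∈ Cand,
        (∑ f : Fin n × Fin n → Fin P,
          if (∀ u ∈ S.1, ∀ v ∈ S.2, f (okey u v) ≠ 0) then (1 : ℕ) else 0)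
        ≤ (P - 1) ^ (k ^ 2) * P ^ (D - k ^ 2) := by
      intro S hS
      rw [hCand_def] at hS
      obtain ⟨-, hSdisj, hS1, hS2, -⟩ := Finset.mem_filter.mp hS
      set T : Finset (Fin n × Fin n) := (S.1 ×ˢ S.2).image (fun q => okey q.1 q.2) with hT_def
      have hTcond : ∀ f : Fin n × Fin n → Fin P,
          (∀ u ∈ S.1, ∀ v ∈ S.2, f (okey u v) ≠ 0) ↔ (∀ p ∈ T, f p ∈ Finset.univ.filter (fun x : Fin P => x ≠ 0)) := by
        intro f
        rw [hT_def]
        simp only [Finset.forall_mem_image, Finset.mem_product, Finset.mem_filter,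
          Finset.mem_univ, true_and, Prod.forall]
        constructor
        · rintro h a b ⟨ha, hb⟩; exact h a ha b hb
        · intro h a ha b hb; exact h a b ⟨ha, hb⟩
      have hTcard : T.card = k ^ 2 := by
        rw [hT_def, Finset.card_image_of_injOn, Finset.card_product, hS1, hS2, sq]
        intro q hq q' hq' heq
        rw [Finset.mem_coe, Finset.mem_product] at hq hq'
        obtain ⟨u, v⟩ := q
        obtain ⟨u', v'⟩ := q'
        have hd : ∀ a b : Fin n, a ∈ S.1 → b ∈ S.2 → a ≠ b := by
          rintro a b ha hb rfl
          exact (Finset.disjoint_left.mp hSdisj ha) hb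
        unfold okey at heq
        dsimp only at heq
        split_ifs at heq with h1 h2 h2 <;>
          simp only [Prod.mk.injEq] at heq ⊢
        · exact heq
        · exact absurd heq.1 (hd u v' hq.1 hq'.2)
        · exact absurd heq.1.symm (hd u' v hq'.1 hq.2)
        · exact ⟨heq.2, heq.1⟩
      have hcount : (∑ f : Fin n × Fin n → Fin P,
          if (∀ u ∈ S.1, ∀ v ∈ S.2, f (okey u v) ≠ 0) then (1 : ℕ) else 0)
          = (P - 1) ^ (k ^ 2) * P ^ (D - k ^ 2) := by
        rw [← Finset.card_filter]
        have h3 : (Finset.univ.filter (fun f : Fin n × Fin n → Fin P => ∀ u ∈ S.1, ∀ v ∈ S.2, f (okey u v) ≠ 0))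
            = Finset.univ.filter (fun f : Fin n × Fin n → Fin P =>
                ∀ p ∈ T, f p ∈ Finset.univ.filter (fun x : Fin P => x ≠ 0)) :=
          Finset.filter_congr (fun f _ => by rw [hTcond f])
        rw [h3, count_filter_pi, ← hD_def, hTcard]
        congr 1
        rw [Finset.filter_ne' Finset.univ (0 : Fin P), Finset.card_erase_of_mem (Finset.mem_univ _),
          Finset.card_univ, Fintype.card_fin]
      exact le_of_eq hcount
    calc (∑ S ∈ Cand, ∑ f : Fin n × Fin n → Fin P,
          if (∀ u ∈ S.1, ∀ v ∈ S.2, f (okey u v) ≠ 0) then (1 : ℕ) else 0)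
        ≤ ∑ _S ∈ Cand, (P - 1) ^ (k ^ 2) * P ^ (D - k ^ 2) := Finset.sum_le_sum h2
      _ = Cand.card * ((P - 1) ^ (k ^ 2) * P ^ (D - k ^ 2)) := by
          rw [Finset.sum_const, smul_eq_mul]
    -- bound on number of candidates
  have hCandcard : Cand.card ≤ n ^ k * n ^ k := by
    have hsub : Cand ⊆ (Finset.univ.powersetCard k) ×ˢ (Finset.univ.powersetCard k) := by
      intro S hS
      rw [hCand_def] at hS
      obtain ⟨-, -, hS1, hS2, -⟩ := Finset.mem_filter.mp hS
      rw [Finset.mem_product]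
      exact ⟨Finset.mem_powersetCard_univ.mpr hS1, Finset.mem_powersetCard_univ.mpr hS2⟩
    calc Cand.card ≤ ((Finset.univ.powersetCard k) ×ˢ (Finset.univ.powersetCard k)).card :=
          Finset.card_le_card hsub
      _ = n.choose k * n.choose k := by
          rw [Finset.card_product, Finset.card_powersetCard, Finset.card_univ, Fintype.card_fin]
      _ ≤ n ^ k * n ^ k := Nat.mul_le_mul (Nat.choose_le_pow n k) (Nat.choose_le_pow n k)
  -- bound on number of admissible pairs
  have hAdmcard : Adm.card ≤ n * m := by
    have hle := Finset.card_le_card_of_injOn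
      (f := fun p : Fin n × Fin n => (p.1, (⟨(p.2.val - p.1.val - 1) % m, Nat.mod_lt _ hmpos⟩ : Fin m)))
      (s := Adm) (t := Finset.univ) (fun a _ => Finset.mem_univ _) ?_
    · calc Adm.card ≤ (Finset.univ : Finset (Fin n × Fin m)).card := hle
        _ = n * m := by rw [Finset.card_univ, Fintype.card_prod, Fintype.card_fin, Fintype.card_fin]
    · intro p hp q hq heq
      dsimp only at heq
      rw [Finset.mem_coe, hAdm_def, Finset.mem_filter] at hp hq
      obtain ⟨-, hp1, hp2⟩ := hp
      obtain ⟨-, hq1, hq2⟩ := hq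
      simp only [Nat.dist] at hp2 hq2
      injection heq with h1 h2'
      have h2 := congrArg Fin.val h2'
      dsimp only at h2
      rw [Nat.mod_eq_of_lt (by omega), Nat.mod_eq_of_lt (by omega)] at h2
      have h3 : p.1.val = q.1.val := congrArg Fin.val h1
      have h4 : p.2 = q.2 := Fin.ext (by omega)
      exact Prod.ext h1 h4
  clear_value Adm A Cand Bad
  -- the key numeric inequality
  have hkey : 2 * ((n ^ k * n ^ k) * (P - 1) ^ (k ^ 2)) < P ^ (k ^ 2) := by
    rcases Nat.eq_zero_or_pos i with hi | hi
    · have hP1 : P = 1 := by rw [hP_def, hi, pow_zero]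
      have : P - 1 = 0 := by omega
      rw [this, zero_pow (by positivity), hP1, one_pow]
      simp
    · have hP2 : 2 ≤ P := by
        rw [hP_def]
        calc 2 = 2 ^ 1 := (pow_one 2).symm
          _ ≤ 2 ^ i := Nat.pow_le_pow_right (by norm_num) hi
      set K : ℕ := 2 ^ (i + 6) * t ^ 2 with hK_def
      have hkK : k ^ 2 = P * K := by
        have he : (i + 3) * 2 = i + (i + 6) := by ring
        rw [hk_def, hP_def, hK_def, mul_pow, ← pow_mul, he, pow_add, mul_assoc]
      have hnle : n ≤ 2 ^ (2 * t + 2) := by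
        have h4 : (4 : ℕ) = 2 ^ 2 := by norm_num
        calc n = 4 * r * s := hn_def
          _ ≤ 4 * s * s := by gcongr
          _ = 2 ^ (2 * t + 2) := by
              rw [hs, h4, ← pow_add, ← pow_add]
              congr 1
              ring
      have hexp : 2 + 2 * k * (2 * t + 2) ≤ K := by
        set E : ℕ := 2 ^ (i + 4) with hE_def
        have hE1 : 1 ≤ E := Nat.one_le_two_pow
        have hE2 : E = 2 * 2 ^ (i + 3) := by rw [hE_def, pow_succ, mul_comm]
        have hKE : K = E * (4 * t ^ 2) := by
          rw [hK_def, hE_def, show i + 6 = (i + 4) + 2 by ring, pow_add]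
          ring
        calc 2 + 2 * k * (2 * t + 2) = 2 + E * (t * (2 * t + 2)) := by rw [hk_def, hE2]; ring
          _ ≤ E * 2 + E * (t * (2 * t + 2)) := by nlinarith
          _ = E * (2 + t * (2 * t + 2)) := by ring
          _ ≤ E * (4 * t ^ 2) := Nat.mul_le_mul_left _ (by nlinarith)
          _ = K := hKE.symm
      have hX : 0 < (n ^ k * n ^ k) * (P - 1) ^ (k ^ 2) := by
        exact Nat.mul_pos (Nat.mul_pos (pow_pos hnpos _) (pow_pos hnpos _))
          (pow_pos (show 0 < P - 1 by omega) _)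
      calc 2 * ((n ^ k * n ^ k) * (P - 1) ^ (k ^ 2))
          < 4 * ((n ^ k * n ^ k) * (P - 1) ^ (k ^ 2)) := by omega
        _ = (4 * (n ^ k * n ^ k)) * (P - 1) ^ (k ^ 2) := by ring
        _ ≤ (2 ^ (2 + 2 * k * (2 * t + 2))) * (P - 1) ^ (k ^ 2) := by
            have h1 : n ^ k ≤ 2 ^ ((2 * t + 2) * k) := by
              rw [pow_mul]
              exact Nat.pow_le_pow_left hnle k
            have h2 : 4 * (n ^ k * n ^ k) ≤ 2 ^ 2 * (2 ^ ((2 * t + 2) * k) * 2 ^ ((2 * t + 2) * k)) := by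
              have := Nat.mul_le_mul h1 h1
              calc 4 * (n ^ k * n ^ k) = 2 ^ 2 * (n ^ k * n ^ k) := by norm_num
                _ ≤ 2 ^ 2 * (2 ^ ((2 * t + 2) * k) * 2 ^ ((2 * t + 2) * k)) :=
                    Nat.mul_le_mul_left _ this
            have h3 : (2 : ℕ) ^ 2 * (2 ^ ((2 * t + 2) * k) * 2 ^ ((2 * t + 2) * k))
                = 2 ^ (2 + 2 * k * (2 * t + 2)) := by
              rw [← pow_add, ← pow_add]
              congr 1
              ring
            exact Nat.mul_le_mul_right _ (h3 ▸ h2)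
        _ ≤ 2 ^ K * (P - 1) ^ (k ^ 2) :=
            Nat.mul_le_mul_right _ (Nat.pow_le_pow_right (by norm_num) hexp)
        _ = (2 * (P - 1) ^ P) ^ K := by
            rw [mul_pow, ← pow_mul, ← hkK]
        _ ≤ (P ^ P) ^ K := Nat.pow_le_pow_left (half_pow P (by omega)) K
        _ = P ^ (k ^ 2) := by rw [← pow_mul, ← hkK]
    -- the master averaging inequality
  have hΩ : Fintype.card (Fin n × Fin n → Fin P) = P ^ D := by
    rw [Fintype.card_fun, Fintype.card_fin, hD_def]
  have hmain : ∑ f : Fin n × Fin n → Fin P, (P * (A f).card + (2 * n * m) * (Bad f).card)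
      < ∑ _f : Fin n × Fin n → Fin P, 2 * n * m := by
    rw [Finset.sum_add_distrib, ← Finset.mul_sum, ← Finset.mul_sum, hsumA,
      Finset.sum_const, Finset.card_univ, hΩ, smul_eq_mul]
    have hPD : P * P ^ (D - 1) = P ^ D := by
      rw [← pow_succ']
      congr 1
      omega
    have hstep1 : P * (Adm.card * P ^ (D - 1)) ≤ (n * m) * P ^ D := by
      calc P * (Adm.card * P ^ (D - 1)) = Adm.card * (P * P ^ (D - 1)) := by ring
        _ = Adm.card * P ^ D := by rw [hPD]
        _ ≤ (n * m) * P ^ D := Nat.mul_le_mul_right _ hAdmcard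
    have hstep2 : (2 * n * m) * (∑ f : Fin n × Fin n → Fin P, (Bad f).card) < (n * m) * P ^ D := by
      have h4 : P ^ (k ^ 2) * P ^ (D - k ^ 2) = P ^ D := by
        rw [← pow_add]
        congr 1
        omega
      have h3 : 2 * ((n ^ k * n ^ k) * (P - 1) ^ (k ^ 2)) * P ^ (D - k ^ 2) < P ^ D := by
        rw [← h4]
        exact mul_lt_mul_of_pos_right hkey (pow_pos hPpos _)
      calc (2 * n * m) * (∑ f : Fin n × Fin n → Fin P, (Bad f).card)
          ≤ (2 * n * m) * (Cand.card * ((P - 1) ^ (k ^ 2) * P ^ (D - k ^ 2))) :=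
            Nat.mul_le_mul_left _ hsumBad
        _ ≤ (2 * n * m) * ((n ^ k * n ^ k) * ((P - 1) ^ (k ^ 2) * P ^ (D - k ^ 2))) :=
            Nat.mul_le_mul_left _ (Nat.mul_le_mul_right _ hCandcard)
        _ = (n * m) * (2 * ((n ^ k * n ^ k) * (P - 1) ^ (k ^ 2)) * P ^ (D - k ^ 2)) := by ring
        _ < (n * m) * P ^ D := by
            have hnm : 0 < n * m := Nat.mul_pos hnpos hmpos
            exact mul_lt_mul_of_pos_left h3 hnm
    calc P * (Adm.card * P ^ (D - 1)) + (2 * n * m) * (∑ f : Fin n × Fin n → Fin P, (Bad f).card)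
        < (n * m) * P ^ D + (n * m) * P ^ D := Nat.add_lt_add_of_le_of_lt hstep1 hstep2
      _ = P ^ D * (2 * n * m) := by ring
  obtain ⟨f, -, hWf⟩ := Finset.exists_lt_of_sum_lt hmain
  have hAf : P * (A f).card < 2 * n * m := lt_of_le_of_lt (Nat.le_add_right _ _) hWf
  have hBad0 : Bad f = ∅ := by
    rcases Finset.eq_empty_or_nonempty (Bad f) with h | h
    · exact h
    · exfalso
      have h1 : 1 ≤ (Bad f).card := Finset.card_pos.mpr h
      have h2 : 2 * n * m * 1 ≤ (2 * n * m) * (Bad f).card := Nat.mul_le_mul_left _ h1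
      omega
  refine ⟨Gf m P f, ?_, ?_⟩
  · -- edge count bound
    have hedge : (Gf m P f).edgeSet.ncard ≤ (A f).card := by
      have hmem : ∀ e ∈ (Gf m P f).edgeSet,
          Sym2.lift ⟨okey, okey_symm⟩ e ∈ (↑(A f) : Set (Fin n × Fin n)) := by
        intro e he
        induction e using Sym2.ind with
        | _ u v =>
          rw [SimpleGraph.mem_edgeSet] at he
          obtain ⟨hne, hd, hf0⟩ := (he : u ≠ v ∧ Nat.dist u.val v.val ≤ m ∧ f (okey u v) = 0)
          have hval : u.val ≠ v.val := fun h => hne (Fin.ext h)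
          have hl : Sym2.lift ⟨okey, okey_symm⟩ s(u, v) = okey u v := rfl
          rw [hl, Finset.mem_coe, hA_def]
          refine Finset.mem_filter.mpr ⟨?_, hf0⟩
          rw [hAdm_def]
          unfold okey
          split_ifs with h
          · refine Finset.mem_filter.mpr ⟨Finset.mem_univ _, ?_, hd⟩
            show u.val < v.val
            omega
          · refine Finset.mem_filter.mpr ⟨Finset.mem_univ _, ?_, ?_⟩
            · show v.val < u.val
              omega
            · show Nat.dist v.val u.val ≤ m
              rwa [Nat.dist_comm]
      have hinj : Set.InjOn (Sym2.lift ⟨okey, okey_symm⟩) (Gf m P f).edgeSet := by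
        intro e1 h1 e2 h2 heq
        clear h1 h2
        revert heq
        induction e1, e2 using Sym2.inductionOn₂ with
        | _ a b c d =>
          intro heq
          have hl : ∀ x y : Fin n, Sym2.lift ⟨okey, okey_symm⟩ s(x, y) = okey x y := fun _ _ => rfl
          rw [hl, hl] at heq
          rw [Sym2.eq_iff]
          unfold okey at heq
          split_ifs at heq <;> (injection heq with hx hy) <;> tauto
      have h := Set.ncard_le_ncard_of_injOn (Sym2.lift ⟨okey, okey_symm⟩) hmem hinj
        ((A f).finite_toSet)
      rwa [Set.ncard_coe_finset] at h
    have hcast : ((Gf m P f).edgeSet.ncard : ℝ) ≤ ((2 * n * m : ℕ) : ℝ) / (P : ℝ) := by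
      rw [le_div_iff₀ (by positivity : (0 : ℝ) < (P : ℝ))]
      calc ((Gf m P f).edgeSet.ncard : ℝ) * P ≤ ((A f).card : ℝ) * P := by
            have hc : ((Gf m P f).edgeSet.ncard : ℝ) ≤ ((A f).card : ℝ) := by
              exact_mod_cast hedge
            exact mul_le_mul_of_nonneg_right hc (by positivity)
        _ ≤ ((2 * n * m : ℕ) : ℝ) := by
            rw [mul_comm]
            exact_mod_cast le_of_lt hAf
    calc ((Gf m P f).edgeSet.ncard : ℝ) ≤ ((2 * n * m : ℕ) : ℝ) / (P : ℝ) := hcast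
      _ = 2 * (4 * r * s : ℝ) * (2 ^ (i + 7) * r * t ^ 2 : ℝ) * (2 : ℝ) ^ (-(i : ℤ)) := by
          rw [hn_def, hm_def, hP_def, zpow_neg, zpow_natCast]
          push_cast
          ring
  · -- covering property
    intro S₁ S₂ hdisj hc1 hc2 hdist
    by_contra hcon
    push_neg at hcon
    have hmemc : (S₁, S₂) ∈ Cand := by
      rw [hCand_def]
      exact Finset.mem_filter.mpr ⟨Finset.mem_univ _, hdisj, hc1, hc2, hdist⟩
    have hbad : (S₁, S₂) ∈ Bad f := by
      rw [hBad_def]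
      refine Finset.mem_filter.mpr ⟨hmemc, ?_⟩
      intro u hu v hv hf0
      have hne : u ≠ v := by
        rintro rfl
        exact (Finset.disjoint_left.mp hdisj hu) hv
      exact hcon u hu v hv (show u ≠ v ∧ Nat.dist u.val v.val ≤ m ∧ f (okey u v) = 0 from ⟨hne, hdist u hu v hv, hf0⟩)
    rw [hBad0] at hbad
    exact absurd hbad (Finset.notMem_empty _)
end

section
/- Let n, m, ℓ be positive integers and let p ∈ (0, 1] be a real number satisfying C(n, ℓ)² · (1 − p)^{ℓ²} < 1/2, where C(n, ℓ) denotes the binomial coefficient. Then there exists an ordered graph G on n vertices with at most 2·n·m·p edges such that for any two disjoint vertex sets S₁, S₂ with |S₁| = |S₂| = ℓ and max{|u − v| : u ∈ S₁, v ∈ S₂} ≤ m, there is at least one edge of G with one endpoint in S₁ and one in S₂. -/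
open Finset
lemma L1 {α : Type*} [DecidableEq α] (s : Finset α) (x y : ℝ) :
    ∑ A ∈ s.powerset, x ^ A.card * y ^ (s.card - A.card) = (x + y) ^ s.card := by
  rw [← Finset.prod_const, Finset.prod_add]
  refine Finset.sum_congr rfl fun A hA => ?_
  rw [Finset.prod_const, Finset.prod_const, Finset.card_sdiff_of_subset (Finset.mem_powerset.mp hA)]

lemma L3 {α : Type*} [DecidableEq α] (s X : Finset α) (hX : X ⊆ s) (x y : ℝ) (hxy : x + y = 1) :
    ∑ A ∈ s.powerset.filter (fun A => Disjoint A X), x ^ A.card * y ^ (s.card - A.card)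
      = y ^ X.card := by
  have hset : s.powerset.filter (fun A => Disjoint A X) = (s \ X).powerset := by
    ext A
    simp [Finset.subset_sdiff, and_comm]
  rw [hset]
  have hc : (s \ X).card = s.card - X.card := Finset.card_sdiff_of_subset hX
  have : ∀ A ∈ (s \ X).powerset, x ^ A.card * y ^ (s.card - A.card)
      = y ^ X.card * (x ^ A.card * y ^ ((s \ X).card - A.card)) := by
    intro A hA
    have hAc : A.card ≤ (s \ X).card := Finset.card_le_card (Finset.mem_powerset.mp hA)
    have : s.card - A.card = X.card + ((s \ X).card - A.card) := by
      have := Finset.card_le_card hX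
      omega
    rw [this, pow_add]; ring
  rw [Finset.sum_congr rfl this, ← Finset.mul_sum, L1, hxy, one_pow, mul_one]

lemma L2 {α : Type*} [DecidableEq α] (s : Finset α) (x y : ℝ) (hxy : x + y = 1) :
    ∑ A ∈ s.powerset, x ^ A.card * y ^ (s.card - A.card) * A.card = x * s.card := by
  have step1 : ∀ A ∈ s.powerset, x ^ A.card * y ^ (s.card - A.card) * A.card
      = ∑ e ∈ s, (if e ∈ A then x ^ A.card * y ^ (s.card - A.card) else 0) := by
    intro A hA
    rw [Finset.sum_ite_mem, Finset.inter_eq_right.mpr (Finset.mem_powerset.mp hA),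
      Finset.sum_const, nsmul_eq_mul, mul_comm]
  rw [Finset.sum_congr rfl step1, Finset.sum_comm]
  have inner : ∀ e ∈ s, ∑ A ∈ s.powerset, (if e ∈ A then x ^ A.card * y ^ (s.card - A.card) else 0) = x := by
    intro e he
    rw [Finset.sum_ite, Finset.sum_const, smul_zero, add_zero]
    have hb : ∑ A ∈ s.powerset.filter (fun A => e ∈ A), x ^ A.card * y ^ (s.card - A.card)
        = ∑ B ∈ (s.erase e).powerset, x * (x ^ B.card * y ^ ((s.erase e).card - B.card)) := by
      refine Finset.sum_nbij' (fun A => A.erase e) (fun B => insert e B) ?_ ?_ ?_ ?_ ?_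
      · intro A hA
        simp only [Finset.mem_filter, Finset.mem_powerset] at hA
        exact Finset.mem_powerset.mpr (Finset.erase_subset_erase e hA.1)
      · intro B hB
        simp only [Finset.mem_powerset] at hB
        simp only [Finset.mem_filter, Finset.mem_powerset]
        exact ⟨Finset.insert_subset (by exact he) (hB.trans (Finset.erase_subset e s)),
          Finset.mem_insert_self e B⟩
      · intro A hA
        simp only [Finset.mem_filter] at hA
        exact Finset.insert_erase hA.2
      · intro B hB
        simp only [Finset.mem_powerset] at hB
        exact Finset.erase_insert (fun hc => (Finset.notMem_erase e s) (hB hc))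
      · intro A hA
        simp only [Finset.mem_filter, Finset.mem_powerset] at hA
        have h1 : 1 ≤ A.card := Finset.card_pos.mpr ⟨e, hA.2⟩
        have h2 : A.card ≤ s.card := Finset.card_le_card hA.1
        have h3 : (A.erase e).card = A.card - 1 := Finset.card_erase_of_mem hA.2
        have h4 : (s.erase e).card = s.card - 1 := Finset.card_erase_of_mem he
        obtain ⟨a, ha⟩ : ∃ a, A.card = a + 1 := ⟨A.card - 1, by omega⟩
        rw [h3, h4, ha, show a + 1 - 1 = a by omega, show s.card - (a + 1) = s.card - 1 - a by omega, pow_succ]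
        ring
    rw [hb, ← Finset.mul_sum, L1, hxy, one_pow, mul_one]
  rw [Finset.sum_congr rfl inner, Finset.sum_const, nsmul_eq_mul, mul_comm]

def Ew (n m : ℕ) : Finset (Sym2 (Fin n)) :=
  ((Finset.univ : Finset (Fin n × Fin n)).filter
    fun q => q.1.val < q.2.val ∧ q.2.val - q.1.val ≤ m).image fun q => s(q.1, q.2)

def PR (n m ℓ : ℕ) : Finset (Finset (Fin n) × Finset (Fin n)) :=
  ((Finset.univ.powersetCard ℓ) ×ˢ (Finset.univ.powersetCard ℓ)).filter
    fun q => Disjoint q.1 q.2 ∧ ∀ u ∈ q.1, ∀ v ∈ q.2, Nat.dist u.val v.val ≤ m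

def XS {n : ℕ} (q : Finset (Fin n) × Finset (Fin n)) : Finset (Sym2 (Fin n)) :=
  (q.1 ×ˢ q.2).image fun uv => s(uv.1, uv.2)

lemma Ew_card (n m : ℕ) (hm : 0 < m) : (Ew n m).card ≤ n * m := by
  classical
  refine le_trans (Finset.card_image_le) ?_
  have h2 : (((Finset.univ : Finset (Fin n × Fin n))).filter
      (fun q => q.1.val < q.2.val ∧ q.2.val - q.1.val ≤ m)).card
      ≤ (Finset.univ : Finset (Fin n × Fin m)).card := by
    apply Finset.card_le_card_of_injOn
      (fun q => (q.1, ⟨min (q.2.val - q.1.val - 1) (m - 1), by omega⟩))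
      (fun _ _ => Finset.mem_univ _)
    intro q hq r hr heq
    simp only [Finset.coe_filter, Set.mem_setOf_eq, Finset.mem_univ, true_and] at hq hr
    simp only [Prod.mk.injEq, Fin.mk.injEq] at heq
    obtain ⟨h1, h2⟩ := heq
    have h1v : q.1.val = r.1.val := congrArg Fin.val h1
    have h3 : q.2 = r.2 := Fin.ext (by omega)
    exact Prod.ext h1 h3
  simpa using h2

lemma Ew_nondiag {n m : ℕ} {e : Sym2 (Fin n)} (he : e ∈ Ew n m) : ¬ e.IsDiag := by
  simp only [Ew, Finset.mem_image, Finset.mem_filter, Finset.mem_univ, true_and] at he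
  obtain ⟨q, ⟨hlt, -⟩, rfl⟩ := he
  simp only [Sym2.isDiag_iff_proj_eq]
  intro h
  rw [h] at hlt
  omega

lemma mem_Ew {n m : ℕ} {u v : Fin n} (huv : u ≠ v) (hd : Nat.dist u.val v.val ≤ m) :
    s(u, v) ∈ Ew n m := by
  have hdist : Nat.dist u.val v.val = u.val - v.val + (v.val - u.val) := rfl
  rcases lt_or_gt_of_ne (fun h : u.val = v.val => huv (Fin.ext h)) with h | h
  · exact Finset.mem_image.mpr ⟨(u, v), Finset.mem_filter.mpr ⟨Finset.mem_univ _,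
      show u.val < v.val from h, show v.val - u.val ≤ m by omega⟩, rfl⟩
  · exact Finset.mem_image.mpr ⟨(v, u), Finset.mem_filter.mpr ⟨Finset.mem_univ _,
      show v.val < u.val from h, show u.val - v.val ≤ m by omega⟩,
      Sym2.eq_swap⟩

lemma PR_spec {n m ℓ : ℕ} {q : Finset (Fin n) × Finset (Fin n)} (hq : q ∈ PR n m ℓ) :
    q.1.card = ℓ ∧ q.2.card = ℓ ∧ Disjoint q.1 q.2 ∧
      ∀ u ∈ q.1, ∀ v ∈ q.2, Nat.dist u.val v.val ≤ m := by
  simp only [PR, Finset.mem_filter, Finset.mem_product, Finset.mem_powersetCard_univ] at hq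
  exact ⟨hq.1.1, hq.1.2, hq.2.1, hq.2.2⟩

lemma XS_subset {n m ℓ : ℕ} {q : Finset (Fin n) × Finset (Fin n)} (hq : q ∈ PR n m ℓ) :
    XS q ⊆ Ew n m := by
  obtain ⟨-, -, hdisj, hdist⟩ := PR_spec hq
  intro e he
  simp only [XS, Finset.mem_image, Finset.mem_product] at he
  obtain ⟨⟨u, v⟩, ⟨hu, hv⟩, rfl⟩ := he
  exact mem_Ew (fun h => Finset.disjoint_left.mp hdisj hu (h ▸ hv)) (hdist u hu v hv)

lemma XS_card {n m ℓ : ℕ} {q : Finset (Fin n) × Finset (Fin n)} (hq : q ∈ PR n m ℓ) :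
    (XS q).card = ℓ ^ 2 := by
  obtain ⟨h1, h2, hdisj, -⟩ := PR_spec hq
  rw [XS, Finset.card_image_of_injOn, Finset.card_product, h1, h2, sq]
  intro a ha b hb heq
  simp only [Finset.mem_coe, Finset.mem_product] at ha hb
  rw [Sym2.eq_iff] at heq
  rcases heq with ⟨hx, hy⟩ | ⟨hx, hy⟩
  · exact Prod.ext hx hy
  · exact absurd (hx ▸ hb.2) (Finset.disjoint_left.mp hdisj ha.1)

lemma PR_card {n m ℓ : ℕ} : (PR n m ℓ).card ≤ (n.choose ℓ) ^ 2 := by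
  refine le_trans (Finset.card_filter_le _ _) ?_
  rw [Finset.card_product, Finset.card_powersetCard, Finset.card_univ, Fintype.card_fin, sq]

theorem stmt_3 (n m ℓ : ℕ) (hn : 0 < n) (hm : 0 < m) (hℓ : 0 < ℓ)
    (p : ℝ) (hp0 : 0 < p) (hp1 : p ≤ 1)
    (hmoment : (n.choose ℓ : ℝ) ^ 2 * (1 - p) ^ (ℓ ^ 2) < 1 / 2) :
    ∃ G : SimpleGraph (Fin n),
      (G.edgeSet.ncard : ℝ) ≤ 2 * (n : ℝ) * (m : ℝ) * p ∧
      ∀ S₁ S₂ : Finset (Fin n), Disjoint S₁ S₂ →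
        S₁.card = ℓ → S₂.card = ℓ →
        (∀ u ∈ S₁, ∀ v ∈ S₂, Nat.dist u.val v.val ≤ m) →
        ∃ u ∈ S₁, ∃ v ∈ S₂, G.Adj u v := by
  classical
  set E := Ew n m with hE
  set w : Finset (Sym2 (Fin n)) → ℝ := fun A => p ^ A.card * (1 - p) ^ (E.card - A.card) with hw
  have hq1 : (0:ℝ) ≤ 1 - p := by linarith
  have hw0 : ∀ A, 0 ≤ w A := fun A =>
    mul_nonneg (pow_nonneg hp0.le _) (pow_nonneg hq1 _)
  have hxy : p + (1 - p) = 1 := by ring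
  have hsum1 : ∑ A ∈ E.powerset, w A = 1 := by
    rw [hw]; rw [L1 E p (1-p), hxy, one_pow]
  set B1 := E.powerset.filter (fun A => 2 * (p * E.card) < (A.card : ℝ)) with hB1def
  set B2 := E.powerset.filter (fun A => ∃ q ∈ PR n m ℓ, Disjoint A (XS q)) with hB2def
  have hB1 : ∑ A ∈ B1, w A ≤ 1 / 2 := by
    rcases Nat.eq_zero_or_pos E.card with h0 | hpos
    · have hempty : B1 = ∅ := by
        refine Finset.eq_empty_of_forall_notMem fun A hA => ?_
        rw [hB1def, Finset.mem_filter] at hA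
        have hle := Finset.card_le_card (Finset.mem_powerset.mp hA.1)
        have hc0 : A.card = 0 := by omega
        have := hA.2
        rw [hc0, h0] at this
        simp at this
      rw [hempty, Finset.sum_empty]
      norm_num
    · have t1 : 2 * (p * E.card) * ∑ A ∈ B1, w A ≤ ∑ A ∈ B1, w A * A.card := by
        rw [Finset.mul_sum]
        refine Finset.sum_le_sum fun A hA => ?_
        rw [hB1def, Finset.mem_filter] at hA
        have := hA.2
        nlinarith [hw0 A]
      have t2 : ∑ A ∈ B1, w A * A.card ≤ ∑ A ∈ E.powerset, w A * A.card :=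
        Finset.sum_le_sum_of_subset_of_nonneg (Finset.filter_subset _ _)
          (fun A _ _ => mul_nonneg (hw0 A) (Nat.cast_nonneg _))
      have t3 : ∑ A ∈ E.powerset, w A * A.card = p * E.card := by
        simpa using L2 E p (1 - p) hxy
      have hEpos : (0:ℝ) < p * E.card :=
        mul_pos hp0 (by exact_mod_cast hpos)
      by_contra hcon
      push_neg at hcon
      nlinarith
  have hB2 : ∑ A ∈ B2, w A < 1 / 2 := by
    have s1 : ∑ A ∈ B2, w A ≤
        ∑ A ∈ E.powerset, ∑ _q ∈ (PR n m ℓ).filter (fun q => Disjoint A (XS q)), w A := by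
      have t1 : ∑ A ∈ B2, w A ≤
          ∑ A ∈ B2, ∑ _q ∈ (PR n m ℓ).filter (fun q => Disjoint A (XS q)), w A := by
        refine Finset.sum_le_sum fun A hA => ?_
        rw [hB2def, Finset.mem_filter] at hA
        obtain ⟨-, q, hq, hdisjq⟩ := hA
        have hne : ((PR n m ℓ).filter (fun q => Disjoint A (XS q))).Nonempty :=
          ⟨q, Finset.mem_filter.mpr ⟨hq, hdisjq⟩⟩
        rw [Finset.sum_const, nsmul_eq_mul]
        have h1 : (1:ℝ) ≤ (((PR n m ℓ).filter (fun q => Disjoint A (XS q))).card : ℝ) := by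
          exact_mod_cast Finset.card_pos.mpr hne
        nlinarith [hw0 A]
      refine t1.trans (Finset.sum_le_sum_of_subset_of_nonneg (Finset.filter_subset _ _)
        fun A _ _ => Finset.sum_nonneg fun q _ => hw0 A)
    have s2 : ∑ A ∈ E.powerset, ∑ _q ∈ (PR n m ℓ).filter (fun q => Disjoint A (XS q)), w A
        = ∑ q ∈ PR n m ℓ, ∑ A ∈ E.powerset.filter (fun A => Disjoint A (XS q)), w A := by
      simp_rw [Finset.sum_filter]
      exact Finset.sum_comm
    have s3 : ∀ q ∈ PR n m ℓ, ∑ A ∈ E.powerset.filter (fun A => Disjoint A (XS q)), w A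
        = (1 - p) ^ (ℓ ^ 2) := by
      intro q hq
      have hL3 := L3 E (XS q) (XS_subset hq) p (1 - p) hxy
      rw [XS_card hq] at hL3
      simpa using hL3
    have s4 : ((PR n m ℓ).card : ℝ) ≤ (n.choose ℓ : ℝ) ^ 2 := by
      exact_mod_cast PR_card (n := n) (m := m) (ℓ := ℓ)
    calc ∑ A ∈ B2, w A
        ≤ ∑ q ∈ PR n m ℓ, ∑ A ∈ E.powerset.filter (fun A => Disjoint A (XS q)), w A :=
          s1.trans (le_of_eq s2)
      _ = ((PR n m ℓ).card : ℝ) * (1 - p) ^ (ℓ ^ 2) := by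
          rw [Finset.sum_congr rfl s3, Finset.sum_const, nsmul_eq_mul]
      _ ≤ (n.choose ℓ : ℝ) ^ 2 * (1 - p) ^ (ℓ ^ 2) :=
          mul_le_mul_of_nonneg_right s4 (pow_nonneg hq1 _)
      _ < 1 / 2 := hmoment
  have hexists : ∃ A ∈ E.powerset, A ∉ B1 ∧ A ∉ B2 := by
    by_contra hcon
    push_neg at hcon
    have hsub : E.powerset ⊆ B1 ∪ B2 := by
      intro A hA
      by_cases h : A ∈ B1
      · exact Finset.mem_union_left _ h
      · exact Finset.mem_union_right _ (hcon A hA h)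
    have e1 : ∑ A ∈ E.powerset, w A ≤ ∑ A ∈ B1 ∪ B2, w A := by
      have : E.powerset = B1 ∪ B2 := Finset.Subset.antisymm hsub
        (Finset.union_subset (Finset.filter_subset _ _) (Finset.filter_subset _ _))
      rw [this]
    have e2 : ∑ A ∈ B1 ∪ B2, w A + ∑ A ∈ B1 ∩ B2, w A = ∑ A ∈ B1, w A + ∑ A ∈ B2, w A :=
      Finset.sum_union_inter
    have e3 : 0 ≤ ∑ A ∈ B1 ∩ B2, w A := Finset.sum_nonneg fun A _ => hw0 A
    rw [hsum1] at e1
    linarith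
  obtain ⟨A, hAp, hA1, hA2⟩ := hexists
  have hAE : A ⊆ E := Finset.mem_powerset.mp hAp
  refine ⟨SimpleGraph.fromEdgeSet ↑A, ?_, ?_⟩
  · have hedge : (SimpleGraph.fromEdgeSet (↑A : Set (Sym2 (Fin n)))).edgeSet = ↑A := by
      rw [SimpleGraph.edgeSet_fromEdgeSet]
      ext e
      simp only [Set.mem_diff, Finset.mem_coe, Set.mem_setOf_eq]
      exact ⟨fun h => h.1, fun h => ⟨h, Ew_nondiag (hAE h)⟩⟩
    have hcard : (A.card : ℝ) ≤ 2 * (p * E.card) := by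
      by_contra hlt
      push_neg at hlt
      exact hA1 (Finset.mem_filter.mpr ⟨hAp, hlt⟩)
    have hEm : (E.card : ℝ) ≤ (n:ℝ) * m := by exact_mod_cast Ew_card n m hm
    rw [hedge, Set.ncard_coe_finset]
    nlinarith [mul_le_mul_of_nonneg_left hEm hp0.le]
  · intro S₁ S₂ hdisj hc1 hc2 hdist
    have hqmem : (S₁, S₂) ∈ PR n m ℓ := by
      simp only [PR, Finset.mem_filter, Finset.mem_product, Finset.mem_powersetCard_univ]
      exact ⟨⟨hc1, hc2⟩, hdisj, hdist⟩
    have hndisj : ¬ Disjoint A (XS (S₁, S₂)) := by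
      intro hd
      exact hA2 (Finset.mem_filter.mpr ⟨hAp, ⟨(S₁, S₂), hqmem, hd⟩⟩)
    obtain ⟨e, heA, heX⟩ := Finset.not_disjoint_iff.mp hndisj
    simp only [XS, Finset.mem_image, Finset.mem_product] at heX
    obtain ⟨⟨u, v⟩, ⟨hu, hv⟩, rfl⟩ := heX
    refine ⟨u, hu, v, hv, ?_⟩
    rw [SimpleGraph.fromEdgeSet_adj]
    exact ⟨Finset.mem_coe.mpr heA, fun h => Finset.disjoint_left.mp hdisj hu (h ▸ hv)⟩
end

section
/- There exists a constant C > 0 such that for all positive integers n and m with m ≤ n/2, there exists a bipartite graph with both parts of size n, with at most C·(n²/m)·log(n/m) edges, having the property that for every set A of m vertices in the first part and every set B of m vertices in the second part, there is at least one edge joining A and B. -/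
open Finset

/-- Binomial bound: `C(n,m) ≤ (e n / m)^m`. -/
lemma choose_le_exp_pow (n m : ℕ) (hm : 0 < m) :
    (n.choose m : ℝ) ≤ (Real.exp 1 * n / m) ^ m := by
  have hmR : (0:ℝ) < m := by exact_mod_cast hm
  have hf : (0:ℝ) < m.factorial := by exact_mod_cast m.factorial_pos
  have h1 : (n.choose m : ℝ) * (m.factorial : ℝ) ≤ (n:ℝ) ^ m := by
    have h := Nat.descFactorial_le_pow n m
    rw [Nat.descFactorial_eq_factorial_mul_choose] at h
    calc (n.choose m : ℝ) * (m.factorial : ℝ)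
        = ((m.factorial * n.choose m : ℕ) : ℝ) := by push_cast; ring
      _ ≤ ((n ^ m : ℕ) : ℝ) := by exact_mod_cast h
      _ = (n:ℝ) ^ m := by push_cast; ring
  have h2 : (m:ℝ) ^ m ≤ Real.exp 1 ^ m * (m.factorial : ℝ) := by
    have h := Real.pow_div_factorial_le_exp (x := (m:ℝ)) hmR.le m
    rw [div_le_iff₀ hf] at h
    calc (m:ℝ) ^ m ≤ Real.exp m * (m.factorial : ℝ) := h
      _ = Real.exp 1 ^ m * (m.factorial : ℝ) := by
          rw [← Real.exp_nat_mul]; norm_num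
  rw [div_pow, mul_pow, le_div_iff₀ (by positivity)]
  calc (n.choose m : ℝ) * (m:ℝ) ^ m
      ≤ (n.choose m : ℝ) * (Real.exp 1 ^ m * (m.factorial : ℝ)) :=
        mul_le_mul_of_nonneg_left h2 (by positivity)
    _ = Real.exp 1 ^ m * ((n.choose m : ℝ) * (m.factorial : ℝ)) := by ring
    _ ≤ Real.exp 1 ^ m * (n:ℝ) ^ m := mul_le_mul_of_nonneg_left h1 (by positivity)

set_option maxHeartbeats 1000000 in
/-- There is an absolute constant `C > 0` such that for all `0 < m ≤ n / 2` there is a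
bipartite graph (modeled as a set `E` of edges between two copies of `Fin n`) with at
most `C * (n^2 / m) * log (n / m)` edges meeting every pair of `m`-sets of the two parts. -/
theorem stmt_7 :
    ∃ C : ℝ, 0 < C ∧ ∀ n m : ℕ, 0 < n → 0 < m → 2 * m ≤ n →
      ∃ E : Finset (Fin n × Fin n),
        (E.card : ℝ) ≤ C * ((n : ℝ) ^ 2 / m) * Real.log ((n : ℝ) / m) ∧
        ∀ A B : Finset (Fin n), A.card = m → B.card = m →
          ∃ a ∈ A, ∃ b ∈ B, (a, b) ∈ E := by
  classical
  refine ⟨6, by norm_num, fun n m hn hm hmn => ?_⟩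
  have hmltn : m < n := by omega
  have hn2 : 2 ≤ n := by omega
  have hnR : (0:ℝ) < n := by exact_mod_cast hn
  have hmR : (0:ℝ) < m := by exact_mod_cast hm
  have hnR2 : (2:ℝ) ≤ n := by exact_mod_cast hn2
  have h2m : 2 * (m:ℝ) ≤ n := by exact_mod_cast hmn
  set L : ℝ := Real.log ((n:ℝ)/m) with hLdef
  have hL2 : Real.log 2 ≤ L := by
    apply Real.log_le_log (by norm_num)
    rw [le_div_iff₀ hmR]; linarith
  have hlog2 : (0.6931471803 : ℝ) < Real.log 2 := Real.log_two_gt_d9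
  have hLpos : 0 < L := by linarith
  set r : ℝ := 5 * ((n:ℝ)^2/m) * L with hrdef
  have hrpos : 0 < r := by positivity
  set k : ℕ := ⌈r⌉₊ with hkdef
  have hk0 : k ≠ 0 := by
    have : 1 ≤ k := Nat.one_le_ceil_iff.2 hrpos
    omega
  have hkr : r ≤ (k:ℝ) := Nat.le_ceil r
  have hkub : (k:ℝ) ≤ r + 1 := (Nat.ceil_lt_add_one hrpos.le).le
  have hm2n2 : m^2 ≤ n^2 := Nat.pow_le_pow_left hmltn.le 2
  -- the key counting inequality
  have key : (n.choose m)^2 * (n^2 - m^2)^k < (n^2)^k := by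
    rw [← Nat.cast_lt (α := ℝ)]
    push_cast [Nat.cast_sub hm2n2]
    set x : ℝ := (m:ℝ)^2/(n:ℝ)^2 with hxdef
    have hxpos : 0 < x := by positivity
    have hx1 : x ≤ 1 := by
      rw [div_le_one (by positivity)]
      nlinarith
    have hsub : (n:ℝ)^2 - (m:ℝ)^2 = (n:ℝ)^2 * (1 - x) := by
      rw [hxdef]; field_simp
    have h1x : 0 ≤ 1 - x := by linarith
    have hlt : 1 - x < Real.exp (-x) := by
      have h := Real.add_one_lt_exp (x := -x) (neg_ne_zero.2 hxpos.ne')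
      linarith
    have hpow : (1-x)^k < Real.exp (-x) ^ k := pow_lt_pow_left₀ hlt h1x hk0
    have hch : (n.choose m : ℝ) ≤ Real.exp ((m:ℝ) * (1 + L)) := by
      calc (n.choose m:ℝ) ≤ (Real.exp 1 * n / m)^m := choose_le_exp_pow n m hm
        _ = Real.exp (1 + L) ^ m := by
            rw [Real.exp_add, hLdef, Real.exp_log (by positivity)]
            field_simp
        _ = Real.exp ((m:ℝ) * (1 + L)) := by rw [Real.exp_nat_mul]
    have hchpos : (0:ℝ) ≤ (n.choose m : ℝ) := by positivity
    have hxk : 2 * ((m:ℝ) * (1 + L)) ≤ x * k := by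
      have hxr : x * r = 5 * (m:ℝ) * L := by
        rw [hxdef, hrdef]; field_simp
      have h3L : 2 ≤ 3 * L := by linarith
      have : 2 * ((m:ℝ) * (1 + L)) ≤ 5 * (m:ℝ) * L := by nlinarith
      calc 2 * ((m:ℝ) * (1 + L)) ≤ 5 * (m:ℝ) * L := this
        _ = x * r := hxr.symm
        _ ≤ x * k := by nlinarith
    calc (n.choose m:ℝ)^2 * ((n:ℝ)^2 - (m:ℝ)^2)^k
        = (n.choose m:ℝ)^2 * (1-x)^k * ((n:ℝ)^2)^k := by rw [hsub, mul_pow]; ring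
      _ < (n.choose m:ℝ)^2 * Real.exp (-x) ^ k * ((n:ℝ)^2)^k := by
          have hcpos : (0:ℝ) < (n.choose m:ℝ)^2 := by
            have : 0 < n.choose m := Nat.choose_pos hmltn.le
            positivity
          have : (n.choose m:ℝ)^2 * (1-x)^k < (n.choose m:ℝ)^2 * Real.exp (-x) ^ k :=
            mul_lt_mul_of_pos_left hpow hcpos
          have hpk : (0:ℝ) < ((n:ℝ)^2)^k := by positivity
          exact mul_lt_mul_of_pos_right this hpk
      _ ≤ Real.exp ((m:ℝ) * (1 + L))^2 * Real.exp (-x) ^ k * ((n:ℝ)^2)^k := by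
          have : (n.choose m:ℝ)^2 ≤ Real.exp ((m:ℝ) * (1 + L))^2 :=
            pow_le_pow_left₀ hchpos hch 2
          have h1 : (0:ℝ) ≤ Real.exp (-x) ^ k := by positivity
          have h2 : (0:ℝ) ≤ ((n:ℝ)^2)^k := by positivity
          exact mul_le_mul_of_nonneg_right (mul_le_mul_of_nonneg_right this h1) h2
      _ ≤ 1 * ((n:ℝ)^2)^k := by
          have heq : Real.exp ((m:ℝ) * (1 + L))^2 * Real.exp (-x) ^ k
              = Real.exp (2 * ((m:ℝ) * (1 + L)) - x * k) := by
            rw [← Real.exp_nat_mul, ← Real.exp_nat_mul, ← Real.exp_add]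
            norm_num
            ring_nf
          have : Real.exp (2 * ((m:ℝ) * (1 + L)) - x * k) ≤ 1 := by
            rw [Real.exp_le_one_iff]
            linarith
          rw [heq]
          have h2 : (0:ℝ) ≤ ((n:ℝ)^2)^k := by positivity
          exact mul_le_mul_of_nonneg_right this h2
      _ = ((n:ℝ)^2)^k := one_mul _
  -- counting bad functions
  set P : Finset (Finset (Fin n)) := Finset.powersetCard m Finset.univ with hPdef
  have hPcard : P.card = n.choose m := by
    rw [hPdef, Finset.card_powersetCard, Finset.card_univ, Fintype.card_fin]
  set bad : Finset (Fin k → Fin n × Fin n) :=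
    Finset.univ.filter (fun f => ∃ A ∈ P, ∃ B ∈ P, ∀ i, f i ∉ A ×ˢ B) with hbaddef
  have hbadcard : bad.card ≤ (n.choose m)^2 * (n^2 - m^2)^k := by
    have hsub : bad ⊆ (P ×ˢ P).biUnion (fun p =>
        Fintype.piFinset (fun _ : Fin k => ((p.1 ×ˢ p.2)ᶜ : Finset (Fin n × Fin n)))) := by
      intro f hf
      rw [hbaddef, Finset.mem_filter] at hf
      obtain ⟨-, A, hA, B, hB, h⟩ := hf
      refine Finset.mem_biUnion.2 ⟨(A,B), Finset.mem_product.2 ⟨hA, hB⟩, ?_⟩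
      rw [Fintype.mem_piFinset]
      intro i
      exact Finset.mem_compl.2 (h i)
    calc bad.card ≤ ((P ×ˢ P).biUnion _).card := Finset.card_le_card hsub
      _ ≤ ∑ p ∈ P ×ˢ P, (Fintype.piFinset (fun _ : Fin k =>
            ((p.1 ×ˢ p.2)ᶜ : Finset (Fin n × Fin n)))).card := Finset.card_biUnion_le
      _ = ∑ p ∈ P ×ˢ P, (n^2 - m^2)^k := by
          apply Finset.sum_congr rfl
          intro p hp
          rw [Finset.mem_product] at hp
          have h1 : p.1.card = m := (Finset.mem_powersetCard.1 hp.1).2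
          have h2 : p.2.card = m := (Finset.mem_powersetCard.1 hp.2).2
          rw [Fintype.card_piFinset]
          simp only [Finset.card_compl, Finset.card_product, h1, h2,
            Fintype.card_prod, Fintype.card_fin]
          rw [Finset.prod_const, Finset.card_univ, Fintype.card_fin]
          ring_nf
      _ = (n.choose m)^2 * (n^2 - m^2)^k := by
          rw [Finset.sum_const, Finset.card_product, hPcard, smul_eq_mul]
          ring
  have htotal : (Finset.univ : Finset (Fin k → Fin n × Fin n)).card = (n^2)^k := by
    rw [Finset.card_univ, Fintype.card_fun, Fintype.card_prod, Fintype.card_fin,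
      Fintype.card_fin]
    ring_nf
  have hex : ∃ f : Fin k → Fin n × Fin n, f ∉ bad := by
    by_contra h
    push_neg at h
    have hsub : (Finset.univ : Finset (Fin k → Fin n × Fin n)) ⊆ bad := fun f _ => h f
    have := Finset.card_le_card hsub
    rw [htotal] at this
    omega
  obtain ⟨f, hf⟩ := hex
  refine ⟨Finset.image f Finset.univ, ?_, ?_⟩
  · have hcard : ((Finset.image f Finset.univ).card : ℝ) ≤ (k:ℝ) := by
      have := Finset.card_image_le (f := f) (s := Finset.univ)
      rw [Finset.card_univ, Fintype.card_fin] at this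
      exact_mod_cast this
    have ht4 : (4:ℝ) ≤ (n:ℝ)^2/m := by
      rw [le_div_iff₀ hmR]
      nlinarith
    have h4L : 4 * L ≤ ((n:ℝ)^2/m) * L := mul_le_mul_of_nonneg_right ht4 hLpos.le
    have htL : 1 ≤ ((n:ℝ)^2/m) * L := by linarith
    calc ((Finset.image f Finset.univ).card : ℝ) ≤ (k:ℝ) := hcard
      _ ≤ r + 1 := hkub
      _ ≤ 6 * ((n:ℝ)^2/m) * L := by
          have : 5 * ((n:ℝ)^2/m) * L + 1 ≤ 6 * ((n:ℝ)^2/m) * L := by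
            have h6 : 6 * ((n:ℝ)^2/m) * L = 5 * (((n:ℝ)^2/m) * L) + ((n:ℝ)^2/m) * L := by ring
            have h5 : 5 * ((n:ℝ)^2/m) * L = 5 * (((n:ℝ)^2/m) * L) := by ring
            rw [h5, h6]; linarith
          rw [hrdef]; linarith
  · intro A B hA hB
    have hgood : ∃ i, f i ∈ A ×ˢ B := by
      by_contra h
      push_neg at h
      exact hf (Finset.mem_filter.2 ⟨Finset.mem_univ f,
        A, Finset.mem_powersetCard_univ.2 hA, B, Finset.mem_powersetCard_univ.2 hB, h⟩)
    obtain ⟨i, hi⟩ := hgood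
    rw [Finset.mem_product] at hi
    refine ⟨(f i).1, hi.1, (f i).2, hi.2, ?_⟩
    have : ((f i).1, (f i).2) = f i := rfl
    rw [this]
    exact Finset.mem_image_of_mem f (Finset.mem_univ i)
end

section
/- There exists a constant C > 0 such that for all integers b ≥ 2 and s ≥ 2, there exists an ordered graph G with at most s·exp(C·(log b)·√(log s)) edges such that for every coloring of the vertices of G with b colors, G contains a monotone path with s edges all of whose vertices receive the same color. -/
open Finset

namespace MP


/-! ### low / high of a finset of naturals -/

def low (m : ℕ) (S : Finset ℕ) : Finset ℕ := ((S.sort (· ≤ ·)).take m).toFinset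
def high (m : ℕ) (S : Finset ℕ) : Finset ℕ := ((S.sort (· ≤ ·)).drop (S.card - m)).toFinset

lemma take_lt_drop {l : List ℕ} (hl : l.Pairwise (· < ·)) {m x y : ℕ}
    (hx : x ∈ l.take m) (hy : y ∈ l.drop m) : x < y := by
  have h := hl
  rw [← List.take_append_drop m l] at h
  exact (List.pairwise_append.1 h).2.2 x hx y hy

lemma low_subset {m : ℕ} {S : Finset ℕ} : low m S ⊆ S := by
  intro x hx
  rw [low, List.mem_toFinset] at hx
  exact (Finset.mem_sort _).1 (List.mem_of_mem_take hx)

lemma high_subset {m : ℕ} {S : Finset ℕ} : high m S ⊆ S := by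
  intro x hx
  rw [high, List.mem_toFinset] at hx
  exact (Finset.mem_sort _).1 (List.mem_of_mem_drop hx)

lemma card_low {m : ℕ} {S : Finset ℕ} (h : m ≤ S.card) : (low m S).card = m := by
  rw [low, List.toFinset_card_of_nodup ((S.sort_nodup _).sublist (List.take_sublist _ _))]
  rw [List.length_take, Finset.length_sort]
  omega

lemma card_high {m : ℕ} {S : Finset ℕ} (h : m ≤ S.card) : (high m S).card = m := by
  rw [high, List.toFinset_card_of_nodup ((S.sort_nodup _).sublist (List.drop_sublist _ _))]
  rw [List.length_drop, Finset.length_sort]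
  omega

lemma mem_low_or_lt {m : ℕ} {S : Finset ℕ} {z : ℕ} (hz : z ∈ S) :
    z ∈ low m S ∨ ∀ x ∈ low m S, x < z := by
  have hz' : z ∈ (S.sort (· ≤ ·)).take m ++ (S.sort (· ≤ ·)).drop m := by
    rw [List.take_append_drop]; exact (Finset.mem_sort _).2 hz
  rcases List.mem_append.1 hz' with h | h
  · exact Or.inl (List.mem_toFinset.2 h)
  · right
    intro x hx
    exact take_lt_drop ((S.sortedLT_sort).pairwise) (List.mem_toFinset.1 hx) h

lemma mem_high_or_lt {m : ℕ} {S : Finset ℕ} {z : ℕ} (hz : z ∈ S) :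
    z ∈ high m S ∨ ∀ x ∈ high m S, z < x := by
  have hz' : z ∈ (S.sort (· ≤ ·)).take (S.card - m) ++ (S.sort (· ≤ ·)).drop (S.card - m) := by
    rw [List.take_append_drop]; exact (Finset.mem_sort _).2 hz
  rcases List.mem_append.1 hz' with h | h
  · right
    intro x hx
    exact take_lt_drop ((S.sortedLT_sort).pairwise) h (List.mem_toFinset.1 hx)
  · exact Or.inl (List.mem_toFinset.2 h)

lemma filter_lt_low {m : ℕ} {S : Finset ℕ} {w : ℕ} (hm : m ≤ S.card) (hw : w ∈ low m S) :
    (S.filter (· < w)).card < m := by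
  have hsub : S.filter (· < w) ⊆ (low m S).erase w := by
    intro z hz
    rw [Finset.mem_filter] at hz
    rcases mem_low_or_lt (m := m) hz.1 with h | h
    · exact Finset.mem_erase.2 ⟨by omega, h⟩
    · exact absurd (h w hw) (by omega)
  have h1 := Finset.card_le_card hsub
  have h2 : ((low m S).erase w).card = m - 1 := by
    rw [Finset.card_erase_of_mem hw, card_low hm]
  have hm0 : 0 < m := by
    by_contra h0
    have : m = 0 := by omega
    subst this
    simp [low] at hw
  omega

lemma filter_gt_high {m : ℕ} {S : Finset ℕ} {u : ℕ} (hm : m ≤ S.card) (hu : u ∈ high m S) :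
    (S.filter (u < ·)).card < m := by
  have hsub : S.filter (u < ·) ⊆ (high m S).erase u := by
    intro z hz
    rw [Finset.mem_filter] at hz
    rcases mem_high_or_lt (m := m) hz.1 with h | h
    · exact Finset.mem_erase.2 ⟨by omega, h⟩
    · exact absurd (h u hu) (by omega)
  have h1 := Finset.card_le_card hsub
  have h2 : ((high m S).erase u).card = m - 1 := by
    rw [Finset.card_erase_of_mem hu, card_high hm]
  have hm0 : 0 < m := by
    by_contra h0
    have hmz : m = 0 := by omega
    subst hmz
    have hnil : (S.sort (· ≤ ·)).drop (S.card - 0) = [] := by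
      rw [Nat.sub_zero, ← Finset.length_sort (α := ℕ) (· ≤ ·)]
      exact List.drop_length
    rw [high, hnil] at hu
    simp at hu
  omega

lemma low_le_high {m m' : ℕ} {S : Finset ℕ} {x y : ℕ} (h : m + m' ≤ S.card)
    (hx : x ∈ low m S) (hy : y ∈ high m' S) : x ≤ y := by
  by_contra hlt
  push_neg at hlt  -- y < x
  -- count elements of S below x
  have hmS : m ≤ S.card := by omega
  have hcount := filter_lt_low hmS hx
  -- the take (card - m') part together with y all lie below x
  set l := S.sort (· ≤ ·) with hl
  have hsubset : insert y ((l.take (S.card - m')).toFinset) ⊆ S.filter (· < x) := by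
    intro z hz
    rcases Finset.mem_insert.1 hz with rfl | hz'
    · exact Finset.mem_filter.2 ⟨high_subset hy, hlt⟩
    · have hzS : z ∈ S := (Finset.mem_sort _).1 (List.mem_of_mem_take (List.mem_toFinset.1 hz'))
      have hzy : z < y := take_lt_drop ((S.sortedLT_sort).pairwise) (List.mem_toFinset.1 hz')
        (by rw [high] at hy; exact List.mem_toFinset.1 hy)
      exact Finset.mem_filter.2 ⟨hzS, by omega⟩
  have hynot : y ∉ (l.take (S.card - m')).toFinset := by
    intro hy'
    have := take_lt_drop ((S.sortedLT_sort).pairwise) (List.mem_toFinset.1 hy')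
      (by rw [high] at hy; exact List.mem_toFinset.1 hy)
    omega
  have hcard1 : ((l.take (S.card - m')).toFinset).card = S.card - m' := by
    rw [List.toFinset_card_of_nodup ((S.sort_nodup _).sublist (List.take_sublist _ _))]
    rw [List.length_take, Finset.length_sort]
    omega
  have hcard2 : (insert y ((l.take (S.card - m')).toFinset)).card = S.card - m' + 1 := by
    rw [Finset.card_insert_of_notMem hynot, hcard1]
  have := Finset.card_le_card hsubset
  omega

/-! ### Linked sets -/

def Linked (G : SimpleGraph ℕ) (S : Finset ℕ) : Prop :=
  ∀ ⦃x⦄, x ∈ S → ∀ ⦃y⦄, y ∈ S → x < y → (∀ z ∈ S, z ≤ x ∨ y ≤ z) → G.Adj x y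

lemma Linked.mono {G G' : SimpleGraph ℕ} {S : Finset ℕ} (h : G ≤ G') (hL : Linked G S) :
    Linked G' S := fun _ hx _ hy hxy hsep => h (hL hx hy hxy hsep)

lemma linked_filter {G : SimpleGraph ℕ} {S : Finset ℕ} {P : ℕ → Prop} [DecidablePred P]
    (hP : ∀ ⦃a c z : ℕ⦄, P a → P c → a ≤ z → z ≤ c → P z) (hL : Linked G S) :
    Linked G (S.filter P) := by
  intro x hx y hy hxy hsep
  rw [Finset.mem_filter] at hx hy
  refine hL hx.1 hy.1 hxy ?_
  intro z hz
  by_contra hcon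
  push_neg at hcon
  have hPz : P z := hP hx.2 hy.2 (by omega) (by omega)
  rcases hsep z (Finset.mem_filter.2 ⟨hz, hPz⟩) with h | h <;> omega

lemma linked_union {G : SimpleGraph ℕ} {A B : Finset ℕ} {u w : ℕ}
    (hA : Linked G A) (hB : Linked G B) (hu : u ∈ A) (hw : w ∈ B)
    (hAu : ∀ a ∈ A, a ≤ u) (hwB : ∀ b ∈ B, w ≤ b) (huw : u < w) (hadj : G.Adj u w) :
    Linked G (A ∪ B) := by
  intro x hx y hy hxy hsep
  rw [Finset.mem_union] at hx hy
  rcases hx with hxA | hxB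
  · rcases hy with hyA | hyB
    · refine hA hxA hyA hxy ?_
      intro z hz
      exact hsep z (Finset.mem_union_left _ hz)
    · -- x ∈ A, y ∈ B : must be x = u, y = w
      have hxu : x = u := by
        rcases hsep u (Finset.mem_union_left _ hu) with h | h
        · have := hAu x hxA; omega
        · have := hwB y hyB; omega
      have hyw : y = w := by
        rcases hsep w (Finset.mem_union_right _ hw) with h | h
        · have := hAu x hxA; omega
        · have := hwB y hyB; omega
      subst hxu; subst hyw; exact hadj
  · rcases hy with hyA | hyB
    · have h1 := hAu y hyA
      have h2 := hwB x hxB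
      omega
    · refine hB hxB hyB hxy ?_
      intro z hz
      exact hsep z (Finset.mem_union_right _ hz)

lemma linked_low {G : SimpleGraph ℕ} {S : Finset ℕ} {m : ℕ} (hL : Linked G S) :
    Linked G (low m S) := by
  intro x hx y hy hxy hsep
  refine hL (low_subset hx) (low_subset hy) hxy ?_
  intro z hz
  rcases mem_low_or_lt (m := m) hz with h | h
  · exact hsep z h
  · exact Or.inr (by have := h y hy; omega)



/-! ### Connector existence via greedy covering -/

def covers (p : ℕ × ℕ) (pr : Finset ℕ × Finset ℕ) : Prop := p.1 ∈ pr.1 ∧ p.2 ∈ pr.2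

instance : ∀ p pr, Decidable (covers p pr) := fun p pr =>
  decidable_of_iff (p.1 ∈ pr.1 ∧ p.2 ∈ pr.2) Iff.rfl

lemma bern (x y : ℕ) : ∀ n : ℕ, x^(n+1) + (n+1)*(x^n*y) ≤ (x+y)^(n+1) := by
  intro n
  induction n with
  | zero => simp
  | succ n ih =>
    have expand : (x+y) * (x^(n+1) + (n+1)*(x^n*y))
        = x^(n+2) + (n+2)*(x^(n+1)*y) + (n+1)*(x^n*(y*y)) := by ring
    have h2 : (x+y) * (x^(n+1) + (n+1)*(x^n*y)) ≤ (x+y) * (x+y)^(n+1) :=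
      Nat.mul_le_mul_left _ ih
    have h1 : (x+y) * (x+y)^(n+1) = (x+y)^(n+2) := by ring
    calc x^(n+1+1) + (n+1+1)*(x^(n+1)*y) = x^(n+2) + (n+2)*(x^(n+1)*y) := by ring
      _ ≤ (x+y)^(n+2) := by linarith [Nat.zero_le ((n+1)*(x^n*(y*y)))]

lemma avg_step {N g : ℕ} (hN : 0 < N)
    (U : Finset (Finset ℕ × Finset ℕ))
    (hUne : U.Nonempty)
    (hU : ∀ pr ∈ U, pr.1 ⊆ range N ∧ pr.1.card = g ∧ pr.2 ⊆ range N ∧ pr.2.card = g) :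
    ∃ p ∈ range N ×ˢ range N, U.card * g^2 ≤ (U.filter (fun pr => covers p pr)).card * N^2 := by
  have hsum : ∑ p ∈ range N ×ˢ range N, (U.filter (fun pr => covers p pr)).card
      = U.card * g^2 := by
    have h1 : ∀ p, (U.filter (fun pr => covers p pr)).card
        = ∑ pr ∈ U, if covers p pr then 1 else 0 := fun p => Finset.card_filter _ _
    rw [Finset.sum_congr rfl (fun p _ => h1 p), Finset.sum_comm]
    have h2 : ∀ pr ∈ U, (∑ p ∈ range N ×ˢ range N, if covers p pr then 1 else 0) = g^2 := by
      intro pr hpr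
      obtain ⟨hX, hXc, hY, hYc⟩ := hU pr hpr
      have : ((range N ×ˢ range N).filter (fun p => covers p pr)) = pr.1 ×ˢ pr.2 := by
        ext p
        rw [Finset.mem_filter]
        simp only [Finset.mem_product, covers]
        constructor
        · rintro ⟨_, h1, h2⟩; exact ⟨h1, h2⟩
        · rintro ⟨h1, h2⟩
          exact ⟨⟨Finset.mem_range.1 (hX h1) |> Finset.mem_range.2,
            Finset.mem_range.1 (hY h2) |> Finset.mem_range.2⟩, h1, h2⟩
      rw [← Finset.card_filter, this, Finset.card_product, hXc, hYc]
      ring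
    rw [Finset.sum_congr rfl h2, Finset.sum_const, smul_eq_mul, mul_comm]
  -- average argument
  have hne : (range N ×ˢ range N).Nonempty := by
    refine ⟨(0,0), ?_⟩
    simp [Finset.mem_product, hN]
  have hR : ∑ p ∈ range N ×ˢ range N, (U.filter (fun pr => covers p pr)).card * N^2
      = (U.card * g^2) * N^2 := by
    rw [← Finset.sum_mul, hsum]
  have hL : ∑ _p ∈ range N ×ˢ range N, (U.card * g^2) = N^2 * (U.card * g^2) := by
    rw [Finset.sum_const, smul_eq_mul, Finset.card_product, Finset.card_range]
    ring
  have hsum2 : ∑ _p ∈ range N ×ˢ range N, U.card * g^2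
      ≤ ∑ p ∈ range N ×ˢ range N, (U.filter (fun pr => covers p pr)).card * N^2 := by
    rw [hL, hR]
    exact le_of_eq (by ring)
  exact Finset.exists_le_of_sum_le hne hsum2

lemma iterate_cover {N g : ℕ} (hN : 0 < N) :
    ∀ (m : ℕ) (U : Finset (Finset ℕ × Finset ℕ))
      (_hU : ∀ pr ∈ U, pr.1 ⊆ range N ∧ pr.1.card = g ∧ pr.2 ⊆ range N ∧ pr.2.card = g),
    ∃ E : Finset (ℕ × ℕ), (∀ p ∈ E, p.1 < N ∧ p.2 < N) ∧ E.card ≤ m ∧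
      (U.filter fun pr => ∀ p ∈ E, ¬ covers p pr).card * (N^2)^m ≤ U.card * (N^2 - g^2)^m := by
  intro m
  induction m with
  | zero =>
    intro U hU
    refine ⟨∅, by simp, le_refl _, ?_⟩
    simp
  | succ m ih =>
    intro U hU
    rcases U.eq_empty_or_nonempty with rfl | hUne
    · exact ⟨∅, by simp, by simp, by simp⟩
    obtain ⟨p, hp, havg⟩ := avg_step hN U hUne hU
    set U₁ := U.filter (fun pr => ¬ covers p pr) with hU₁def
    have hU₁ : ∀ pr ∈ U₁, pr.1 ⊆ range N ∧ pr.1.card = g ∧ pr.2 ⊆ range N ∧ pr.2.card = g :=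
      fun pr hpr => hU pr (Finset.mem_filter.1 hpr).1
    obtain ⟨E₁, hE₁mem, hE₁card, hE₁bound⟩ := ih U₁ hU₁
    refine ⟨insert p E₁, ?_, ?_, ?_⟩
    · intro p' hp'
      rcases Finset.mem_insert.1 hp' with rfl | h
      · rw [Finset.mem_product] at hp
        exact ⟨Finset.mem_range.1 hp.1, Finset.mem_range.1 hp.2⟩
      · exact hE₁mem p' h
    · calc (insert p E₁).card ≤ E₁.card + 1 := Finset.card_insert_le _ _
        _ ≤ m + 1 := by omega
    · -- uncovered set shrinks
      have hsub : (U.filter fun pr => ∀ p' ∈ insert p E₁, ¬ covers p' pr)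
          ⊆ (U₁.filter fun pr => ∀ p' ∈ E₁, ¬ covers p' pr) := by
        intro pr hpr
        rw [Finset.mem_filter] at hpr ⊢
        refine ⟨Finset.mem_filter.2 ⟨hpr.1, hpr.2 p (Finset.mem_insert_self _ _)⟩, ?_⟩
        intro p' hp'
        exact hpr.2 p' (Finset.mem_insert_of_mem hp')
      have hc1 := Finset.card_le_card hsub
      -- U₁.card * N² ≤ U.card * (N² - g²)
      have hkey : U₁.card * N^2 ≤ U.card * (N^2 - g^2) := by
        have hpart : (U.filter (fun pr => covers p pr)).card + U₁.card = U.card := by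
          rw [hU₁def]
          exact Finset.card_filter_add_card_filter_not _
        set c := (U.filter (fun pr => covers p pr)).card
        set u1 := U₁.card
        set x := U.card
        have hgN : g^2 ≤ N^2 ∨ N^2 < g^2 := le_or_gt _ _
        rcases hgN with hgN | hgN
        · obtain ⟨d, hd⟩ : ∃ d, N^2 = g^2 + d := ⟨N^2 - g^2, by omega⟩
          have hrw : N^2 - g^2 = d := by omega
          rw [hrw]
          have e1 : u1 * N^2 = u1 * g^2 + u1 * d := by rw [hd]; ring
          have e2 : x * N^2 = x * g^2 + x * d := by rw [hd]; ring
          have e3 : c * N^2 + u1 * N^2 = x * N^2 := by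
            rw [← Nat.add_mul, hpart]
          have e4 : u1 * d ≤ x * d := Nat.mul_le_mul_right _ (by omega)
          -- from havg : x * g^2 ≤ c * N^2
          omega
        · -- g² > N² : then g > N, impossible since X ⊆ range N with card g... but maybe U empty
          -- U nonempty: take pr ∈ U: pr.1 ⊆ range N, card g ⇒ g ≤ N
          obtain ⟨pr, hpr⟩ := hUne
          obtain ⟨hX, hXc, _, _⟩ := hU pr hpr
          have : g ≤ N := by
            rw [← hXc]
            calc pr.1.card ≤ (range N).card := Finset.card_le_card hX
              _ = N := Finset.card_range N
          have : g^2 ≤ N^2 := Nat.pow_le_pow_left this 2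
          omega
      calc (U.filter fun pr => ∀ p' ∈ insert p E₁, ¬ covers p' pr).card * (N^2)^(m+1)
          = ((U.filter fun pr => ∀ p' ∈ insert p E₁, ¬ covers p' pr).card * (N^2)^m) * N^2 := by
            ring
        _ ≤ ((U₁.filter fun pr => ∀ p' ∈ E₁, ¬ covers p' pr).card * (N^2)^m) * N^2 := by
            exact Nat.mul_le_mul_right _ (Nat.mul_le_mul_right _ hc1)
        _ ≤ (U₁.card * (N^2 - g^2)^m) * N^2 := Nat.mul_le_mul_right _ hE₁bound
        _ = (U₁.card * N^2) * (N^2 - g^2)^m := by ring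
        _ ≤ (U.card * (N^2 - g^2)) * (N^2 - g^2)^m := Nat.mul_le_mul_right _ hkey
        _ = U.card * (N^2 - g^2)^(m+1) := by ring

lemma connector_exists (N g : ℕ) (hg : 0 < g) (hgN : g ≤ N) :
    ∃ E : Finset (ℕ × ℕ), (∀ p ∈ E, p.1 < N ∧ p.2 < N) ∧
      E.card ≤ (N^2/g^2+1) * (2*g*(Nat.log 2 N + 1) + 1) ∧
      ∀ X Y : Finset ℕ, X ⊆ range N → Y ⊆ range N → g ≤ X.card → g ≤ Y.card →
        ∃ p ∈ E, p.1 ∈ X ∧ p.2 ∈ Y := by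
  have hN : 0 < N := lt_of_lt_of_le hg hgN
  set U := (range N).powersetCard g ×ˢ (range N).powersetCard g with hUdef
  have hU : ∀ pr ∈ U, pr.1 ⊆ range N ∧ pr.1.card = g ∧ pr.2 ⊆ range N ∧ pr.2.card = g := by
    intro pr hpr
    rw [hUdef, Finset.mem_product, Finset.mem_powersetCard, Finset.mem_powersetCard] at hpr
    exact ⟨hpr.1.1, hpr.1.2, hpr.2.1, hpr.2.2⟩
  set J := N^2/g^2 + 1 with hJdef
  set h := 2*g*(Nat.log 2 N + 1) + 1 with hhdef
  obtain ⟨E, hEmem, hEcard, hEbound⟩ := iterate_cover hN (J*h) U hU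
  -- show uncovered is empty
  have hJg : N^2 ≤ J * g^2 := by
    have h1 : N^2/g^2 * g^2 + N^2 % g^2 = N^2 := Nat.div_add_mod' _ _
    have h2 : N^2 % g^2 < g^2 := Nat.mod_lt _ (by positivity)
    have : J * g^2 = (N^2/g^2) * g^2 + g^2 := by rw [hJdef]; ring
    omega
  have hgN2 : g^2 ≤ N^2 := Nat.pow_le_pow_left hgN 2
  have hkey1 : 2 * (N^2 - g^2)^J ≤ (N^2)^J := by
    have hx : (N^2 - g^2) + g^2 = N^2 := by omega
    obtain ⟨J', hJ'⟩ : ∃ J', J = J' + 1 := ⟨N^2/g^2, hJdef⟩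
    have hb := bern (N^2 - g^2) (g^2) J'
    rw [hx] at hb
    rw [hJ'] at hJg ⊢
    have hfirst : (N^2 - g^2)^(J'+1) ≤ (J'+1) * ((N^2-g^2)^J' * g^2) := by
      have h2 : (N^2 - g^2) ≤ (J'+1) * g^2 := le_trans (Nat.sub_le _ _) hJg
      calc (N^2-g^2)^(J'+1) = (N^2-g^2) * (N^2-g^2)^J' := by ring
        _ ≤ ((J'+1)*g^2) * (N^2-g^2)^J' := Nat.mul_le_mul_right _ h2
        _ = (J'+1) * ((N^2-g^2)^J' * g^2) := by ring
    linarith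
  have hkey2 : ∀ h' : ℕ, 2^h' * (N^2 - g^2)^(J*h') ≤ (N^2)^(J*h') := by
    intro h'
    induction h' with
    | zero => simp
    | succ h' ih =>
      have e1 : J * (h'+1) = J*h' + J := by ring
      rw [e1, pow_add, pow_add, pow_succ]
      calc 2^h' * 2 * ((N^2-g^2)^(J*h') * (N^2-g^2)^J)
          = (2^h' * (N^2-g^2)^(J*h')) * (2 * (N^2-g^2)^J) := by ring
        _ ≤ (N^2)^(J*h') * (N^2)^J := Nat.mul_le_mul ih hkey1
        _ = (N^2)^(J*h' + J) := (pow_add _ _ _).symm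
  have hUcard : 2 * U.card ≤ 2^h := by
    have h1 : U.card = (N.choose g) * (N.choose g) := by
      rw [hUdef, Finset.card_product, Finset.card_powersetCard, Finset.card_range]
    have h2 : N.choose g ≤ N^g := Nat.choose_le_pow _ _
    have h3 : N < 2^(Nat.log 2 N + 1) := Nat.lt_pow_succ_log_self (by omega) N
    have h4 : N^g ≤ (2^(Nat.log 2 N + 1))^g := Nat.pow_le_pow_left (by omega) g
    have h5 : U.card ≤ ((2^(Nat.log 2 N + 1))^g)^2 := by
      rw [h1]
      calc N.choose g * N.choose g ≤ N^g * N^g := Nat.mul_le_mul h2 h2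
        _ = (N^g)^2 := by ring
        _ ≤ ((2^(Nat.log 2 N + 1))^g)^2 := Nat.pow_le_pow_left h4 2
    have h6 : ((2^(Nat.log 2 N + 1))^g)^2 = 2^(2*g*(Nat.log 2 N + 1)) := by
      rw [← pow_mul, ← pow_mul]; ring_nf
    have h7 : 2^h = 2 * 2^(2*g*(Nat.log 2 N + 1)) := by
      rw [hhdef, pow_succ]; ring
    omega
  have huncov : (U.filter fun pr => ∀ p ∈ E, ¬ covers p pr).card = 0 := by
    by_contra hne
    have h1 : 1 ≤ (U.filter fun pr => ∀ p ∈ E, ¬ covers p pr).card := by omega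
    have h2 : (N^2)^(J*h) ≤ (U.filter fun pr => ∀ p ∈ E, ¬ covers p pr).card * (N^2)^(J*h) :=
      le_mul_of_one_le_left (Nat.zero_le _) h1
    have h3 : 2 * (N^2)^(J*h) ≤ 2 * (U.card * (N^2-g^2)^(J*h)) := by
      have := le_trans h2 hEbound
      omega
    have h4 : 2 * (U.card * (N^2-g^2)^(J*h)) ≤ 2^h * (N^2-g^2)^(J*h) := by
      calc 2 * (U.card * (N^2-g^2)^(J*h)) = (2*U.card) * (N^2-g^2)^(J*h) := by ring
        _ ≤ 2^h * (N^2-g^2)^(J*h) := Nat.mul_le_mul_right _ hUcard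
    have h5 := hkey2 h
    have hpos : 0 < (N^2)^(J*h) := by positivity
    omega
  refine ⟨E, hEmem, hEcard, ?_⟩
  intro X Y hX hY hXc hYc
  obtain ⟨X', hX'sub, hX'c⟩ := Finset.exists_subset_card_eq hXc
  obtain ⟨Y', hY'sub, hY'c⟩ := Finset.exists_subset_card_eq hYc
  have hmem : (X', Y') ∈ U := by
    rw [hUdef, Finset.mem_product, Finset.mem_powersetCard, Finset.mem_powersetCard]
    exact ⟨⟨hX'sub.trans hX, hX'c⟩, ⟨hY'sub.trans hY, hY'c⟩⟩
  have : (X', Y') ∉ (U.filter fun pr => ∀ p ∈ E, ¬ covers p pr) := by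
    rw [Finset.card_eq_zero] at huncov
    rw [huncov]
    exact Finset.notMem_empty _
  rw [Finset.mem_filter] at this
  push_neg at this
  obtain ⟨p, hpE, hpcov⟩ := this hmem
  exact ⟨p, hpE, hX'sub hpcov.1, hY'sub hpcov.2⟩



lemma chain_lemma (H : SimpleGraph ℕ) (Nl Gq : ℕ) (hGq : 0 < Gq)
    (P : ℕ → Prop)
    (E : Finset (ℕ × ℕ))
    (hEmem : ∀ p ∈ E, p.1 < Nl ∧ p.2 < Nl)
    (hEhit : ∀ X Y : Finset ℕ, X ⊆ range Nl → Y ⊆ range Nl → Gq ≤ X.card → Gq ≤ Y.card →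
      ∃ p ∈ E, p.1 ∈ X ∧ p.2 ∈ Y)
    (hEadj : ∀ i j : ℕ, P i → P j → i < j → ∀ p ∈ E, H.Adj (i*Nl + p.1) (j*Nl + p.2))
    (SS : ℕ → Finset ℕ)
    (hSsub : ∀ i, P i → SS i ⊆ Finset.Ico (i*Nl) (i*Nl + Nl))
    (hScard : ∀ i, P i → 4*Gq ≤ (SS i).card)
    (hSlink : ∀ i, P i → Linked H (SS i)) :
    ∀ (L : List ℕ) (i : ℕ), (i :: L).Pairwise (· < ·) → (∀ j ∈ i :: L, P j) →
    ∃ Q : Finset ℕ, Linked H Q ∧ (∀ v ∈ Q, ∃ j ∈ i :: L, v ∈ SS j) ∧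
      2*Gq*(L.length + 1) ≤ Q.card ∧ low Gq (SS i) ⊆ Q := by
  intro L
  induction L with
  | nil =>
    intro i _ hP
    have hPi : P i := hP i ((List.mem_singleton_self i))
    refine ⟨SS i, hSlink i hPi, ?_, ?_, low_subset⟩
    · intro v hv; exact ⟨i, (List.mem_singleton_self i), hv⟩
    · have := hScard i hPi
      simp only [List.length_nil]
      omega
  | cons j L' ih =>
    intro i hsort hP
    have hPi : P i := hP i (List.mem_cons_self)
    have hPj : P j := hP j (List.mem_cons_of_mem _ (List.mem_cons_self))
    have hij : i < j := (List.pairwise_cons.1 hsort).1 j (List.mem_cons_self)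
    have hsort' : (j :: L').Pairwise (· < ·) := (List.pairwise_cons.1 hsort).2
    have hP' : ∀ m ∈ j :: L', P m := fun m hm => hP m (List.mem_cons_of_mem _ hm)
    obtain ⟨Q', hQ'link, hQ'mem, hQ'card, hQ'low⟩ := ih j hsort' hP'
    -- Nl positive
    have hNl : 0 < Nl := by
      have h2 : (SS i).card ≤ Nl := by
        have := Finset.card_le_card (hSsub i hPi)
        rwa [Nat.card_Ico, Nat.add_sub_cancel_left] at this
      have h1 := hScard i hPi
      omega
    -- cards of SS
    have hSi : Gq ≤ (SS i).card := le_trans (by omega) (hScard i hPi)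
    have hSj : Gq ≤ (SS j).card := le_trans (by omega) (hScard j hPj)
    -- connector application
    have hmemIco : ∀ m, P m → ∀ x ∈ SS m, m*Nl ≤ x ∧ x < m*Nl + Nl := by
      intro m hm x hx
      have := hSsub m hm hx
      rw [Finset.mem_Ico] at this
      exact this
    set X := (high Gq (SS i)).image (fun x => x - i*Nl) with hXdef
    set Y := (low Gq (SS j)).image (fun x => x - j*Nl) with hYdef
    have hXsub : X ⊆ range Nl := by
      intro x hx
      rw [hXdef, Finset.mem_image] at hx
      obtain ⟨u, hu, rfl⟩ := hx
      have := hmemIco i hPi u (high_subset hu)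
      rw [Finset.mem_range]; omega
    have hYsub : Y ⊆ range Nl := by
      intro y hy
      rw [hYdef, Finset.mem_image] at hy
      obtain ⟨w, hw, rfl⟩ := hy
      have := hmemIco j hPj w (low_subset hw)
      rw [Finset.mem_range]; omega
    have hXcard : X.card = Gq := by
      rw [hXdef, Finset.card_image_of_injOn, card_high hSi]
      intro x hx y hy hxy
      simp only at hxy
      have h1 := hmemIco i hPi x (high_subset hx)
      have h2 := hmemIco i hPi y (high_subset hy)
      omega
    have hYcard : Y.card = Gq := by
      rw [hYdef, Finset.card_image_of_injOn, card_low hSj]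
      intro x hx y hy hxy
      simp only at hxy
      have h1 := hmemIco j hPj x (low_subset hx)
      have h2 := hmemIco j hPj y (low_subset hy)
      omega
    obtain ⟨p, hpE, hpX, hpY⟩ := hEhit X Y hXsub hYsub (le_of_eq hXcard.symm) (le_of_eq hYcard.symm)
    -- recover u, w
    obtain ⟨u, hu, hup⟩ := Finset.mem_image.1 hpX
    obtain ⟨w, hw, hwp⟩ := Finset.mem_image.1 hpY
    have huIco := hmemIco i hPi u (high_subset hu)
    have hwIco := hmemIco j hPj w (low_subset hw)
    have hueq : i*Nl + p.1 = u := by omega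
    have hweq : j*Nl + p.2 = w := by omega
    have hadj : H.Adj u w := by
      rw [← hueq, ← hweq]
      exact hEadj i j hPi hPj hij p hpE
    have huw : u < w := by
      have h8 : i*Nl + Nl ≤ j*Nl := by
        have := Nat.mul_le_mul_right Nl (show i+1 ≤ j by omega)
        rwa [Nat.succ_mul] at this
      omega
    -- the pieces
    set A := (SS i).filter (· ≤ u) with hAdef
    set B := Q'.filter (w ≤ ·) with hBdef
    have huA : u ∈ A := Finset.mem_filter.2 ⟨high_subset hu, le_refl u⟩
    have hwQ' : w ∈ Q' := hQ'low hw
    have hwB : w ∈ B := Finset.mem_filter.2 ⟨hwQ', le_refl w⟩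
    have hAu : ∀ a ∈ A, a ≤ u := fun a ha => (Finset.mem_filter.1 ha).2
    have hwBge : ∀ x ∈ B, w ≤ x := fun x hx => (Finset.mem_filter.1 hx).2
    have hAlink : Linked H A := linked_filter (fun a c z _ hc _ hzc => le_trans hzc hc)
      (hSlink i hPi)
    have hBlink : Linked H B := linked_filter (fun a c z ha _ haz _ => le_trans ha haz)
      hQ'link
    have hQlink : Linked H (A ∪ B) :=
      linked_union hAlink hBlink huA hwB hAu hwBge huw hadj
    refine ⟨A ∪ B, hQlink, ?_, ?_, ?_⟩
    · intro v hv
      rcases Finset.mem_union.1 hv with hv | hv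
      · exact ⟨i, (List.mem_cons_self), (Finset.mem_filter.1 hv).1⟩
      · obtain ⟨j', hj', hvj'⟩ := hQ'mem v (Finset.mem_filter.1 hv).1
        exact ⟨j', List.mem_cons_of_mem _ hj', hvj'⟩
    · -- cardinality
      have hdisj : Disjoint A B := by
        rw [Finset.disjoint_left]
        intro a haA haB
        have h1 := hAu a haA
        have h2 := hwBge a haB
        omega
      rw [Finset.card_union_of_disjoint hdisj]
      -- |A| ≥ |SS i| - (Gq - 1)
      have hAcard : (SS i).card ≤ A.card + (Gq - 1) := by
        have hsplit : A.card + ((SS i).filter (fun z => ¬ z ≤ u)).card = (SS i).card := by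
          rw [hAdef]
          exact Finset.card_filter_add_card_filter_not _
        have : ((SS i).filter (fun z => ¬ z ≤ u)) = ((SS i).filter (u < ·)) := by
          apply Finset.filter_congr
          intro z _
          exact not_le
        rw [this] at hsplit
        have := filter_gt_high hSi hu
        omega
      -- |B| ≥ |Q'| - (Gq - 1)
      have hBcard : Q'.card ≤ B.card + (Gq - 1) := by
        have hsplit : B.card + (Q'.filter (fun z => ¬ w ≤ z)).card = Q'.card := by
          rw [hBdef]
          exact Finset.card_filter_add_card_filter_not _
        have hrw : (Q'.filter (fun z => ¬ w ≤ z)) = (Q'.filter (· < w)) := by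
          apply Finset.filter_congr
          intro z _
          exact not_le
        rw [hrw] at hsplit
        -- Q'.filter (· < w) ⊆ (SS j).filter (· < w)
        have hsub2 : Q'.filter (· < w) ⊆ (SS j).filter (· < w) := by
          intro z hz
          rw [Finset.mem_filter] at hz
          obtain ⟨j', hj'mem, hzj'⟩ := hQ'mem z hz.1
          have hPj' : P j' := hP' j' hj'mem
          have hzIco := hmemIco j' hPj' z hzj'
          have : j' = j := by
            rcases List.mem_cons.1 hj'mem with h | h
            · exact h
            · exfalso
              have hjj' : j < j' := (List.pairwise_cons.1 hsort').1 j' h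
              have h3 : j*Nl + Nl ≤ j' * Nl := by
                have := Nat.mul_le_mul_right Nl (show j+1 ≤ j' by omega)
                rwa [Nat.succ_mul] at this
              omega
          subst this
          exact Finset.mem_filter.2 ⟨hzj', hz.2⟩
        have h4 := Finset.card_le_card hsub2
        have h5 := filter_lt_low hSj hw
        omega
      have h6 := hScard i hPi
      have h7 := hQ'card
      simp only [List.length_cons] at h7 ⊢
      have hexp : 2*Gq*(L'.length+1+1) = 2*Gq*(L'.length+1) + 2*Gq := by ring
      omega
    · -- low Gq (SS i) ⊆ A ∪ B
      intro x hx
      apply Finset.mem_union_left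
      refine Finset.mem_filter.2 ⟨low_subset hx, ?_⟩
      have h9 := hScard i hPi
      exact low_le_high (by omega) hx hu



/-! ### Parameters -/

def aa (s : ℕ) : ℕ := Nat.clog 2 s
def DD (s : ℕ) : ℕ := Nat.sqrt (aa s) + 1
def qq (s : ℕ) : ℕ := aa s / DD s + 1
def kk (s : ℕ) : ℕ := 2^(qq s + 1)
def TT (b s : ℕ) : ℕ := b * (kk s - 1) + 1
def mu (s ℓ : ℕ) : ℕ := 2^(qq s * ℓ + qq s + 1)
def NN (b s ℓ : ℕ) : ℕ := TT b s^(ℓ+1)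
def gg (s ℓ : ℕ) : ℕ := 2^(qq s * ℓ + qq s - 1)
def Kc (b s ℓ : ℕ) : ℕ :=
  ((NN b s ℓ)^2/(gg s ℓ)^2+1) * (2*(gg s ℓ)*(Nat.log 2 (NN b s ℓ) + 1) + 1)
def EB (b s : ℕ) : ℕ → ℕ
  | 0 => TT b s^2
  | (ℓ+1) => TT b s * EB b s ℓ + TT b s^2 * Kc b s ℓ

lemma one_le_qq (s : ℕ) : 1 ≤ qq s := by simp [qq]
lemma four_le_kk (s : ℕ) : 4 ≤ kk s := by
  have h := one_le_qq s
  have : 2^2 ≤ 2^(qq s + 1) := Nat.pow_le_pow_right (by omega) (by omega)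
  simpa [kk] using this
lemma kk_le_TT {b s : ℕ} (hb : 2 ≤ b) : kk s ≤ TT b s := by
  have h := four_le_kk s
  have : 2 * (kk s - 1) ≤ b * (kk s - 1) := Nat.mul_le_mul_right _ hb
  simp only [TT]
  omega
lemma TT_pos (b s : ℕ) : 0 < TT b s := by simp [TT]
lemma NN_pos (b s ℓ : ℕ) : 0 < NN b s ℓ := by
  have := TT_pos b s
  exact Nat.pow_pos this
lemma gg_pos (s ℓ : ℕ) : 0 < gg s ℓ := Nat.pow_pos (by omega)
lemma four_gg (s ℓ : ℕ) : 4 * gg s ℓ = mu s ℓ := by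
  have hq := one_le_qq s
  have h : qq s * ℓ + qq s - 1 + 2 = qq s * ℓ + qq s + 1 := by omega
  calc 4 * gg s ℓ = 2^2 * 2^(qq s * ℓ + qq s - 1) := rfl
    _ = 2^(qq s * ℓ + qq s - 1 + 2) := by rw [← pow_add]; ring_nf
    _ = mu s ℓ := by rw [h]; rfl
lemma two_pow_qq_le_TT {b s : ℕ} (hb : 2 ≤ b) : 2^(qq s) ≤ TT b s := by
  have h1 : 2^(qq s) ≤ 2^(qq s + 1) := Nat.pow_le_pow_right (by omega) (by omega)
  exact le_trans h1 (kk_le_TT hb)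
lemma mu_le_NN {b s : ℕ} (hb : 2 ≤ b) (ℓ : ℕ) : mu s ℓ ≤ NN b s ℓ := by
  have h1 : mu s ℓ = kk s * (2^(qq s))^ℓ := by
    rw [mu, kk, ← pow_mul, ← pow_add]
    ring_nf
  rw [h1, NN, pow_succ]
  have h2 : (2^(qq s))^ℓ ≤ (TT b s)^ℓ := Nat.pow_le_pow_left (two_pow_qq_le_TT hb) ℓ
  calc kk s * (2^(qq s))^ℓ ≤ TT b s * (TT b s)^ℓ := Nat.mul_le_mul (kk_le_TT hb) h2
    _ = TT b s^ℓ * TT b s := by ring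
lemma kk_mul_two_gg (s ℓ : ℕ) : 2 * gg s ℓ * kk s = mu s (ℓ+1) := by
  have hq := one_le_qq s
  have h : 1 + (qq s * ℓ + qq s - 1) + (qq s + 1) = qq s * (ℓ+1) + qq s + 1 := by
    have : qq s * (ℓ+1) = qq s * ℓ + qq s := by ring
    omega
  calc 2 * gg s ℓ * kk s = 2^1 * 2^(qq s * ℓ + qq s - 1) * 2^(qq s + 1) := rfl
    _ = 2^(1 + (qq s * ℓ + qq s - 1) + (qq s + 1)) := by rw [← pow_add, ← pow_add]
    _ = mu s (ℓ+1) := by rw [h]; rfl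
lemma gg_le_NN {b s : ℕ} (hb : 2 ≤ b) (ℓ : ℕ) : gg s ℓ ≤ NN b s ℓ := by
  have h1 := four_gg s ℓ
  have h2 := mu_le_NN hb (s := s) ℓ
  omega
lemma NN_succ (b s ℓ : ℕ) : NN b s (ℓ+1) = TT b s * NN b s ℓ := by
  rw [NN, NN, pow_succ]
  ring
lemma EB_succ (b s ℓ : ℕ) : EB b s (ℓ+1) = TT b s * EB b s ℓ + TT b s^2 * Kc b s ℓ := rfl

/-! ### The main inductive construction -/

lemma level {b s : ℕ} (hb : 2 ≤ b) (hs : 2 ≤ s) (ℓ : ℕ) :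
    ∃ (H : SimpleGraph ℕ) (F : Finset (Sym2 ℕ)),
      H.edgeSet ⊆ ↑F ∧ F.card ≤ EB b s ℓ ∧
      ∀ col : ℕ → Fin b, ∃ (c : Fin b) (S : Finset ℕ),
        S ⊆ range (NN b s ℓ) ∧ (∀ v ∈ S, col v = c) ∧ Linked H S ∧ mu s ℓ ≤ S.card := by
  induction ℓ with
  | zero =>
    set T := TT b s with hTdef
    refine ⟨⟨fun x y => (x < T ∧ y < T) ∧ x ≠ y, ?_, ?_⟩,
      (range T ×ˢ range T).image (fun p => s(p.1, p.2)), ?_, ?_, ?_⟩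
    · refine ⟨?_⟩; rintro x y ⟨⟨h1, h2⟩, h3⟩; exact ⟨⟨h2, h1⟩, Ne.symm h3⟩
    · refine ⟨?_⟩; rintro x ⟨_, h3⟩; exact h3 rfl
    · intro e he
      induction e using Sym2.ind with
      | _ x y =>
        rw [SimpleGraph.mem_edgeSet] at he
        obtain ⟨⟨h1, h2⟩, _⟩ := he
        refine Finset.mem_coe.2 (Finset.mem_image.2 ⟨(x, y), ?_, rfl⟩)
        rw [Finset.mem_product]
        exact ⟨Finset.mem_range.2 h1, Finset.mem_range.2 h2⟩
    · calc ((range T ×ˢ range T).image (fun p => s(p.1, p.2))).card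
          ≤ (range T ×ˢ range T).card := Finset.card_image_le
        _ = T^2 := by rw [Finset.card_product, Finset.card_range]; ring
        _ = EB b s 0 := rfl
    · intro col
      have hpig : (univ : Finset (Fin b)).card * (kk s - 1) < (range T).card := by
        rw [Finset.card_univ, Fintype.card_fin, Finset.card_range, hTdef, TT]
        have hk := four_le_kk s
        omega
      obtain ⟨c, _, hc⟩ := Finset.exists_lt_card_fiber_of_mul_lt_card_of_maps_to
        (fun i (_ : i ∈ range T) => Finset.mem_univ (col i)) hpig
      have hNN0 : NN b s 0 = T := by rw [NN, pow_one]
      refine ⟨c, (range T).filter (fun i => col i = c), by rw [hNN0]; exact Finset.filter_subset _ _,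
        fun v hv => (Finset.mem_filter.1 hv).2, ?_, ?_⟩
      · intro x hx y hy hxy _
        rw [Finset.mem_filter, Finset.mem_range] at hx hy
        exact ⟨⟨hx.1, hy.1⟩, by omega⟩
      · have hk := four_le_kk s
        have hmu0 : mu s 0 = kk s := by rw [mu, kk]; ring_nf
        rw [hmu0]
        omega
  | succ ℓ ih =>
    obtain ⟨H, F, hsub, hFcard, hprop⟩ := ih
    set T := TT b s with hTdef
    set Nl := NN b s ℓ with hNldef
    set Gq := gg s ℓ with hGqdef
    have hNl : 0 < Nl := NN_pos b s ℓ
    have hGqpos : 0 < Gq := gg_pos s ℓ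
    have hGqNl : Gq ≤ Nl := gg_le_NN hb ℓ
    have hmuGq : mu s ℓ = 4 * Gq := (four_gg s ℓ).symm
    obtain ⟨E, hEmem, hEcard, hEhit⟩ := connector_exists Nl Gq hGqpos hGqNl
    have hdiv : ∀ (i v : ℕ), v < Nl → (i*Nl + v)/Nl = i ∧ (i*Nl + v) % Nl = v := by
      intro i v hv
      constructor
      · rw [add_comm, Nat.add_mul_div_right _ _ hNl, Nat.div_eq_of_lt hv, Nat.zero_add]
      · rw [add_comm, Nat.add_mul_mod_self_right, Nat.mod_eq_of_lt hv]
    -- the new graph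
    set H' : SimpleGraph ℕ := {
      Adj := fun x y => (x < T*Nl ∧ y < T*Nl) ∧
        ((x/Nl = y/Nl ∧ H.Adj (x % Nl) (y % Nl)) ∨
         (x/Nl < y/Nl ∧ (x % Nl, y % Nl) ∈ E) ∨
         (y/Nl < x/Nl ∧ (y % Nl, x % Nl) ∈ E))
      symm := by
        refine ⟨?_⟩
        rintro x y ⟨⟨hx, hy⟩, hcase⟩
        refine ⟨⟨hy, hx⟩, ?_⟩
        rcases hcase with ⟨h1, h2⟩ | ⟨h1, h2⟩ | ⟨h1, h2⟩
        · exact Or.inl ⟨h1.symm, h2.symm⟩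
        · exact Or.inr (Or.inr ⟨h1, h2⟩)
        · exact Or.inr (Or.inl ⟨h1, h2⟩)
      loopless := by
        refine ⟨?_⟩
        rintro x ⟨_, hcase⟩
        rcases hcase with ⟨_, h2⟩ | ⟨h1, _⟩ | ⟨h1, _⟩
        · exact H.loopless.irrefl _ h2
        · exact absurd h1 (lt_irrefl _)
        · exact absurd h1 (lt_irrefl _) } with hH'def
    have hAdjBlock : ∀ (i a a' : ℕ), i < T → a < Nl → a' < Nl → H.Adj a a' →
        H'.Adj (i*Nl + a) (i*Nl + a') := by
      intro i a a' hi ha ha' hadj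
      have h1 := hdiv i a ha
      have h2 := hdiv i a' ha'
      have hb1 : i*Nl + a < T*Nl := by
        have : (i+1)*Nl ≤ T*Nl := Nat.mul_le_mul_right _ (by omega)
        rw [Nat.succ_mul] at this
        omega
      have hb2 : i*Nl + a' < T*Nl := by
        have : (i+1)*Nl ≤ T*Nl := Nat.mul_le_mul_right _ (by omega)
        rw [Nat.succ_mul] at this
        omega
      exact ⟨⟨hb1, hb2⟩, Or.inl ⟨by rw [h1.1, h2.1], by rw [h1.2, h2.2]; exact hadj⟩⟩
    have hAdjCross : ∀ (i j : ℕ), i < T → j < T → i < j → ∀ p ∈ E,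
        H'.Adj (i*Nl + p.1) (j*Nl + p.2) := by
      intro i j hi hj hij p hp
      obtain ⟨hp1, hp2⟩ := hEmem p hp
      have h1 := hdiv i p.1 hp1
      have h2 := hdiv j p.2 hp2
      have hb1 : i*Nl + p.1 < T*Nl := by
        have : (i+1)*Nl ≤ T*Nl := Nat.mul_le_mul_right _ (by omega)
        rw [Nat.succ_mul] at this
        omega
      have hb2 : j*Nl + p.2 < T*Nl := by
        have : (j+1)*Nl ≤ T*Nl := Nat.mul_le_mul_right _ (by omega)
        rw [Nat.succ_mul] at this
        omega
      refine ⟨⟨hb1, hb2⟩, Or.inr (Or.inl ⟨?_, ?_⟩)⟩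
      · rw [h1.1, h2.1]; exact hij
      · rw [h1.2, h2.2]; exact hp
    -- edge collection
    refine ⟨H', ((range T) ×ˢ F).image (fun p => Sym2.map (fun v => p.1*Nl + v) p.2) ∪
      (((range T) ×ˢ (range T)) ×ˢ E).image
        (fun p => s(p.1.1*Nl + p.2.1, p.1.2*Nl + p.2.2)), ?_, ?_, ?_⟩
    · -- edgeSet ⊆ F'
      intro e
      induction e using Sym2.ind with
      | _ x y =>
        intro he
        rw [SimpleGraph.mem_edgeSet] at he
        obtain ⟨⟨hx, hy⟩, hcase⟩ := he
        have hxd : x/Nl < T := by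
          rw [Nat.div_lt_iff_lt_mul hNl]; exact hx
        have hyd : y/Nl < T := by
          rw [Nat.div_lt_iff_lt_mul hNl]; exact hy
        have hxm : x/Nl*Nl + x % Nl = x := Nat.div_add_mod' x Nl
        have hym : y/Nl*Nl + y % Nl = y := Nat.div_add_mod' y Nl
        rcases hcase with ⟨h1, h2⟩ | ⟨h1, h2⟩ | ⟨h1, h2⟩
        · refine Finset.mem_coe.2 (Finset.mem_union_left _ (Finset.mem_image.2
            ⟨(x/Nl, s(x % Nl, y % Nl)), ?_, ?_⟩))
          · rw [Finset.mem_product]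
            refine ⟨Finset.mem_range.2 hxd, ?_⟩
            exact Finset.mem_coe.1 (hsub ((H.mem_edgeSet).2 h2))
          · rw [Sym2.map_pair_eq]
            have hym' : x/Nl*Nl + y % Nl = y := by rw [h1]; exact hym
            rw [hxm, hym']
        · refine Finset.mem_coe.2 (Finset.mem_union_right _ (Finset.mem_image.2
            ⟨((x/Nl, y/Nl), (x % Nl, y % Nl)), ?_, ?_⟩))
          · rw [Finset.mem_product, Finset.mem_product]
            exact ⟨⟨Finset.mem_range.2 hxd, Finset.mem_range.2 hyd⟩, h2⟩
          · simp only
            rw [hxm, hym]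
        · refine Finset.mem_coe.2 (Finset.mem_union_right _ (Finset.mem_image.2
            ⟨((y/Nl, x/Nl), (y % Nl, x % Nl)), ?_, ?_⟩))
          · rw [Finset.mem_product, Finset.mem_product]
            exact ⟨⟨Finset.mem_range.2 hyd, Finset.mem_range.2 hxd⟩, h2⟩
          · simp only
            rw [hym, hxm]
            exact Sym2.eq_swap
    · -- cardinality of F'
      have h1 : (((range T) ×ˢ F).image (fun p => Sym2.map (fun v => p.1*Nl + v) p.2)).card
          ≤ T * F.card := by
        calc _ ≤ ((range T) ×ˢ F).card := Finset.card_image_le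
          _ = T * F.card := by rw [Finset.card_product, Finset.card_range]
      have h2 : ((((range T) ×ˢ (range T)) ×ˢ E).image
          (fun p => s(p.1.1*Nl + p.2.1, p.1.2*Nl + p.2.2))).card ≤ T^2 * E.card := by
        calc _ ≤ (((range T) ×ˢ (range T)) ×ˢ E).card := Finset.card_image_le
          _ = T^2 * E.card := by
            rw [Finset.card_product, Finset.card_product, Finset.card_range]
            ring
      calc _ ≤ _ := Finset.card_union_le _ _
        _ ≤ T * F.card + T^2 * E.card := Nat.add_le_add h1 h2
        _ ≤ T * EB b s ℓ + T^2 * Kc b s ℓ := by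
          have h3 : T * F.card ≤ T * EB b s ℓ := Nat.mul_le_mul_left _ hFcard
          have h4 : T^2 * E.card ≤ T^2 * Kc b s ℓ := Nat.mul_le_mul_left _ hEcard
          omega
        _ = EB b s (ℓ+1) := (EB_succ b s ℓ).symm
    · -- the coloring property
      intro col
      choose ci Si hSi1 hSi2 hSi3 hSi4 using fun i : ℕ => hprop (fun v => col (i*Nl + v))
      have hpig : (univ : Finset (Fin b)).card * (kk s - 1) < (range T).card := by
        rw [Finset.card_univ, Fintype.card_fin, Finset.card_range, hTdef, TT]
        have hk := four_le_kk s
        omega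
      obtain ⟨c, _, hc⟩ := Finset.exists_lt_card_fiber_of_mul_lt_card_of_maps_to
        (fun i (_ : i ∈ range T) => Finset.mem_univ (ci i)) hpig
      set Bset := (range T).filter (fun i => ci i = c) with hBdef
      have hBk : kk s ≤ Bset.card := by
        have hk := four_le_kk s
        omega
      have hBsub : ∀ j ∈ Bset, j < T ∧ ci j = c := by
        intro j hj
        rw [hBdef, Finset.mem_filter, Finset.mem_range] at hj
        exact hj
      -- blocks
      set SS : ℕ → Finset ℕ := fun i => (Si i).image (fun v => i*Nl + v) with hSSdef
      have hSsub : ∀ i, i < T → SS i ⊆ Finset.Ico (i*Nl) (i*Nl + Nl) := by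
        intro i _ x hx
        obtain ⟨v, hv, rfl⟩ := Finset.mem_image.1 hx
        have := Finset.mem_range.1 (hSi1 i hv)
        rw [Finset.mem_Ico]
        omega
      have hScard : ∀ i, i < T → 4*Gq ≤ (SS i).card := by
        intro i _
        have hinj : ((Si i).image (fun v => i*Nl + v)).card = (Si i).card := by
          apply Finset.card_image_of_injective
          intro a b' hab
          simpa using hab
        rw [hSSdef]
        simp only
        rw [hinj]
        have := hSi4 i
        omega
      have hSlink : ∀ i, i < T → Linked H' (SS i) := by
        intro i hi x hx y hy hxy hsep
        obtain ⟨vx, hvx, rfl⟩ := Finset.mem_image.1 hx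
        obtain ⟨vy, hvy, rfl⟩ := Finset.mem_image.1 hy
        have hvxN := Finset.mem_range.1 (hSi1 i hvx)
        have hvyN := Finset.mem_range.1 (hSi1 i hvy)
        have hvxy : vx < vy := by omega
        have hHadj : H.Adj vx vy := by
          refine hSi3 i hvx hvy hvxy ?_
          intro z hz
          have := hsep (i*Nl + z) (Finset.mem_image.2 ⟨z, hz, rfl⟩)
          omega
        exact hAdjBlock i vx vy hi hvxN hvyN hHadj
      -- sorted list of good blocks
      have hLlen : (Bset.sort (· ≤ ·)).length = Bset.card := Finset.length_sort _
      have hLsorted : (Bset.sort (· ≤ ·)).Pairwise (· < ·) := (Finset.sortedLT_sort _).pairwise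
      have hLmem : ∀ j ∈ (Bset.sort (· ≤ ·)), j ∈ Bset := fun j hj => (Finset.mem_sort _).1 hj
      rcases hL : Bset.sort (· ≤ ·) with _ | ⟨i0, L0⟩
      · rw [hL] at hLlen
        have hk := four_le_kk s
        simp at hLlen
        omega
      rw [hL] at hLsorted hLmem
      obtain ⟨Q, hQlink, hQmem, hQcard, _⟩ := chain_lemma H' Nl Gq hGqpos (fun i => i < T)
        E hEmem hEhit hAdjCross SS hSsub hScard hSlink L0 i0 hLsorted
        (fun j hj => (hBsub j (hLmem j hj)).1)
      refine ⟨c, Q, ?_, ?_, hQlink, ?_⟩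
      · -- Q ⊆ range (NN b s (ℓ+1))
        intro v hv
        obtain ⟨j, hj, hvj⟩ := hQmem v hv
        have hjT := (hBsub j (hLmem j hj)).1
        have := (Finset.mem_Ico.1 (hSsub j hjT hvj)).2
        rw [Finset.mem_range, NN_succ, ← hTdef, ← hNldef]
        have h8 : j*Nl + Nl ≤ T*Nl := by
          have := Nat.mul_le_mul_right Nl (show j+1 ≤ T by omega)
          rwa [Nat.succ_mul] at this
        omega
      · -- monochromatic
        intro v hv
        obtain ⟨j, hj, hvj⟩ := hQmem v hv
        obtain ⟨w, hw, rfl⟩ := Finset.mem_image.1 hvj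
        rw [hSi2 j w hw]
        exact (hBsub j (hLmem j hj)).2
      · -- cardinality
        have h1 : L0.length + 1 = Bset.card := by
          rw [← hLlen, hL]
          simp
        have h2 : 2*Gq*(kk s) ≤ 2*Gq*(L0.length+1) := by
          apply Nat.mul_le_mul_left
          omega
        have h3 : 2*Gq*(kk s) = mu s (ℓ+1) := by
          rw [← kk_mul_two_gg s ℓ]
        omega



lemma aa_pos {s : ℕ} (hs : 2 ≤ s) : 1 ≤ aa s := Nat.clog_pos (by omega) (by omega)

lemma qq_le_DD (s : ℕ) : qq s ≤ DD s := by
  have h1 : aa s < (Nat.sqrt (aa s) + 1) * (Nat.sqrt (aa s) + 1) := by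
    have h := Nat.lt_succ_sqrt' (aa s)
    simpa [pow_two, Nat.succ_eq_add_one] using h
  have h2 : aa s / (Nat.sqrt (aa s) + 1) ≤ Nat.sqrt (aa s) := by
    by_contra h
    push_neg at h
    have h3 := Nat.div_mul_le_self (aa s) (Nat.sqrt (aa s) + 1)
    have h4 : (Nat.sqrt (aa s) + 1) * (Nat.sqrt (aa s) + 1)
        ≤ (aa s / (Nat.sqrt (aa s) + 1)) * (Nat.sqrt (aa s) + 1) :=
      Nat.mul_le_mul_right _ (by omega)
    omega
  simp only [qq, DD]
  omega

lemma TT_le {b s : ℕ} (hb : 1 ≤ b) : TT b s ≤ 2*b*2^(qq s) := by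
  have h : TT b s ≤ b * kk s := by
    simp only [TT]
    have hk := four_le_kk s
    have : b * (kk s - 1) + b ≤ b * kk s := by
      rw [← Nat.mul_succ]
      exact Nat.mul_le_mul_left _ (by omega)
    omega
  calc TT b s ≤ b * kk s := h
    _ = 2*b*2^(qq s) := by rw [kk, pow_succ]; ring

lemma two_pow_aa_le {s : ℕ} (hs : 2 ≤ s) : 2^(aa s) ≤ 2*s := by
  have h1 : 2^(aa s - 1) < s := Nat.pow_pred_clog_lt_self (by omega) (by omega)
  have h2 := aa_pos hs
  have h3 : 2^(aa s) = 2 * 2^(aa s - 1) := by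
    rw [← pow_succ']
    congr 1
    omega
  omega

lemma aa_le_qq_mul_DD (s : ℕ) : aa s < qq s * DD s := by
  have h1 := Nat.div_add_mod (aa s) (DD s)
  have h2 : aa s % DD s < DD s := Nat.mod_lt _ (by simp [DD])
  have h3 : qq s * DD s = (aa s / DD s) * DD s + DD s := by rw [qq]; ring
  have h4 : (aa s / DD s) * DD s = DD s * (aa s / DD s) := by ring
  omega

lemma s_lt_mu {s : ℕ} (hs : 2 ≤ s) : s + 1 ≤ mu s (DD s) := by
  have h1 : aa s + 1 ≤ qq s * DD s + qq s + 1 := by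
    have := aa_le_qq_mul_DD s
    omega
  have h2 : 2^(aa s + 1) ≤ mu s (DD s) := Nat.pow_le_pow_right (by omega) h1
  have h3 : s ≤ 2^(aa s) := Nat.le_pow_clog (by omega) s
  have h4 : 2^(aa s + 1) = 2 * 2^(aa s) := by rw [pow_succ]; ring
  omega

lemma D_le_two_pow (D : ℕ) : D ≤ 2^D := Nat.le_of_lt (Nat.lt_two_pow_self)

lemma two_b_le_two_pow {b : ℕ} (hb : 2 ≤ b) : 2*b ≤ 2^b := by
  induction b with
  | zero => omega
  | succ n ih =>
    rcases Nat.lt_or_ge n 2 with h | h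
    · interval_cases n <;> simp_all <;> omega
    · have := ih h
      have h2 : 2^n ≥ 2 := by
        calc (2:ℕ) = 2^1 := rfl
          _ ≤ 2^n := Nat.pow_le_pow_right (by omega) (by omega)
      rw [pow_succ]
      omega

-- Kc bound
lemma Kc_le {b s : ℕ} (hb : 2 ≤ b) (ℓ : ℕ) :
    Kc b s ℓ ≤ 12*(Nat.log 2 (NN b s ℓ)+1)*((2*b)^(ℓ+1)*TT b s^(ℓ+1)) := by
  set Nl := NN b s ℓ
  set g := gg s ℓ
  set P := Nat.log 2 Nl + 1
  have hg : 0 < g := gg_pos s ℓ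
  have hgNl : g ≤ Nl := gg_le_NN hb ℓ
  have hP : 1 ≤ P := by omega
  have h1 : Nl^2/g^2 + 1 ≤ 2*(Nl^2/g^2) := by
    have : 1 ≤ Nl^2/g^2 := by
      rw [Nat.one_le_div_iff (by positivity)]
      exact Nat.pow_le_pow_left hgNl 2
    omega
  have h2 : 2*g*P + 1 ≤ 3*(g*P) := by
    have hgp : 0 < g*P := Nat.mul_pos hg (by omega)
    have hexp : 2*g*P = 2*(g*P) := by ring
    omega
  have h3 : Kc b s ℓ ≤ (2*(Nl^2/g^2)) * (3*(g*P)) := Nat.mul_le_mul h1 h2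
  have h4 : (2*(Nl^2/g^2)) * (3*(g*P)) = 6*P*((Nl^2/g^2)*g) := by ring
  have h5 : (Nl^2/g^2)*g ≤ Nl^2/g := by
    rw [Nat.le_div_iff_mul_le hg]
    calc (Nl^2/g^2)*g*g = (Nl^2/g^2)*g^2 := by ring
      _ ≤ Nl^2 := Nat.div_mul_le_self _ _
  -- T^(ℓ+1) ≤ (2b)^(ℓ+1) * (2*g)
  have hTpow : TT b s^(ℓ+1) ≤ (2*b)^(ℓ+1) * (2*g) := by
    have hT : TT b s ≤ 2*b*2^(qq s) := TT_le (by omega)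
    have h6 : TT b s^(ℓ+1) ≤ (2*b*2^(qq s))^(ℓ+1) := Nat.pow_le_pow_left hT _
    have h7 : (2*b*2^(qq s))^(ℓ+1) = (2*b)^(ℓ+1) * (2^(qq s))^(ℓ+1) := by rw [mul_pow]
    have h8 : (2^(qq s))^(ℓ+1) = 2*g := by
      have hq := one_le_qq s
      rw [← pow_mul]
      have : qq s * (ℓ+1) = 1 + (qq s * ℓ + qq s - 1) := by
        have : qq s * (ℓ+1) = qq s * ℓ + qq s := by ring
        omega
      rw [this, pow_add, pow_one]
      rfl
    rw [h7, h8] at h6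
    exact h6
  have h9 : Nl^2/g ≤ 2*((2*b)^(ℓ+1)*TT b s^(ℓ+1)) := by
    have h10 : Nl^2 = TT b s^(ℓ+1) * TT b s^(ℓ+1) := by
      rw [show Nl = TT b s^(ℓ+1) from rfl]
      ring
    have h11 : Nl^2 ≤ (2*((2*b)^(ℓ+1)*TT b s^(ℓ+1))) * g := by
      rw [h10]
      calc TT b s^(ℓ+1) * TT b s^(ℓ+1) ≤ TT b s^(ℓ+1) * ((2*b)^(ℓ+1) * (2*g)) :=
          Nat.mul_le_mul_left _ hTpow
        _ = (2*((2*b)^(ℓ+1)*TT b s^(ℓ+1))) * g := by ring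
    calc Nl^2/g ≤ ((2*((2*b)^(ℓ+1)*TT b s^(ℓ+1))) * g)/g := Nat.div_le_div_right h11
      _ = 2*((2*b)^(ℓ+1)*TT b s^(ℓ+1)) := Nat.mul_div_cancel _ hg
  calc Kc b s ℓ ≤ 6*P*((Nl^2/g^2)*g) := by rw [← h4]; exact h3
    _ ≤ 6*P*(Nl^2/g) := Nat.mul_le_mul_left _ h5
    _ ≤ 6*P*(2*((2*b)^(ℓ+1)*TT b s^(ℓ+1))) := Nat.mul_le_mul_left _ h9
    _ = 12*P*((2*b)^(ℓ+1)*TT b s^(ℓ+1)) := by ring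

-- EB bound by induction
lemma EB_le {b s : ℕ} (hb : 2 ≤ b) :
    ∀ ℓ, ℓ ≤ DD s →
      EB b s ℓ ≤ TT b s^(ℓ+2) * (1 + ℓ * (12*(Nat.log 2 (NN b s (DD s))+1)*(2*b)^(DD s))) := by
  set W := 12*(Nat.log 2 (NN b s (DD s))+1)*(2*b)^(DD s) with hW
  intro ℓ
  induction ℓ with
  | zero =>
    intro _
    simp [EB]
  | succ ℓ ih =>
    intro hld
    have hih := ih (by omega)
    have hKc : Kc b s ℓ ≤ TT b s^(ℓ+1) * W := by
      have h1 := Kc_le hb (s := s) ℓ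
      have h2 : Nat.log 2 (NN b s ℓ) ≤ Nat.log 2 (NN b s (DD s)) := by
        apply Nat.log_mono_right
        rw [NN, NN]
        exact Nat.pow_le_pow_right (TT_pos b s) (by omega)
      have h3 : (2*b)^(ℓ+1) ≤ (2*b)^(DD s) := Nat.pow_le_pow_right (by omega) (by omega)
      calc Kc b s ℓ ≤ 12*(Nat.log 2 (NN b s ℓ)+1)*((2*b)^(ℓ+1)*TT b s^(ℓ+1)) := h1
        _ ≤ 12*(Nat.log 2 (NN b s (DD s))+1)*((2*b)^(DD s)*TT b s^(ℓ+1)) := by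
            apply Nat.mul_le_mul
            · omega
            · exact Nat.mul_le_mul_right _ h3
        _ = TT b s^(ℓ+1) * W := by rw [hW]; ring
    calc EB b s (ℓ+1) = TT b s * EB b s ℓ + TT b s^2 * Kc b s ℓ := EB_succ b s ℓ
      _ ≤ TT b s * (TT b s^(ℓ+2) * (1 + ℓ*W)) + TT b s^2 * (TT b s^(ℓ+1) * W) := by
          apply Nat.add_le_add
          · exact Nat.mul_le_mul_left _ hih
          · exact Nat.mul_le_mul_left _ hKc
      _ = TT b s^(ℓ+3) * (1 + ℓ*W) + TT b s^(ℓ+3) * W := by ring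
      _ = TT b s^(ℓ+1+2) * (1 + (ℓ+1)*W) := by ring

-- final ℕ bound
lemma EB_final {b s : ℕ} (hb : 2 ≤ b) (hs : 2 ≤ s) :
    EB b s (DD s) ≤ s * (2*b)^(9*DD s + 18) := by
  set D := DD s with hD
  set W := 12*(Nat.log 2 (NN b s D)+1)*(2*b)^D with hW
  have h0 : EB b s D ≤ TT b s^(D+2) * (1 + D*W) := EB_le hb D (le_refl _)
  -- T^(D+2) ≤ (2b)^(D+2) * (2*s*2^(3D))
  have hq := qq_le_DD s
  have hTD : TT b s^(D+2) ≤ (2*b)^(D+2) * (2*s*2^(3*D)) := by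
    have h1 : TT b s^(D+2) ≤ (2*b*2^(qq s))^(D+2) := Nat.pow_le_pow_left (TT_le (by omega)) _
    have h2 : (2*b*2^(qq s))^(D+2) = (2*b)^(D+2) * 2^(qq s*(D+2)) := by
      rw [mul_pow, ← pow_mul]
    have h3 : qq s*(D+2) ≤ aa s + 3*D := by
      have h4 := aa_le_qq_mul_DD s
      have h5 : qq s*(D+2) = qq s*D + 2*qq s := by ring
      have h6 : qq s * D ≤ aa s + D := by
        have h7 : qq s * D = (aa s/D)*D + D := by rw [qq, ← hD]; ring
        have h8 : (aa s/D)*D ≤ aa s := Nat.div_mul_le_self _ _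
        omega
      omega
    have h9 : 2^(qq s*(D+2)) ≤ 2^(aa s) * 2^(3*D) :=
      le_trans (Nat.pow_le_pow_right (by omega) h3) (le_of_eq (pow_add 2 _ _))
    have h10 := two_pow_aa_le hs
    calc TT b s^(D+2) ≤ (2*b)^(D+2) * 2^(qq s*(D+2)) := by rw [← h2]; exact h1
      _ ≤ (2*b)^(D+2) * (2^(aa s) * 2^(3*D)) := Nat.mul_le_mul_left _ h9
      _ ≤ (2*b)^(D+2) * (2*s*2^(3*D)) := by
          apply Nat.mul_le_mul_left
          exact Nat.mul_le_mul_right _ h10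
  -- PD + 1 ≤ (2b)^(2D+4)
  have hPD : Nat.log 2 (NN b s D) + 1 ≤ (2*b)^(2*D+4) := by
    have h1 : TT b s ≤ 2^(b+D) := by
      calc TT b s ≤ 2*b*2^(qq s) := TT_le (by omega)
        _ ≤ 2^b * 2^D := Nat.mul_le_mul (two_b_le_two_pow hb)
            (Nat.pow_le_pow_right (by omega) hq)
        _ = 2^(b+D) := (pow_add 2 b D).symm
    have h2 : NN b s D ≤ 2^((b+D)*(D+1)) := by
      calc NN b s D = TT b s^(D+1) := rfl
        _ ≤ (2^(b+D))^(D+1) := Nat.pow_le_pow_left h1 _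
        _ = 2^((b+D)*(D+1)) := by rw [← pow_mul]
    have h3 : Nat.log 2 (NN b s D) ≤ (b+D)*(D+1) := by
      calc Nat.log 2 (NN b s D) ≤ Nat.log 2 (2^((b+D)*(D+1))) := Nat.log_mono_right h2
        _ = (b+D)*(D+1) := Nat.log_pow (by norm_num) ((b+D)*(D+1))
    have hD2 : D ≤ 2^D := D_le_two_pow D
    have h2D : (2:ℕ)^D ≤ (2*b)^D := Nat.pow_le_pow_left (by omega) D
    have h4 : b + D ≤ (2*b)^(D+1) := by
      have hb1 : b ≤ b * 2^D := Nat.le_mul_of_pos_right _ (by positivity)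
      have hd1 : D ≤ b * 2^D := by
        calc D ≤ 2^D := hD2
          _ ≤ b * 2^D := Nat.le_mul_of_pos_left _ (by omega)
      have hsum : b + D ≤ 2*(b*2^D) := by omega
      calc b + D ≤ 2*(b*2^D) := hsum
        _ = 2*b*2^D := by ring
        _ ≤ (2*b) * (2*b)^D := Nat.mul_le_mul_left _ h2D
        _ = (2*b)^(D+1) := by rw [pow_succ]; ring
    have h5 : D + 1 ≤ (2*b)^(D+1) := by
      calc D + 1 ≤ 2^(D+1) := Nat.le_of_lt (Nat.lt_two_pow_self)
        _ ≤ (2*b)^(D+1) := Nat.pow_le_pow_left (by omega) _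
    have h6 : (b+D)*(D+1) ≤ (2*b)^(2*D+2) := by
      calc (b+D)*(D+1) ≤ (2*b)^(D+1) * (2*b)^(D+1) := Nat.mul_le_mul h4 h5
        _ = (2*b)^(2*D+2) := by rw [← pow_add]; ring_nf
    have h7 : 1 ≤ (2*b)^(2*D+2) := Nat.one_le_pow _ _ (by omega)
    have h8 : (2*b)^(2*D+2) + (2*b)^(2*D+2) ≤ (2*b)^(2*D+4) := by
      have : (2:ℕ) * (2*b)^(2*D+2) ≤ (2*b)^2 * (2*b)^(2*D+2) := by
        apply Nat.mul_le_mul_right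
        calc (2:ℕ) ≤ 2*b := by omega
          _ = (2*b)^1 := (pow_one _).symm
          _ ≤ (2*b)^2 := Nat.pow_le_pow_right (by omega) (by omega)
      calc (2*b)^(2*D+2) + (2*b)^(2*D+2) = 2 * (2*b)^(2*D+2) := by ring
        _ ≤ (2*b)^2 * (2*b)^(2*D+2) := this
        _ = (2*b)^(2*D+4) := by rw [← pow_add]; ring_nf
    omega
  -- 1 + D*W ≤ 13*(2b)^(4D+4)
  have hDle : D ≤ (2*b)^D := by
    calc D ≤ 2^D := D_le_two_pow D
      _ ≤ (2*b)^D := Nat.pow_le_pow_left (by omega) D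
  have hDW : 1 + D*W ≤ 13 * (2*b)^(4*D+4) := by
    have hWle : W ≤ 12 * (2*b)^(2*D+4) * (2*b)^D := by
      rw [hW]
      apply Nat.mul_le_mul_right
      exact Nat.mul_le_mul_left _ hPD
    have hDW2 : D * W ≤ (2*b)^D * (12*(2*b)^(2*D+4)*(2*b)^D) := Nat.mul_le_mul hDle hWle
    have heq : (2*b)^D * (12*(2*b)^(2*D+4)*(2*b)^D) = 12*(2*b)^(4*D+4) := by
      rw [show 4*D+4 = D + ((2*D+4) + D) by ring, pow_add, pow_add]
      ring
    have hDW3 : D * W ≤ 12*((2*b)^(4*D+4)) := by rw [heq] at hDW2; omega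
    have h1le : 1 ≤ (2*b)^(4*D+4) := Nat.one_le_pow _ _ (by omega)
    omega
  -- assemble
  have h26 : (26:ℕ) ≤ (2*b)^5 := by
    calc (26:ℕ) ≤ 2^5 := by norm_num
      _ ≤ (2*b)^5 := Nat.pow_le_pow_left (by omega) 5
  have h3D : (2:ℕ)^(3*D) ≤ (2*b)^(3*D) := Nat.pow_le_pow_left (by omega) _
  calc EB b s D ≤ TT b s^(D+2) * (1 + D*W) := h0
    _ ≤ ((2*b)^(D+2) * (2*s*2^(3*D))) * (13 * (2*b)^(4*D+4)) := Nat.mul_le_mul hTD hDW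
    _ = s * (26 * ((2*b)^(D+2) * (2^(3*D) * (2*b)^(4*D+4)))) := by ring
    _ ≤ s * (((2*b)^5) * ((2*b)^(D+2) * ((2*b)^(3*D) * (2*b)^(4*D+4)))) := by
        apply Nat.mul_le_mul_left
        apply Nat.mul_le_mul h26
        apply Nat.mul_le_mul_left
        exact Nat.mul_le_mul_right _ h3D
    _ = s * (2*b)^(8*D+11) := by ring
    _ ≤ s * (2*b)^(9*D+18) := by
        apply Nat.mul_le_mul_left
        apply Nat.pow_le_pow_right (by omega)
        omega



lemma aux_aa_le {s : ℕ} (hs : 2 ≤ s) : aa s ≤ Nat.log 2 s + 1 := by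
  have h1 : 2^(aa s - 1) < s := Nat.pow_pred_clog_lt_self (by omega) (by omega)
  have h2 : aa s - 1 ≤ Nat.log 2 s := by
    rw [Nat.le_log_iff_pow_le (by omega) (by omega)]
    omega
  have h3 : 1 ≤ aa s := Nat.clog_pos (by omega) (by omega)
  omega

lemma real_bound {b s : ℕ} (hb : 2 ≤ b) (hs : 2 ≤ s) :
    ((s * (2*b)^(9*DD s + 18) : ℕ) : ℝ) ≤
      (s : ℝ) * Real.exp (200 * Real.log b * Real.sqrt (Real.log s)) := by
  have hlog2pos : (0:ℝ) < Real.log 2 := Real.log_pos (by norm_num)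
  have hlog2 : (0.6931:ℝ) ≤ Real.log 2 := by
    have := Real.log_two_gt_d9
    linarith
  have hbR : (2:ℝ) ≤ (b:ℝ) := by exact_mod_cast hb
  have hsR : (2:ℝ) ≤ (s:ℝ) := by exact_mod_cast hs
  have hlogb : Real.log 2 ≤ Real.log b := Real.log_le_log (by norm_num) hbR
  have hlogs : Real.log 2 ≤ Real.log s := Real.log_le_log (by norm_num) hsR
  have hlogspos : (0:ℝ) < Real.log s := lt_of_lt_of_le hlog2pos hlogs
  set σ := Real.sqrt (Real.log s) with hσdef
  have hσ0 : 0 ≤ σ := Real.sqrt_nonneg _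
  have hσ83 : (0.83:ℝ) ≤ σ := by
    have h1 : (0.83:ℝ)^2 ≤ Real.log s := by nlinarith
    have h2 : (0.83:ℝ) = Real.sqrt (0.83^2) := (Real.sqrt_sq (by norm_num)).symm
    rw [h2, hσdef]
    exact Real.sqrt_le_sqrt h1
  -- D ≤ 3σ
  have hD3 : (DD s : ℝ) ≤ 3 * σ := by
    have h1 : (aa s : ℝ) ≤ (2 / Real.log 2) * Real.log s := by
      have h2 : (aa s : ℝ) ≤ (Nat.log 2 s : ℝ) + 1 := by
        exact_mod_cast aux_aa_le hs
      have h3 : (Nat.log 2 s : ℝ) * Real.log 2 ≤ Real.log s := by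
        have h4 : (2:ℕ)^(Nat.log 2 s) ≤ s := Nat.pow_log_le_self 2 (by omega)
        have h5 : ((2:ℝ))^(Nat.log 2 s) ≤ (s:ℝ) := by exact_mod_cast h4
        have h6 := Real.log_le_log (by positivity) h5
        rw [Real.log_pow] at h6
        linarith
      have h7 : (Nat.log 2 s : ℝ) ≤ Real.log s / Real.log 2 := by
        rw [le_div_iff₀ hlog2pos]
        exact h3
      have h8 : (1:ℝ) ≤ Real.log s / Real.log 2 := by
        rw [le_div_iff₀ hlog2pos]
        linarith
      have h8b : (2 / Real.log 2) * Real.log s = 2 * (Real.log s / Real.log 2) := by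
        ring
      linarith
    have h9 : (Nat.sqrt (aa s) : ℝ) ≤ Real.sqrt (aa s) := by
      have h10 : ((Nat.sqrt (aa s))^2 : ℝ) ≤ (aa s : ℝ) := by
        exact_mod_cast Nat.sqrt_le' (aa s)
      have h11 : (Nat.sqrt (aa s) : ℝ) = Real.sqrt ((Nat.sqrt (aa s) : ℝ)^2) :=
        (Real.sqrt_sq (by positivity)).symm
      rw [h11]
      exact Real.sqrt_le_sqrt h10
    have h12 : Real.sqrt (aa s) ≤ Real.sqrt ((2 / Real.log 2) * Real.log s) :=
      Real.sqrt_le_sqrt h1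
    have h13 : Real.sqrt ((2 / Real.log 2) * Real.log s)
        = Real.sqrt (2 / Real.log 2) * σ := by
      rw [hσdef, Real.sqrt_mul (by positivity)]
    have h14 : Real.sqrt (2 / Real.log 2) ≤ 1.75 := by
      have h15 : 2 / Real.log 2 ≤ (1.75:ℝ)^2 := by
        rw [div_le_iff₀ hlog2pos]
        nlinarith
      have h16 : (1.75:ℝ) = Real.sqrt ((1.75:ℝ)^2) := (Real.sqrt_sq (by norm_num)).symm
      rw [h16]
      exact Real.sqrt_le_sqrt h15
    have h17 : (DD s : ℝ) = (Nat.sqrt (aa s) : ℝ) + 1 := by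
      rw [DD]
      push_cast
      ring
    have h18 : (1:ℝ) ≤ 1.21 * σ := by nlinarith
    have h19 : Real.sqrt (2 / Real.log 2) * σ ≤ 1.75 * σ :=
      mul_le_mul_of_nonneg_right h14 hσ0
    nlinarith
  -- assemble
  have hm : ((9*DD s + 18 : ℕ) : ℝ) ≤ 100 * σ := by
    push_cast
    nlinarith
  have hx1 : (1:ℝ) ≤ 2*(b:ℝ) := by linarith
  have hxpos : (0:ℝ) < 2*(b:ℝ) := by linarith
  have hlogx : Real.log (2*(b:ℝ)) ≤ 2 * Real.log b := by
    rw [Real.log_mul (by norm_num) (by positivity)]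
    linarith
  have hlogxpos : 0 ≤ Real.log (2*(b:ℝ)) := Real.log_nonneg hx1
  have hcast : ((2*b:ℕ):ℝ) = 2*(b:ℝ) := by push_cast; ring
  have hpow : (((2*b)^(9*DD s + 18) : ℕ) : ℝ)
      = Real.exp (((9*DD s + 18 : ℕ) : ℝ) * Real.log (2*(b:ℝ))) := by
    rw [Nat.cast_pow, hcast, ← Real.log_pow, Real.exp_log (by positivity)]
  have hexp : ((9*DD s + 18 : ℕ) : ℝ) * Real.log (2*(b:ℝ))
      ≤ 200 * Real.log b * σ := by
    have h20 : ((9*DD s + 18 : ℕ) : ℝ) * Real.log (2*(b:ℝ)) ≤ (100*σ) * (2*Real.log b) := by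
      apply mul_le_mul hm hlogx hlogxpos (by positivity)
    calc ((9*DD s + 18 : ℕ) : ℝ) * Real.log (2*(b:ℝ)) ≤ (100*σ) * (2*Real.log b) := h20
      _ = 200 * Real.log b * σ := by ring
  calc ((s * (2*b)^(9*DD s + 18) : ℕ) : ℝ)
      = (s:ℝ) * (((2*b)^(9*DD s + 18) : ℕ) : ℝ) := by push_cast; ring
    _ = (s:ℝ) * Real.exp (((9*DD s + 18 : ℕ) : ℝ) * Real.log (2*(b:ℝ))) := by rw [hpow]
    _ ≤ (s:ℝ) * Real.exp (200 * Real.log b * σ) := by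
        apply mul_le_mul_of_nonneg_left _ (by positivity)
        exact Real.exp_le_exp.2 hexp
    _ = (s:ℝ) * Real.exp (200 * Real.log b * Real.sqrt (Real.log s)) := by rw [hσdef]


end MP


theorem stmt_8 :
    ∃ C : ℝ, 0 < C ∧ ∀ b s : ℕ, 2 ≤ b → 2 ≤ s →
      ∃ (n : ℕ) (G : SimpleGraph (Fin n)),
        (G.edgeSet.ncard : ℝ) ≤
          (s : ℝ) * Real.exp (C * Real.log b * Real.sqrt (Real.log s)) ∧
        ∀ col : Fin n → Fin b, ∃ v : Fin (s + 1) → Fin n,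
          IsMonoPath G v ∧ ∀ i : Fin (s + 1), col (v i) = col (v 0) := by
  classical
  refine ⟨200, by norm_num, ?_⟩
  intro b s hb hs
  obtain ⟨H, F, hsub, hFcard, hprop⟩ := MP.level hb hs (MP.DD s)
  set Gr : SimpleGraph (Fin (MP.NN b s (MP.DD s))) := SimpleGraph.comap (Fin.val) H
    with hGrdef
  refine ⟨MP.NN b s (MP.DD s), Gr, ?_, ?_⟩
  · -- edge bound
    have hmap : ∀ e ∈ Gr.edgeSet,
        Sym2.map (Fin.val) e ∈ (↑F : Set (Sym2 ℕ)) := by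
      intro e he
      induction e using Sym2.ind with
      | _ u v =>
        rw [SimpleGraph.mem_edgeSet] at he
        rw [Sym2.map_pair_eq]
        exact hsub ((H.mem_edgeSet).2 he)
    have hinj : Set.InjOn (Sym2.map (Fin.val)) Gr.edgeSet :=
      (Sym2.map.injective Fin.val_injective).injOn
    have hncard : Gr.edgeSet.ncard ≤ F.card := by
      have h := Set.ncard_le_ncard_of_injOn _ hmap hinj (F.finite_toSet)
      rwa [Set.ncard_coe_finset] at h
    calc (Gr.edgeSet.ncard : ℝ)
        ≤ (F.card : ℝ) := Nat.cast_le.2 hncard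
      _ ≤ ((MP.EB b s (MP.DD s) : ℕ) : ℝ) := Nat.cast_le.2 hFcard
      _ ≤ ((s * (2*b)^(9*MP.DD s + 18) : ℕ) : ℝ) := Nat.cast_le.2 (MP.EB_final hb hs)
      _ ≤ (s : ℝ) * Real.exp (200 * Real.log b * Real.sqrt (Real.log s)) :=
          MP.real_bound hb hs
  · -- path property
    intro col
    have hb0 : (0:ℕ) < b := by omega
    set colN : ℕ → Fin b := fun v =>
      if h : v < MP.NN b s (MP.DD s) then col ⟨v, h⟩ else ⟨0, hb0⟩ with hcolN
    obtain ⟨c, S, hSsub, hScol, hSlink, hScard⟩ := hprop colN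
    have hs1 : s + 1 ≤ S.card := le_trans (MP.s_lt_mu hs) hScard
    have hS'card : (MP.low (s+1) S).card = s+1 := MP.card_low hs1
    have hS'sub : MP.low (s+1) S ⊆ S := MP.low_subset
    have hS'link : MP.Linked H (MP.low (s+1) S) := MP.linked_low hSlink
    set emb := (MP.low (s+1) S).orderEmbOfFin hS'card with hembdef
    have hmem : ∀ i : Fin (s+1), emb i ∈ MP.low (s+1) S := fun i =>
      Finset.orderEmbOfFin_mem _ hS'card i
    have hlt : ∀ i : Fin (s+1), (emb i : ℕ) < MP.NN b s (MP.DD s) := fun i =>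
      Finset.mem_range.1 (hSsub (hS'sub (hmem i)))
    have hcol : ∀ i : Fin (s+1), col ⟨emb i, hlt i⟩ = c := by
      intro i
      have h2 := hScol (emb i) (hS'sub (hmem i))
      rw [hcolN] at h2
      simp only at h2
      rw [dif_pos (hlt i)] at h2
      exact h2
    refine ⟨fun i => ⟨emb i, hlt i⟩, ⟨?_, ?_⟩, ?_⟩
    · intro i j hij
      exact Fin.mk_lt_mk.2 (emb.strictMono hij)
    · intro i
      show H.Adj ((⟨emb i.castSucc, hlt _⟩ : Fin (MP.NN b s (MP.DD s))) : ℕ)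
        ((⟨emb i.succ, hlt _⟩ : Fin (MP.NN b s (MP.DD s))) : ℕ)
      apply hS'link (hmem _) (hmem _) (emb.strictMono (Fin.castSucc_lt_succ (i := i)))
      intro z hz
      have hzr : z ∈ Set.range ⇑emb := by
        rw [hembdef, Finset.range_orderEmbOfFin]
        exact hz
      obtain ⟨j, rfl⟩ := hzr
      rcases le_or_gt j i.castSucc with h | h
      · exact Or.inl (emb.monotone h)
      · right
        apply emb.monotone
        rw [Fin.le_def, Fin.val_succ]
        rw [Fin.lt_def, Fin.coe_castSucc] at h
        omega
    · intro i
      show col ⟨emb i, hlt i⟩ = col ⟨emb 0, hlt 0⟩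
      rw [hcol i, hcol 0]
end

section
/- Let G be an ordered graph with a coloring of its vertices, let c be a color, and let j, k, L be positive integers with L ≥ 2k. Suppose Q₁, …, Q_j are pairwise non-overlapping monotone paths in G, listed so that every vertex of Q_i precedes every vertex of Q_{i+1}, each having at least L + 1 vertices, all of which are colored c; and suppose that for each 1 ≤ i < j there is an edge of G joining one of the last k vertices of Q_i to one of the first k vertices of Q_{i+1}. Then G contains a monotone path of length at least j·(L − 2k) all of whose vertices are colored c. -/
lemma subpath_mono {n ℓ : ℕ} {G : SimpleGraph (Fin n)} {v : Fin (ℓ + 1) → Fin n}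
    (hv : IsMonoPath G v) (p q : ℕ) (hq : q ≤ ℓ) (hpq : p ≤ q) :
    IsMonoPath G (fun a : Fin (q - p + 1) => v ⟨p + a.val, by omega⟩) := by
  refine ⟨fun a b hab => hv.1 ?_, fun i => ?_⟩
  · simp only [Fin.lt_def] at *; omega
  · have h := hv.2 ⟨p + i.val, by omega⟩
    convert h using 2 <;> rfl

def concatFn {n m m' : ℕ} (v : Fin (m + 1) → Fin n) (w : Fin (m' + 1) → Fin n) :
    Fin (m + m' + 1 + 1) → Fin n :=
  fun a => if h : a.val ≤ m then v ⟨a.val, by omega⟩ else w ⟨a.val - (m + 1), by omega⟩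

lemma concat_mono {n m m' : ℕ} {G : SimpleGraph (Fin n)} {v : Fin (m + 1) → Fin n}
    {w : Fin (m' + 1) → Fin n} (hv : IsMonoPath G v) (hw : IsMonoPath G w)
    (hlt : v (Fin.last m) < w 0) (hadj : G.Adj (v (Fin.last m)) (w 0)) :
    IsMonoPath G (concatFn v w) := by
  have hvm : ∀ a : Fin (m + 1), v a ≤ v (Fin.last m) := fun a =>
    hv.1.monotone (by simp [Fin.le_def]; omega)
  have hwm : ∀ a : Fin (m' + 1), w 0 ≤ w a := fun a =>
    hw.1.monotone (by simp [Fin.le_def])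
  constructor
  · intro a b hab
    simp only [Fin.lt_def] at hab
    unfold concatFn
    by_cases ha : a.val ≤ m <;> by_cases hb : b.val ≤ m
    · rw [dif_pos ha, dif_pos hb]; exact hv.1 (Fin.mk_lt_mk.mpr hab)
    · rw [dif_pos ha, dif_neg hb]
      exact lt_of_le_of_lt (hvm _) (lt_of_lt_of_le hlt (hwm _))
    · omega
    · rw [dif_neg ha, dif_neg hb]; exact hw.1 (Fin.mk_lt_mk.mpr (by omega))
  · intro i
    unfold concatFn
    rcases lt_trichotomy i.val m with h | h | h
    · have h1 : (i.castSucc).val ≤ m := by simp; omega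
      have h2 : (i.succ).val ≤ m := by simp; omega
      rw [dif_pos h1, dif_pos h2]
      have := hv.2 ⟨i.val, h⟩
      convert this using 2 <;> rfl
    · have h1 : (i.castSucc).val ≤ m := by simp; omega
      have h2 : ¬ (i.succ).val ≤ m := by simp; omega
      rw [dif_pos h1, dif_neg h2]
      have e1 : (⟨(i.castSucc).val, by omega⟩ : Fin (m + 1)) = Fin.last m := by
        simp [Fin.ext_iff]; omega
      have e2 : (⟨(i.succ).val - (m + 1), by omega⟩ : Fin (m' + 1)) = 0 := by
        simp [Fin.ext_iff]; omega
      rw [e1, e2]; exact hadj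
    · have h1 : ¬ (i.castSucc).val ≤ m := by simp; omega
      have h2 : ¬ (i.succ).val ≤ m := by simp; omega
      rw [dif_neg h1, dif_neg h2]
      have := hw.2 ⟨i.val - (m + 1), by omega⟩
      convert this using 3 <;> simp [Fin.ext_iff] <;> omega

/-- Combining lemma: given `j` pairwise non-overlapping monotone paths `Q 0, …, Q (j-1)`
(in increasing order), each with at least `L + 1` vertices all colored `c`, such that
consecutive paths are joined by an edge from one of the last `k` vertices of one to one
of the first `k` vertices of the next, the graph contains a `c`-colored monotone path of
length at least `j * (L - 2k)`. -/
theorem stmt_9 {α : Type*} (n : ℕ) (G : SimpleGraph (Fin n)) (col : Fin n → α) (c : α)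
    (j k L : ℕ) (hj : 0 < j) (hk : 0 < k) (hL : 0 < L) (hLk : 2 * k ≤ L)
    (ℓ : ℕ → ℕ) (Q : (i : ℕ) → Fin (ℓ i + 1) → Fin n)
    (hlen : ∀ i, i < j → L ≤ ℓ i)
    (hpath : ∀ i, i < j → IsMonoPath G (Q i))
    (hcol : ∀ i, i < j → ∀ a, col (Q i a) = c)
    (horder : ∀ i₁ i₂, i₁ < i₂ → i₂ < j → ∀ a b, Q i₁ a < Q i₂ b)
    (hedge : ∀ i, i + 1 < j → ∃ (a : Fin (ℓ i + 1)) (b : Fin (ℓ (i + 1) + 1)),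
      ℓ i + 1 - k ≤ a.val ∧ b.val < k ∧ G.Adj (Q i a) (Q (i + 1) b)) :
    ∃ m : ℕ, j * (L - 2 * k) ≤ m ∧ ∃ v : Fin (m + 1) → Fin n,
      IsMonoPath G v ∧ ∀ a, col (v a) = c := by
  have key : ∀ i, i < j → ∀ a : Fin (ℓ i + 1), ℓ i + 1 - k ≤ a.val →
      ∃ m, (i + 1) * (L - 2 * k) ≤ m ∧ ∃ v : Fin (m + 1) → Fin n,
        IsMonoPath G v ∧ (∀ b, col (v b) = c) ∧ v (Fin.last m) = Q i a := by
    intro i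
    induction i with
    | zero =>
      intro hi a ha
      have hl0 := hlen 0 hi
      refine ⟨a.val, by omega, fun b => Q 0 ⟨0 + b.val, by omega⟩, ?_, fun b => hcol 0 hi _, ?_⟩
      · have := subpath_mono (hpath 0 hi) 0 a.val (by omega) (by omega)
        convert this using 2 <;> omega
      · congr 1
        simp [Fin.ext_iff, Fin.last]
    | succ i ih =>
      intro hi a ha
      have hi' : i < j := by omega
      obtain ⟨a₀, b, ha₀, hb, hadj⟩ := hedge i hi
      obtain ⟨m, hm, v, hv, hvc, hvlast⟩ := ih hi' a₀ ha₀
      have hl := hlen (i + 1) hi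
      have hba : b.val ≤ a.val := by omega
      set w : Fin (a.val - b.val + 1) → Fin n := fun x => Q (i + 1) ⟨b.val + x.val, by omega⟩ with hwdef
      have hw : IsMonoPath G w := subpath_mono (hpath (i + 1) hi) b.val a.val (by omega) hba
      have hw0 : w 0 = Q (i + 1) b := by
        simp only [hwdef]
        congr 1
      have hlt : v (Fin.last m) < w 0 := by
        rw [hvlast, hw0]; exact horder i (i + 1) (by omega) hi _ _
      have hadj' : G.Adj (v (Fin.last m)) (w 0) := by rw [hvlast, hw0]; exact hadj
      refine ⟨m + (a.val - b.val) + 1, ?_, concatFn v w, concat_mono hv hw hlt hadj', ?_, ?_⟩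
      · calc (i + 1 + 1) * (L - 2 * k) = (i + 1) * (L - 2 * k) + (L - 2 * k) := by ring
          _ ≤ m + (a.val - b.val + 1) := Nat.add_le_add hm (by omega)
          _ = m + (a.val - b.val) + 1 := by omega
      · intro x
        unfold concatFn
        by_cases hx : x.val ≤ m
        · rw [dif_pos hx]; exact hvc _
        · rw [dif_neg hx]; exact hcol (i + 1) hi _
      · unfold concatFn
        rw [dif_neg (by simp [Fin.last])]
        simp only [hwdef]
        congr 1
        simp only [Fin.ext_iff, Fin.last]
        omega
  obtain ⟨m, hm, v, hv, hvc, _⟩ := key (j - 1) (by omega) (Fin.last (ℓ (j - 1)))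
    (by simp [Fin.last]; omega)
  refine ⟨m, ?_, v, hv, hvc⟩
  have : (j - 1 + 1) = j := by omega
  rwa [this] at hm
end
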